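/- arXiv:2009.03975 — 15 statements merged into one kernel-verified Lean document; each statement's English description precedes it below -/
import Mathlib

section
/- For p ∈ (1,∞) the optimal density is unique: if ρ₁ and ρ₂ are both admissible densities with E_{p,σ}(ρ₁) = E_{p,σ}(ρ₂) = Mod_{p,σ}(Γ), then ρ₁ = ρ₂. -/
open Finset

noncomputable section

/-- A density `ρ` is admissible for the usage matrix `N` if it is nonnegative and
every object has `ρ`-length at least 1. -/
def IsAdmissible {E Γ : Type*} [Fintype E] (N : Γ → E → ℝ) (ρ : E → ℝ) : Prop :=
  (∀ e, 0 ≤ ρ e) ∧ ∀ γ : Γ, 1 ≤ ∑ e, N γ e * ρ e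

/-- The `p`-energy of a density. -/
def pEnergy {E : Type*} [Fintype E] (σ : E → ℝ) (p : ℝ) (ρ : E → ℝ) : ℝ :=
  ∑ e, σ e * ρ e ^ p

/-- The `p`-modulus: the infimum of the `p`-energy over admissible densities. -/
def pModulus {E Γ : Type*} [Fintype E] (N : Γ → E → ℝ) (σ : E → ℝ) (p : ℝ) : ℝ :=
  sInf {x | ∃ ρ : E → ℝ, IsAdmissible N ρ ∧ x = pEnergy σ p ρ}

/-- for `p ∈ (1,∞)` the optimal density is unique. -/
theorem optimal_density_unique {E Γ : Type*} [Fintype E] [Fintype Γ] [Nonempty E] [Nonempty Γ]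
    (N : Γ → E → ℝ) (hN : ∀ γ e, 0 ≤ N γ e) (hrow : ∀ γ, ∃ e, 0 < N γ e)
    (σ : E → ℝ) (hσ : ∀ e, 0 < σ e)
    (p : ℝ) (hp : 1 < p)
    (ρ₁ ρ₂ : E → ℝ) (h₁ : IsAdmissible N ρ₁) (h₂ : IsAdmissible N ρ₂)
    (hE₁ : pEnergy σ p ρ₁ = pModulus N σ p) (hE₂ : pEnergy σ p ρ₂ = pModulus N σ p) :
    ρ₁ = ρ₂ := by
  by_contra hne
  set ρm : E → ℝ := fun e => (ρ₁ e + ρ₂ e) / 2 with hρm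
  have hadm : IsAdmissible N ρm := by
    constructor
    · intro e; have := h₁.1 e; have := h₂.1 e; simp only [hρm]; linarith
    · intro γ
      have e1 := h₁.2 γ
      have e2 := h₂.2 γ
      have : ∑ e, N γ e * ρm e = (∑ e, N γ e * ρ₁ e + ∑ e, N γ e * ρ₂ e) / 2 := by
        rw [← Finset.sum_add_distrib, eq_div_iff (two_ne_zero), Finset.sum_mul]
        apply Finset.sum_congr rfl; intro e _; simp only [hρm]; ring
      rw [this]; linarith
  -- modulus is a lower bound (set bdd below by 0, nonempty)
  have hbdd : BddBelow {x | ∃ ρ : E → ℝ, IsAdmissible N ρ ∧ x = pEnergy σ p ρ} := by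
    refine ⟨0, ?_⟩
    rintro x ⟨ρ, hρ, rfl⟩
    exact Finset.sum_nonneg fun e _ =>
      mul_nonneg (hσ e).le (Real.rpow_nonneg (hρ.1 e) p)
  have hmod_le : pModulus N σ p ≤ pEnergy σ p ρm :=
    csInf_le hbdd ⟨ρm, hadm, rfl⟩
  -- strict convexity: pEnergy ρm < (E₁ + E₂)/2
  obtain ⟨e₀, he₀⟩ := Function.ne_iff.mp hne
  have key : pEnergy σ p ρm < (pEnergy σ p ρ₁ + pEnergy σ p ρ₂) / 2 := by
    have hsum : (pEnergy σ p ρ₁ + pEnergy σ p ρ₂) / 2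
        = ∑ e, (σ e * ρ₁ e ^ p + σ e * ρ₂ e ^ p) / 2 := by
      simp [pEnergy, ← Finset.sum_add_distrib, ← Finset.sum_div]
    rw [hsum, pEnergy]
    apply Finset.sum_lt_sum
    · intro e _
      have hc := (strictConvexOn_rpow hp).convexOn.2 (Set.mem_Ici.mpr (h₁.1 e))
        (Set.mem_Ici.mpr (h₂.1 e)) (by norm_num : (0:ℝ) ≤ 1/2) (by norm_num : (0:ℝ) ≤ 1/2)
        (by norm_num)
      simp only [smul_eq_mul] at hc
      have : ρm e = 1/2 * ρ₁ e + 1/2 * ρ₂ e := by simp [hρm]; ring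
      rw [this]
      calc σ e * (1/2 * ρ₁ e + 1/2 * ρ₂ e) ^ p
          ≤ σ e * (1/2 * ρ₁ e ^ p + 1/2 * ρ₂ e ^ p) :=
            mul_le_mul_of_nonneg_left hc (hσ e).le
        _ = (σ e * ρ₁ e ^ p + σ e * ρ₂ e ^ p) / 2 := by ring
    · refine ⟨e₀, Finset.mem_univ e₀, ?_⟩
      have hc := (strictConvexOn_rpow hp).2 (Set.mem_Ici.mpr (h₁.1 e₀))
        (Set.mem_Ici.mpr (h₂.1 e₀)) he₀ (by norm_num : (0:ℝ) < 1/2)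
        (by norm_num : (0:ℝ) < 1/2) (by norm_num)
      simp only [smul_eq_mul] at hc
      have : ρm e₀ = 1/2 * ρ₁ e₀ + 1/2 * ρ₂ e₀ := by simp [hρm]; ring
      rw [this]
      calc σ e₀ * (1/2 * ρ₁ e₀ + 1/2 * ρ₂ e₀) ^ p
          < σ e₀ * (1/2 * ρ₁ e₀ ^ p + 1/2 * ρ₂ e₀ ^ p) :=
            (mul_lt_mul_iff_right₀ (hσ e₀)).mpr hc
        _ = (σ e₀ * ρ₁ e₀ ^ p + σ e₀ * ρ₂ e₀ ^ p) / 2 := by ring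
  rw [hE₁, hE₂] at key
  simp at key
  linarith
end
end

section
/- For p ∈ (1,∞), with q = p/(p−1) and conjugate weights σ̂(e) = σ(e)^{−q/p}, the p-modulus satisfies the lower bound Mod_{p,σ}(Γ)^{−1} ≤ σ̂(E)^{p/q} · (max_{e∈E} Σ_{γ∈Γ} N(γ,e))^p / |Γ|^p, where σ̂(E) = Σ_{e∈E} σ̂(e); equivalently, Mod_{p,σ}(Γ) ≥ |Γ|^p · σ̂(E)^{−p/q} · (max_{e∈E} Σ_{γ∈Γ} N(γ,e))^{−p}. In particular, families whose edges are used by few objects (small column sums of N) have large modulus. -/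
open Finset

noncomputable section

/-- with `q = p/(p-1)` and `σ̂(e) = σ(e)^(-q/p)`,
`Mod_{p,σ}(Γ)⁻¹ ≤ σ̂(E)^(p/q) · (max_e Σ_γ N(γ,e))^p / |Γ|^p`. -/
theorem modulus_lower_bound {E Γ : Type*} [Fintype E] [Fintype Γ] [Nonempty E] [Nonempty Γ]
    (N : Γ → E → ℝ) (hN : ∀ γ e, 0 ≤ N γ e) (hrow : ∀ γ, ∃ e, 0 < N γ e)
    (σ : E → ℝ) (hσ : ∀ e, 0 < σ e)
    (p q : ℝ) (hp : 1 < p) (hq : q = p / (p - 1)) :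
    (pModulus N σ p)⁻¹ ≤
      (∑ e, σ e ^ (-(q / p))) ^ (p / q) *
        (Finset.univ.sup' Finset.univ_nonempty (fun e => ∑ γ, N γ e)) ^ p /
        (Fintype.card Γ : ℝ) ^ p := by
  have hpq : p.HolderConjugate q := (Real.holderConjugate_iff_eq_conjExponent hp).2 hq
  have hp0 : (0:ℝ) < p := hpq.pos
  have hq0 : (0:ℝ) < q := hpq.symm.pos
  set A : ℝ := ∑ e, σ e ^ (-(q / p)) with hA
  set M : ℝ := Finset.univ.sup' Finset.univ_nonempty (fun e => ∑ γ, N γ e) with hM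
  set G : ℝ := (Fintype.card Γ : ℝ) with hG
  have hApos : 0 < A := Finset.sum_pos (fun e _ => Real.rpow_pos_of_pos (hσ e) _)
    Finset.univ_nonempty
  have hMpos : 0 < M := by
    obtain ⟨γ⟩ := (inferInstance : Nonempty Γ)
    obtain ⟨e, he⟩ := hrow γ
    refine lt_of_lt_of_le ?_ (Finset.le_sup' (fun e => ∑ γ, N γ e) (Finset.mem_univ e))
    exact Finset.sum_pos' (fun γ' _ => hN γ' e) ⟨γ, Finset.mem_univ γ, he⟩
  have hGpos : 0 < G := by positivity
  have hden : 0 < A ^ (p / q) * M ^ p :=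
    mul_pos (Real.rpow_pos_of_pos hApos _) (Real.rpow_pos_of_pos hMpos _)
  set c : ℝ := G ^ p / (A ^ (p / q) * M ^ p) with hc
  have hcpos : 0 < c := div_pos (Real.rpow_pos_of_pos hGpos _) hden
  -- every admissible density has energy at least c
  have key : ∀ ρ : E → ℝ, IsAdmissible N ρ → c ≤ pEnergy σ p ρ := by
    intro ρ ⟨hρ0, hρ1⟩
    have hEn0 : 0 ≤ pEnergy σ p ρ := Finset.sum_nonneg fun e _ =>
      mul_nonneg (hσ e).le (Real.rpow_nonneg (hρ0 e) _)
    -- step 1 : G ≤ M * ∑ ρ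
    have step1 : G ≤ M * ∑ e, ρ e := by
      have h1 : G ≤ ∑ γ, ∑ e, N γ e * ρ e := by
        rw [hG]
        calc (Fintype.card Γ : ℝ) = ∑ _γ : Γ, (1:ℝ) := by simp
          _ ≤ ∑ γ, ∑ e, N γ e * ρ e := Finset.sum_le_sum fun γ _ => hρ1 γ
      have h2 : ∑ γ, ∑ e, N γ e * ρ e = ∑ e, (∑ γ, N γ e) * ρ e := by
        rw [Finset.sum_comm]
        simp [Finset.sum_mul]
      have h3 : ∑ e, (∑ γ, N γ e) * ρ e ≤ ∑ e, M * ρ e :=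
        Finset.sum_le_sum fun e _ =>
          mul_le_mul_of_nonneg_right (Finset.le_sup' (fun e => ∑ γ, N γ e) (Finset.mem_univ e))
            (hρ0 e)
      calc G ≤ ∑ γ, ∑ e, N γ e * ρ e := h1
        _ = ∑ e, (∑ γ, N γ e) * ρ e := h2
        _ ≤ ∑ e, M * ρ e := h3
        _ = M * ∑ e, ρ e := by rw [Finset.mul_sum]
    -- step 2 : Hölder
    have step2 : ∑ e, ρ e ≤ (pEnergy σ p ρ) ^ (1/p) * A ^ (1/q) := by
      have hH := Real.inner_le_Lp_mul_Lq (Finset.univ)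
        (fun e => σ e ^ (1/p) * ρ e) (fun e => σ e ^ (-(1/p))) hpq
      have hfg : ∀ e, (σ e ^ (1/p) * ρ e) * σ e ^ (-(1/p)) = ρ e := by
        intro e
        rw [mul_right_comm, ← Real.rpow_add (hσ e)]
        simp
      have hfp : ∀ e, |σ e ^ (1/p) * ρ e| ^ p = σ e * ρ e ^ p := by
        intro e
        rw [abs_of_nonneg (mul_nonneg (Real.rpow_nonneg (hσ e).le _) (hρ0 e)),
          Real.mul_rpow (Real.rpow_nonneg (hσ e).le _) (hρ0 e),
          ← Real.rpow_mul (hσ e).le, one_div, inv_mul_cancel₀ hp0.ne', Real.rpow_one]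
      have hgq : ∀ e, |σ e ^ (-(1/p))| ^ q = σ e ^ (-(q/p)) := by
        intro e
        rw [abs_of_nonneg (Real.rpow_nonneg (hσ e).le _), ← Real.rpow_mul (hσ e).le]
        ring_nf
      calc ∑ e, ρ e = ∑ e, (σ e ^ (1/p) * ρ e) * σ e ^ (-(1/p)) := by
            exact (Finset.sum_congr rfl fun e _ => (hfg e).symm)
        _ ≤ (∑ e, |σ e ^ (1/p) * ρ e| ^ p) ^ (1/p) * (∑ e, |σ e ^ (-(1/p))| ^ q) ^ (1/q) := hH
        _ = (pEnergy σ p ρ) ^ (1/p) * A ^ (1/q) := by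
            rw [hA]
            congr 2
            · exact Finset.sum_congr rfl fun e _ => hfp e
            · exact Finset.sum_congr rfl fun e _ => hgq e
    -- combine and raise to the power p
    have hGle : G ≤ M * ((pEnergy σ p ρ) ^ (1/p) * A ^ (1/q)) :=
      le_trans step1 (mul_le_mul_of_nonneg_left step2 hMpos.le)
    have hGp : G ^ p ≤ M ^ p * (pEnergy σ p ρ * A ^ (p/q)) := by
      have hrhs0 : 0 ≤ (pEnergy σ p ρ) ^ (1/p) * A ^ (1/q) :=
        mul_nonneg (Real.rpow_nonneg hEn0 _) (Real.rpow_nonneg hApos.le _)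
      have := Real.rpow_le_rpow hGpos.le hGle hp0.le
      rw [Real.mul_rpow hMpos.le hrhs0,
        Real.mul_rpow (Real.rpow_nonneg hEn0 _) (Real.rpow_nonneg hApos.le _),
        ← Real.rpow_mul hEn0, ← Real.rpow_mul hApos.le] at this
      rw [one_div_mul_cancel hp0.ne', Real.rpow_one] at this
      rw [show 1/q * p = p/q by ring] at this
      exact this
    rw [hc, div_le_iff₀ hden]
    calc G ^ p ≤ M ^ p * (pEnergy σ p ρ * A ^ (p/q)) := hGp
      _ = pEnergy σ p ρ * (A ^ (p/q) * M ^ p) := by ring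
  -- the admissible set is nonempty
  have hne : {x | ∃ ρ : E → ℝ, IsAdmissible N ρ ∧ x = pEnergy σ p ρ}.Nonempty := by
    set m : ℝ := Finset.univ.inf' Finset.univ_nonempty (fun γ => ∑ e, N γ e) with hm
    have hmpos : 0 < m := by
      rw [hm, Finset.lt_inf'_iff]
      intro γ _
      obtain ⟨e, he⟩ := hrow γ
      exact Finset.sum_pos' (fun e' _ => hN γ e') ⟨e, Finset.mem_univ e, he⟩
    refine ⟨pEnergy σ p (fun _ => m⁻¹), ⟨fun _ => m⁻¹, ⟨fun e => (inv_pos.2 hmpos).le, ?_⟩, rfl⟩⟩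
    intro γ
    rw [← Finset.sum_mul]
    rw [← div_eq_mul_inv, le_div_iff₀ hmpos, one_mul]
    exact Finset.inf'_le (fun γ => ∑ e, N γ e) (Finset.mem_univ γ)
  have hmod : c ≤ pModulus N σ p := by
    apply le_csInf hne
    rintro x ⟨ρ, hadm, rfl⟩
    exact key ρ hadm
  have : (pModulus N σ p)⁻¹ ≤ c⁻¹ := by
    apply inv_anti₀ hcpos hmod
  refine le_trans this ?_
  rw [hc, inv_div]
end
end

section
/- (Probabilistic interpretation / Lagrangian duality of p-modulus.) For p ∈ (1,∞), with q = p/(p−1) and σ̂(e) = σ(e)^{−q/p}, one has Mod_{p,σ}(Γ) = ( min over pmfs μ on Γ of E_{q,σ̂}(η_μ) )^{−p/q}, where η_μ(e) = Σ_{γ∈Γ} N(γ,e)μ(γ) and E_{q,σ̂}(η_μ) = Σ_{e∈E} σ̂(e)η_μ(e)^q. -/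
open Finset

noncomputable section

/-- A probability mass function on `Γ`. -/
def IsPmf {Γ : Type*} [Fintype Γ] (μ : Γ → ℝ) : Prop :=
  (∀ γ, 0 ≤ μ γ) ∧ ∑ γ, μ γ = 1

/-- The expected edge usage `η_μ(e)` of a pmf `μ`. -/
def edgeUsage {E Γ : Type*} [Fintype Γ] (N : Γ → E → ℝ) (μ : Γ → ℝ) (e : E) : ℝ :=
  ∑ γ, N γ e * μ γ

lemma grad_ineq {q a b : ℝ} (hq : 1 < q) (ha : 0 ≤ a) (hb : 0 ≤ b) :
    b ^ q + q * b ^ (q - 1) * (a - b) ≤ a ^ q := by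
  rcases eq_or_lt_of_le hb with h0 | hb0
  · rw [← h0]
    rw [Real.zero_rpow (by linarith), Real.zero_rpow (by linarith : q - 1 ≠ 0)]
    simpa using Real.rpow_nonneg ha q
  · have h1 : 1 + q * (a / b - 1) ≤ (1 + (a / b - 1)) ^ q :=
      one_add_mul_self_le_rpow_one_add (by have := div_nonneg ha hb0.le; linarith) hq.le
    have h2 : (1 : ℝ) + (a / b - 1) = a / b := by ring
    rw [h2, Real.div_rpow ha hb0.le] at h1
    have hbq : (0:ℝ) < b ^ q := Real.rpow_pos_of_pos hb0 q
    have hbq1 : b ^ q = b ^ (q - 1) * b := by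
      rw [← Real.rpow_add_one hb0.ne' (q - 1), sub_add_cancel]
    calc b ^ q + q * b ^ (q-1) * (a - b) = b ^ q * (1 + q * (a/b - 1)) := by
          rw [hbq1]; field_simp
      _ ≤ b ^ q * (a ^ q / b ^ q) := mul_le_mul_of_nonneg_left h1 hbq.le
      _ = a ^ q := by field_simp

lemma rpow_sub_one_mul {x q : ℝ} (hx : 0 ≤ x) (hq : 1 < q) :
    x ^ (q - 1) * x = x ^ q := by
  rcases eq_or_lt_of_le hx with h0 | h0
  · rw [← h0, Real.zero_rpow (by linarith : q - 1 ≠ 0), Real.zero_rpow (by linarith), zero_mul]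
  · rw [← Real.rpow_add_one h0.ne' (q - 1), sub_add_cancel]

/-- probabilistic interpretation: with `q = p/(p-1)` and `σ̂(e) = σ(e)^(-q/p)`,
`Mod_{p,σ}(Γ) = (min over pmfs μ of Σ_e σ̂(e) η_μ(e)^q)^(-p/q)`, and the minimum is attained. -/
theorem modulus_prob_interp {E Γ : Type*} [Fintype E] [Fintype Γ] [Nonempty E] [Nonempty Γ]
    (N : Γ → E → ℝ) (hN : ∀ γ e, 0 ≤ N γ e) (hrow : ∀ γ, ∃ e, 0 < N γ e)
    (σ : E → ℝ) (hσ : ∀ e, 0 < σ e)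
    (p q : ℝ) (hp : 1 < p) (hq : q = p / (p - 1)) :
    pModulus N σ p =
      (sInf {x | ∃ μ : Γ → ℝ, IsPmf μ ∧
          x = ∑ e, σ e ^ (-(q / p)) * edgeUsage N μ e ^ q}) ^ (-(p / q)) ∧
    ∃ μ : Γ → ℝ, IsPmf μ ∧
      (∑ e, σ e ^ (-(q / p)) * edgeUsage N μ e ^ q) =
        sInf {x | ∃ μ' : Γ → ℝ, IsPmf μ' ∧
          x = ∑ e, σ e ^ (-(q / p)) * edgeUsage N μ' e ^ q} := by
  classical
  have hpq : p.HolderConjugate q := (Real.holderConjugate_iff_eq_conjExponent hp).2 hq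
  have hq1 : 1 < q := hpq.symm.lt
  have hp0 : 0 < p := hpq.pos
  have hq0 : 0 < q := hpq.symm.pos
  have hqp1 : q / p = q - 1 := Real.HolderConjugate.div_conj_eq_sub_one hpq.symm
  have hpq1 : p / q = p - 1 := hpq.div_conj_eq_sub_one
  set f : (Γ → ℝ) → ℝ := fun μ => ∑ e, σ e ^ (-(q / p)) * edgeUsage N μ e ^ q with hf
  -- continuity of f
  have hcont : Continuous f := by
    apply continuous_finset_sum
    intro e _
    apply Continuous.mul continuous_const
    apply Continuous.rpow_const
    · exact continuous_finset_sum _ fun γ _ => continuous_const.mul (continuous_apply γ)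
    · exact fun μ => Or.inr hq0.le
  -- existence of minimizer
  have hS : {μ : Γ → ℝ | IsPmf μ} = stdSimplex ℝ Γ := rfl
  obtain ⟨μs, hμs, hmin⟩ : ∃ μ ∈ {μ : Γ → ℝ | IsPmf μ}, IsMinOn f {μ : Γ → ℝ | IsPmf μ} μ := by
    rw [hS]
    exact (isCompact_stdSimplex ℝ Γ).exists_isMinOn
      ⟨fun _ => (Fintype.card Γ : ℝ)⁻¹, fun γ => by positivity, by
        have h0 : (Fintype.card Γ : ℝ) ≠ 0 := Nat.cast_ne_zero.2 Fintype.card_ne_zero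
        simp [Finset.sum_const, Finset.card_univ, h0]⟩ hcont.continuousOn
  set η : E → ℝ := edgeUsage N μs with hηdef
  have hηnn : ∀ e, 0 ≤ η e := fun e =>
    Finset.sum_nonneg fun γ _ => mul_nonneg (hN γ e) (hμs.1 γ)
  set M : ℝ := f μs with hM
  -- M > 0
  have hM0 : 0 < M := by
    obtain ⟨γ0, hγ0⟩ : ∃ γ0, 0 < μs γ0 := by
      by_contra h
      push_neg at h
      have : ∑ γ, μs γ = 0 :=
        Finset.sum_eq_zero fun γ _ => le_antisymm (h γ) (hμs.1 γ)
      rw [hμs.2] at this; norm_num at this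
    obtain ⟨e0, he0⟩ := hrow γ0
    have hηe0 : 0 < η e0 := by
      have : 0 < N γ0 e0 * μs γ0 := mul_pos he0 hγ0
      calc (0:ℝ) < N γ0 e0 * μs γ0 := this
        _ ≤ η e0 := Finset.single_le_sum (f := fun γ => N γ e0 * μs γ)
            (fun γ _ => mul_nonneg (hN γ e0) (hμs.1 γ)) (Finset.mem_univ γ0)
    have hterm : 0 < σ e0 ^ (-(q / p)) * η e0 ^ q :=
      mul_pos (Real.rpow_pos_of_pos (hσ e0) _) (Real.rpow_pos_of_pos hηe0 _)
    calc (0:ℝ) < σ e0 ^ (-(q / p)) * η e0 ^ q := hterm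
      _ ≤ M := Finset.single_le_sum (f := fun e => σ e ^ (-(q / p)) * η e ^ q)
          (fun e _ => mul_nonneg (Real.rpow_pos_of_pos (hσ e) _).le (Real.rpow_nonneg (hηnn e) q))
          (Finset.mem_univ e0)
  -- KKT inequality
  have hKKT : ∀ γ, M ≤ ∑ e, σ e ^ (-(q / p)) * η e ^ (q - 1) * N γ e := by
    intro γ
    set μt : ℝ → Γ → ℝ := fun t γ' => (1 - t) * μs γ' + t * (if γ' = γ then 1 else 0) with hμtdef
    set g : ℝ → ℝ := fun t =>
      ∑ e, σ e ^ (-(q / p)) * ((1 - t) * η e + t * N γ e) ^ (q - 1) * (N γ e - η e) with hgdef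
    have hgcont : Continuous g := by
      apply continuous_finset_sum
      intro e _
      refine (continuous_const.mul (Continuous.rpow_const ?_ fun t => Or.inr (by linarith))).mul
        continuous_const
      fun_prop
    have hμtpmf : ∀ t : ℝ, 0 ≤ t → t ≤ 1 → IsPmf (μt t) := by
      intro t ht0 ht1
      constructor
      · intro γ'
        exact add_nonneg (mul_nonneg (by linarith) (hμs.1 γ'))
          (mul_nonneg ht0 (by split_ifs <;> norm_num))
      · rw [Finset.sum_add_distrib, ← Finset.mul_sum, hμs.2, ← Finset.mul_sum]
        simp [Finset.sum_ite_eq']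
    have hηt : ∀ t : ℝ, ∀ e, edgeUsage N (μt t) e = (1 - t) * η e + t * N γ e := by
      intro t e
      have h2 : ∑ γ', N γ' e * (t * (if γ' = γ then (1:ℝ) else 0)) = t * N γ e := by
        rw [Finset.sum_congr rfl (fun γ' _ => show N γ' e * (t * (if γ' = γ then (1:ℝ) else 0))
          = if γ' = γ then t * N γ' e else 0 from by split_ifs <;> ring)]
        simp [Finset.sum_ite_eq']
      rw [hηdef]
      simp only [edgeUsage, hμtdef, mul_add, Finset.sum_add_distrib]
      rw [h2, Finset.mul_sum]
      congr 1
      exact Finset.sum_congr rfl fun γ' _ => by ring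
    have hstep : ∀ t : ℝ, 0 < t → t ≤ 1 → 0 ≤ g t := by
      intro t ht0 ht1
      have hmle : M ≤ f (μt t) := hmin (hμtpmf t ht0.le ht1)
      have hupper : f (μt t) ≤ M + q * t * g t := by
        have hterm : ∀ e : E, σ e ^ (-(q / p)) * edgeUsage N (μt t) e ^ q ≤
            σ e ^ (-(q / p)) * η e ^ q +
              q * t * (σ e ^ (-(q / p)) * ((1 - t) * η e + t * N γ e) ^ (q - 1) *
                (N γ e - η e)) := by
          intro e
          rw [hηt t e]
          set b : ℝ := (1 - t) * η e + t * N γ e with hb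
          have hbnn : 0 ≤ b := add_nonneg (mul_nonneg (by linarith) (hηnn e))
            (mul_nonneg ht0.le (hN γ e))
          have hg := grad_ineq hq1 (hηnn e) hbnn (a := η e)
          have hσnn : 0 ≤ σ e ^ (-(q / p)) := (Real.rpow_pos_of_pos (hσ e) _).le
          have h3 : b ^ q ≤ η e ^ q + q * b ^ (q - 1) * (t * (N γ e - η e)) := by
            have hba : t * (N γ e - η e) = b - η e := by rw [hb]; ring
            rw [hba]
            linarith [hg]
          calc σ e ^ (-(q / p)) * b ^ q
              ≤ σ e ^ (-(q / p)) * (η e ^ q + q * b ^ (q - 1) * (t * (N γ e - η e))) :=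
                mul_le_mul_of_nonneg_left h3 hσnn
            _ = σ e ^ (-(q / p)) * η e ^ q +
                q * t * (σ e ^ (-(q / p)) * b ^ (q - 1) * (N γ e - η e)) := by ring
        calc f (μt t) ≤ ∑ e, (σ e ^ (-(q / p)) * η e ^ q +
            q * t * (σ e ^ (-(q / p)) * ((1 - t) * η e + t * N γ e) ^ (q - 1) *
              (N γ e - η e))) := Finset.sum_le_sum fun e _ => hterm e
          _ = M + q * t * g t := by
            have hMsum : M = ∑ e, σ e ^ (-(q / p)) * η e ^ q := rfl
            rw [Finset.sum_add_distrib, ← Finset.mul_sum, hMsum, hgdef]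
      have hqt : 0 < q * t := mul_pos hq0 ht0
      nlinarith
    have hg0 : 0 ≤ g 0 := by
      have htend : Filter.Tendsto (fun n : ℕ => g (1 / (n + 1))) Filter.atTop (nhds (g 0)) :=
        (hgcont.tendsto 0).comp tendsto_one_div_add_atTop_nhds_zero_nat
      refine ge_of_tendsto htend (Filter.Eventually.of_forall fun n => hstep _ (by positivity) ?_)
      rw [div_le_one (by positivity)]
      have : (0:ℝ) ≤ (n : ℝ) := Nat.cast_nonneg n
      linarith
    have hg0eq : g 0 = (∑ e, σ e ^ (-(q / p)) * η e ^ (q - 1) * N γ e) - M := by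
      have hMsum : M = ∑ e, σ e ^ (-(q / p)) * η e ^ q := rfl
      rw [hgdef, hMsum]
      simp only [sub_zero, one_mul, zero_mul, add_zero]
      rw [← Finset.sum_sub_distrib]
      refine Finset.sum_congr rfl fun e _ => ?_
      have h4 : η e ^ (q - 1) * η e = η e ^ q := rpow_sub_one_mul (hηnn e) hq1
      linear_combination (-(σ e ^ (-(q / p)))) * h4
    linarith [hg0, hg0eq.symm.le]
  -- the optimal density
  set ρs : E → ℝ := fun e => σ e ^ (-(q / p)) * η e ^ (q - 1) / M with hρs
  have hρnn : ∀ e, 0 ≤ ρs e :=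
    fun e => div_nonneg (mul_nonneg (Real.rpow_pos_of_pos (hσ e) _).le
      (Real.rpow_nonneg (hηnn e) _)) hM0.le
  have hρadm : IsAdmissible N ρs := by
    refine ⟨hρnn, fun γ => ?_⟩
    have h1 : ∑ e, N γ e * ρs e = (∑ e, σ e ^ (-(q / p)) * η e ^ (q-1) * N γ e) / M := by
      rw [Finset.sum_div]
      exact Finset.sum_congr rfl fun e _ => by rw [hρs]; ring
    rw [h1, le_div_iff₀ hM0, one_mul]
    exact hKKT γ
  have hρenergy : pEnergy σ p ρs = M ^ (-(p / q)) := by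
    have hterm : ∀ e, σ e * ρs e ^ p = σ e ^ (-(q / p)) * η e ^ q / M ^ p := by
      intro e
      have hAnn : (0:ℝ) ≤ σ e ^ (-(q / p)) := (Real.rpow_pos_of_pos (hσ e) _).le
      have hBnn : (0:ℝ) ≤ η e ^ (q - 1) := Real.rpow_nonneg (hηnn e) _
      rw [hρs]
      rw [Real.div_rpow (mul_nonneg hAnn hBnn) hM0.le,
          Real.mul_rpow hAnn hBnn,
          ← Real.rpow_mul (hσ e).le, ← Real.rpow_mul (hηnn e)]
      have e1 : -(q / p) * p = -q := by field_simp
      have e2 : (q - 1) * p = q := by rw [← hqp1]; field_simp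
      rw [e1, e2]
      have e3 : σ e * σ e ^ (-q) = σ e ^ (-(q / p)) := by
        have h5 : σ e * σ e ^ (-q) = σ e ^ (1 + -q) := by
          rw [Real.rpow_add (hσ e), Real.rpow_one]
        rw [h5, hqp1]
        congr 1
        ring
      rw [← e3]
      ring
    have hMsum : M = ∑ e, σ e ^ (-(q / p)) * η e ^ q := rfl
    calc pEnergy σ p ρs = ∑ e, σ e ^ (-(q / p)) * η e ^ q / M ^ p :=
          Finset.sum_congr rfl fun e _ => hterm e
      _ = M / M ^ p := by rw [← Finset.sum_div, ← hMsum]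
      _ = M ^ (-(p / q)) := by
          rw [hpq1, show -(p - 1) = 1 - p by ring, Real.rpow_sub hM0, Real.rpow_one]
  -- weak duality
  have hweak : ∀ ρ : E → ℝ, IsAdmissible N ρ → M ^ (-(p / q)) ≤ pEnergy σ p ρ := by
    rintro ρ ⟨hρnn', hρadm'⟩
    set Ep : ℝ := pEnergy σ p ρ with hEp
    have hEnn : 0 ≤ Ep :=
      Finset.sum_nonneg fun e _ => mul_nonneg (hσ e).le (Real.rpow_nonneg (hρnn' e) p)
    set u : E → ℝ := fun e => σ e ^ (-(1 / p)) * η e with hu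
    set v : E → ℝ := fun e => σ e ^ (1 / p) * ρ e with hv
    have hunn : ∀ e, 0 ≤ u e :=
      fun e => mul_nonneg (Real.rpow_pos_of_pos (hσ e) _).le (hηnn e)
    have hvnn : ∀ e, 0 ≤ v e :=
      fun e => mul_nonneg (Real.rpow_pos_of_pos (hσ e) _).le (hρnn' e)
    have h1 : (1:ℝ) ≤ ∑ e, η e * ρ e := by
      have hcomm : ∑ e, η e * ρ e = ∑ γ', μs γ' * ∑ e, N γ' e * ρ e := by
        rw [hηdef]
        simp only [edgeUsage, Finset.sum_mul, Finset.mul_sum]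
        rw [Finset.sum_comm]
        exact Finset.sum_congr rfl fun γ' _ => Finset.sum_congr rfl fun e _ => by ring
      rw [hcomm]
      calc (1:ℝ) = ∑ γ', μs γ' * 1 := by simp [hμs.2]
        _ ≤ ∑ γ', μs γ' * ∑ e, N γ' e * ρ e :=
            Finset.sum_le_sum fun γ' _ => mul_le_mul_of_nonneg_left (hρadm' γ') (hμs.1 γ')
    have h2 : ∑ e, u e * v e = ∑ e, η e * ρ e := by
      refine Finset.sum_congr rfl fun e _ => ?_
      have : σ e ^ (-(1 / p)) * σ e ^ (1 / p) = 1 := by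
        rw [← Real.rpow_add (hσ e)]
        simp
      calc u e * v e = σ e ^ (-(1 / p)) * σ e ^ (1 / p) * (η e * ρ e) := by rw [hu, hv]; ring
        _ = η e * ρ e := by rw [this, one_mul]
    have h3 : ∑ e, u e ^ q = M := by
      have hMsum : M = ∑ e, σ e ^ (-(q / p)) * η e ^ q := rfl
      rw [hMsum]
      refine Finset.sum_congr rfl fun e _ => ?_
      rw [hu, Real.mul_rpow (Real.rpow_pos_of_pos (hσ e) _).le (hηnn e),
          ← Real.rpow_mul (hσ e).le]
      congr 2
      ring
    have h3' : ∑ e, v e ^ p = Ep := by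
      rw [hEp]
      refine Finset.sum_congr rfl fun e _ => ?_
      rw [hv, Real.mul_rpow (Real.rpow_pos_of_pos (hσ e) _).le (hρnn' e),
          ← Real.rpow_mul (hσ e).le]
      rw [one_div, inv_mul_cancel₀ hp0.ne', Real.rpow_one]
    have h4 : (1:ℝ) ≤ M ^ (1 / q) * Ep ^ (1 / p) := by
      have hH := Real.inner_le_Lp_mul_Lq_of_nonneg (s := Finset.univ) (f := u) (g := v)
        hpq.symm (fun e _ => hunn e) (fun e _ => hvnn e)
      rw [h2, h3, h3'] at hH
      linarith
    have h5 : (1:ℝ) ≤ M ^ (p / q) * Ep := by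
      have h6 : (1:ℝ) ≤ (M ^ (1 / q) * Ep ^ (1 / p)) ^ p := by
        calc (1:ℝ) = 1 ^ p := (Real.one_rpow p).symm
          _ ≤ _ := Real.rpow_le_rpow zero_le_one h4 hp0.le
      rw [Real.mul_rpow (Real.rpow_nonneg hM0.le _) (Real.rpow_nonneg hEnn _),
          ← Real.rpow_mul hM0.le, ← Real.rpow_mul hEnn] at h6
      rw [show 1 / q * p = p / q by ring, one_div, inv_mul_cancel₀ hp0.ne',
          Real.rpow_one] at h6
      exact h6
    have hMq : 0 < M ^ (p / q) := Real.rpow_pos_of_pos hM0 _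
    rw [Real.rpow_neg hM0.le, inv_eq_one_div, div_le_iff₀ hMq]
    calc (1:ℝ) ≤ M ^ (p / q) * Ep := h5
      _ = Ep * M ^ (p / q) := mul_comm _ _
  -- assemble
  have hSμ : sInf {x | ∃ μ : Γ → ℝ, IsPmf μ ∧
      x = ∑ e, σ e ^ (-(q / p)) * edgeUsage N μ e ^ q} = M := by
    apply IsLeast.csInf_eq
    constructor
    · exact ⟨μs, hμs, rfl⟩
    · rintro x ⟨μ, hμ, rfl⟩
      exact hmin hμ
  have hSρ : pModulus N σ p = M ^ (-(p / q)) := by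
    apply IsLeast.csInf_eq
    constructor
    · exact ⟨ρs, hρadm, hρenergy.symm⟩
    · rintro x ⟨ρ, hρ, rfl⟩
      exact hweak ρ hρ
  exact ⟨by rw [hSρ, hSμ], μs, hμs, hSμ.symm⟩
end
end

section
/- For p ∈ (1,∞), with q = p/(p−1) and σ̂(e) = σ(e)^{−q/p}: the optimal expected edge usage is unique, i.e. if μ₁ and μ₂ are both pmfs minimizing E_{q,σ̂}(η_μ) = Σ_{e∈E} σ̂(e)η_μ(e)^q over all pmfs μ on Γ, then η_{μ₁} = η_{μ₂}. Moreover, writing η* for this common minimizer and ρ* for the (unique) admissible density with E_{p,σ}(ρ*) = Mod_{p,σ}(Γ), for every e ∈ E one has σ(e)ρ*(e)^p / E_{p,σ}(ρ*) = σ̂(e)η*(e)^q / E_{q,σ̂}(η*). -/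
open Finset

noncomputable section

/-- Gradient inequality for `x ↦ x^q`, `q > 1`, on the nonnegative reals. -/
private lemma grad_ineq_s5 {q x y : ℝ} (hq : 1 < q) (hx : 0 ≤ x) (hy : 0 ≤ y) :
    y ^ q + q * y ^ (q - 1) * (x - y) ≤ x ^ q := by
  rcases eq_or_lt_of_le hy with h0 | hy0
  · rw [← h0, Real.zero_rpow (by positivity : q ≠ 0),
      Real.zero_rpow (by intro h; linarith [sub_eq_zero.1 h] : q - 1 ≠ 0)]
    simpa using Real.rpow_nonneg hx q
  · have hyq : (0:ℝ) < y ^ q := Real.rpow_pos_of_pos hy0 q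
    have hb : 1 + q * (x / y - 1) ≤ (x / y) ^ q := by
      have hdiv : (0:ℝ) ≤ x / y := div_nonneg hx hy0.le
      have := one_add_mul_self_le_rpow_one_add (s := x / y - 1) (by linarith) hq.le
      rwa [show (1 : ℝ) + (x / y - 1) = x / y by ring] at this
    rw [Real.div_rpow hx hy0.le] at hb
    have key := mul_le_mul_of_nonneg_left hb hyq.le
    have hxy : y ^ q * (x ^ q / y ^ q) = x ^ q := by field_simp
    rw [hxy] at key
    have h2 : y ^ (q - 1) = y ^ q / y := by
      rw [eq_div_iff hy0.ne', ← Real.rpow_add_one hy0.ne', sub_add_cancel]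
    rw [h2]
    calc y ^ q + q * (y ^ q / y) * (x - y) = y ^ q * (1 + q * (x / y - 1)) := by
          field_simp
      _ ≤ x ^ q := key

/-- Key lemma: for a pmf minimizing the dual energy, the normalized dual gradient is an
admissible density with the right energy. -/
private lemma keylemma {E Γ : Type*} [Fintype E] [Fintype Γ]
    (N : Γ → E → ℝ) (hN : ∀ γ e, 0 ≤ N γ e) (hrow : ∀ γ, ∃ e, 0 < N γ e)
    (σ : E → ℝ) (hσ : ∀ e, 0 < σ e)
    (p q : ℝ) (hp : 1 < p) (hq : q = p / (p - 1))
    (μ : Γ → ℝ) (hμ : IsPmf μ)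
    (hmin : ∀ μ' : Γ → ℝ, IsPmf μ' →
      (∑ e, σ e ^ (-(q / p)) * edgeUsage N μ e ^ q) ≤
        ∑ e, σ e ^ (-(q / p)) * edgeUsage N μ' e ^ q) :
    0 < (∑ e', σ e' ^ (-(q / p)) * edgeUsage N μ e' ^ q) ∧
    IsAdmissible N (fun e => σ e ^ (-(q / p)) * edgeUsage N μ e ^ (q - 1) /
      (∑ e', σ e' ^ (-(q / p)) * edgeUsage N μ e' ^ q)) ∧
    (∀ e, σ e * ((σ e ^ (-(q / p)) * edgeUsage N μ e ^ (q - 1) /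
      (∑ e', σ e' ^ (-(q / p)) * edgeUsage N μ e' ^ q)) ^ p) =
      σ e ^ (-(q / p)) * edgeUsage N μ e ^ q /
        (∑ e', σ e' ^ (-(q / p)) * edgeUsage N μ e' ^ q) ^ p) ∧
    pEnergy σ p (fun e => σ e ^ (-(q / p)) * edgeUsage N μ e ^ (q - 1) /
      (∑ e', σ e' ^ (-(q / p)) * edgeUsage N μ e' ^ q)) =
      (∑ e', σ e' ^ (-(q / p)) * edgeUsage N μ e' ^ q) ^ (1 - p) := by
  classical
  obtain ⟨hμ0, hμ1⟩ := hμ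
  have hp0 : (0:ℝ) < p := by linarith
  have hp1 : (0:ℝ) < p - 1 := by linarith
  have hq1 : 1 < q := by rw [hq, lt_div_iff₀ hp1]; linarith
  have hq0 : (0:ℝ) < q := by linarith
  have hq1p : (q - 1) * p = q := by rw [hq]; field_simp; ring
  have h1q : 1 - q = -(q / p) := by rw [hq]; field_simp; ring
  set η : E → ℝ := edgeUsage N μ with hηdef
  have hηnn : ∀ e, 0 ≤ η e := fun e =>
    Finset.sum_nonneg fun γ _ => mul_nonneg (hN γ e) (hμ0 γ)
  set β : ℝ := ∑ e', σ e' ^ (-(q / p)) * η e' ^ q with hβdef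
  have hsig : ∀ e : E, (0:ℝ) < σ e ^ (-(q / p)) := fun e => Real.rpow_pos_of_pos (hσ e) _
  have hβpos : 0 < β := by
    have hsumne : (∑ γ, μ γ) ≠ 0 := by rw [hμ1]; exact one_ne_zero
    obtain ⟨γ₀, _, hγ₀⟩ := Finset.exists_ne_zero_of_sum_ne_zero hsumne
    have hμγ₀ : 0 < μ γ₀ := (hμ0 γ₀).lt_of_ne (Ne.symm hγ₀)
    obtain ⟨e₀, he₀⟩ := hrow γ₀
    have hηe₀ : 0 < η e₀ := by
      have h := Finset.single_le_sum (f := fun γ => N γ e₀ * μ γ)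
        (fun γ _ => mul_nonneg (hN γ e₀) (hμ0 γ)) (Finset.mem_univ γ₀)
      have : 0 < N γ₀ e₀ * μ γ₀ := mul_pos he₀ hμγ₀
      calc (0:ℝ) < N γ₀ e₀ * μ γ₀ := this
        _ ≤ η e₀ := h
    refine Finset.sum_pos'
      (fun e _ => mul_nonneg (hsig e).le (Real.rpow_nonneg (hηnn e) q))
      ⟨e₀, Finset.mem_univ e₀, mul_pos (hsig e₀) (Real.rpow_pos_of_pos hηe₀ q)⟩
  have hmulpow : ∀ e, η e ^ (q - 1) * η e = η e ^ q := by
    intro e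
    rcases eq_or_lt_of_le (hηnn e) with h | h
    · rw [← h, mul_zero, Real.zero_rpow hq0.ne']
    · rw [← Real.rpow_add_one h.ne' (q - 1), sub_add_cancel]
  -- variational inequality
  have hvar : ∀ γ, β ≤ ∑ e, σ e ^ (-(q / p)) * η e ^ (q - 1) * N γ e := by
    intro γ
    set ν : ℝ → Γ → ℝ := fun t γ' => (1 - t) * μ γ' + t * (if γ' = γ then 1 else 0) with hνdef
    have hνpmf : ∀ t, 0 ≤ t → t ≤ 1 → IsPmf (ν t) := by
      intro t ht0 ht1
      constructor
      · intro γ'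
        have : (0:ℝ) ≤ if γ' = γ then 1 else 0 := by split <;> norm_num
        have h1 : (0:ℝ) ≤ (1 - t) * μ γ' := mul_nonneg (by linarith) (hμ0 γ')
        have h2 : (0:ℝ) ≤ t * (if γ' = γ then 1 else 0) := mul_nonneg ht0 this
        simpa [hνdef] using add_nonneg h1 h2
      · have hione : (∑ γ', (if γ' = γ then (1:ℝ) else 0)) = 1 := by
          rw [Finset.sum_ite_eq' Finset.univ γ (fun _ => (1:ℝ))]
          simp
        simp only [hνdef]
        rw [Finset.sum_add_distrib, ← Finset.mul_sum, ← Finset.mul_sum, hμ1, hione]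
        ring
    have hνusage : ∀ t e, edgeUsage N (ν t) e = (1 - t) * η e + t * N γ e := by
      intro t e
      simp only [edgeUsage, hνdef, hηdef]
      rw [show (∑ γ', N γ' e * ((1 - t) * μ γ' + t * (if γ' = γ then 1 else 0)))
          = ∑ γ', ((1 - t) * (N γ' e * μ γ') + t * (N γ' e * (if γ' = γ then 1 else 0)))
          from Finset.sum_congr rfl fun γ' _ => by ring]
      rw [Finset.sum_add_distrib, ← Finset.mul_sum, ← Finset.mul_sum]
      congr 1
      congr 1
      rw [show (∑ γ', N γ' e * (if γ' = γ then (1:ℝ) else 0))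
          = ∑ γ', (if γ' = γ then N γ' e else 0)
          from Finset.sum_congr rfl fun γ' _ => by split <;> simp]
      rw [Finset.sum_ite_eq' Finset.univ γ (fun γ' => N γ' e)]
      simp
    have hG : ∀ t, 0 < t → t ≤ 1 →
        0 ≤ ∑ e, σ e ^ (-(q / p)) * ((1 - t) * η e + t * N γ e) ^ (q - 1) * (N γ e - η e) := by
      intro t ht0 ht1
      have hy : ∀ e, 0 ≤ (1 - t) * η e + t * N γ e := fun e =>
        add_nonneg (mul_nonneg (by linarith) (hηnn e)) (mul_nonneg ht0.le (hN γ e))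
      have hmin' := hmin (ν t) (hνpmf t ht0.le ht1)
      rw [show (∑ e, σ e ^ (-(q / p)) * edgeUsage N (ν t) e ^ q)
          = ∑ e, σ e ^ (-(q / p)) * ((1 - t) * η e + t * N γ e) ^ q
          from Finset.sum_congr rfl fun e _ => by rw [hνusage]] at hmin'
      have hsum : ∑ e, σ e ^ (-(q / p)) * (((1 - t) * η e + t * N γ e) ^ q
            + q * ((1 - t) * η e + t * N γ e) ^ (q - 1) * (η e - ((1 - t) * η e + t * N γ e)))
          ≤ ∑ e, σ e ^ (-(q / p)) * η e ^ q :=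
        Finset.sum_le_sum fun e _ =>
          mul_le_mul_of_nonneg_left (grad_ineq_s5 hq1 (hηnn e) (hy e)) (hsig e).le
      rw [show (∑ e, σ e ^ (-(q / p)) * (((1 - t) * η e + t * N γ e) ^ q
            + q * ((1 - t) * η e + t * N γ e) ^ (q - 1) * (η e - ((1 - t) * η e + t * N γ e))))
          = (∑ e, σ e ^ (-(q / p)) * ((1 - t) * η e + t * N γ e) ^ q)
            - q * t * ∑ e, σ e ^ (-(q / p)) * ((1 - t) * η e + t * N γ e) ^ (q - 1) * (N γ e - η e)
          by rw [Finset.mul_sum, ← Finset.sum_sub_distrib]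
             exact Finset.sum_congr rfl fun e _ => by ring] at hsum
      by_contra hcon
      push_neg at hcon
      nlinarith [mul_pos hq0 ht0]
    have hcont : Filter.Tendsto
        (fun t : ℝ => ∑ e, σ e ^ (-(q / p)) * ((1 - t) * η e + t * N γ e) ^ (q - 1) * (N γ e - η e))
        (nhdsWithin 0 (Set.Ioi 0))
        (nhds (∑ e, σ e ^ (-(q / p)) * η e ^ (q - 1) * (N γ e - η e))) := by
      apply tendsto_finset_sum
      intro e _
      have h1 : Filter.Tendsto (fun t : ℝ => (1 - t) * η e + t * N γ e) (nhds 0) (nhds (η e)) := by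
        have hc : Continuous fun t : ℝ => (1 - t) * η e + t * N γ e := by continuity
        have := hc.tendsto 0
        simpa using this
      have h2 : Filter.Tendsto (fun t : ℝ => ((1 - t) * η e + t * N γ e) ^ (q - 1))
          (nhds 0) (nhds (η e ^ (q - 1))) :=
        Filter.Tendsto.comp (Real.continuousAt_rpow_const (η e) (q - 1)
          (Or.inr (by linarith))) h1
      exact (((h2.const_mul (σ e ^ (-(q / p)))).mul_const (N γ e - η e)).mono_left
        nhdsWithin_le_nhds)
    have h0le : 0 ≤ ∑ e, σ e ^ (-(q / p)) * η e ^ (q - 1) * (N γ e - η e) := by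
      refine ge_of_tendsto hcont ?_
      filter_upwards [Ioc_mem_nhdsGT_of_mem (Set.left_mem_Ico.2 zero_lt_one)] with t ht
      exact hG t ht.1 ht.2
    have hsplit : ∑ e, σ e ^ (-(q / p)) * η e ^ (q - 1) * (N γ e - η e)
        = (∑ e, σ e ^ (-(q / p)) * η e ^ (q - 1) * N γ e) - β := by
      rw [hβdef, ← Finset.sum_sub_distrib]
      exact Finset.sum_congr rfl fun e _ => by rw [← hmulpow e]; ring
    rw [hsplit] at h0le
    linarith
  have hρnn : ∀ e, 0 ≤ σ e ^ (-(q / p)) * η e ^ (q - 1) / β := fun e =>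
    div_nonneg (mul_nonneg (hsig e).le (Real.rpow_nonneg (hηnn e) _)) hβpos.le
  have hpt : ∀ e, σ e * ((σ e ^ (-(q / p)) * η e ^ (q - 1) / β) ^ p)
      = σ e ^ (-(q / p)) * η e ^ q / β ^ p := by
    intro e
    have hA : (0:ℝ) ≤ σ e ^ (-(q / p)) * η e ^ (q - 1) :=
      mul_nonneg (hsig e).le (Real.rpow_nonneg (hηnn e) _)
    rw [Real.div_rpow hA hβpos.le,
      Real.mul_rpow (hsig e).le (Real.rpow_nonneg (hηnn e) _),
      ← Real.rpow_mul (hσ e).le, ← Real.rpow_mul (hηnn e), hq1p,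
      show -(q / p) * p = -q by field_simp]
    have e3 : σ e ^ (-(q / p)) = σ e * σ e ^ (-q) := by
      rw [show -(q / p) = 1 + -q by linarith, Real.rpow_add (hσ e), Real.rpow_one]
    rw [e3]
    ring
  refine ⟨hβpos, ⟨hρnn, ?_⟩, hpt, ?_⟩
  · intro γ
    have hsum : ∑ e, N γ e * (σ e ^ (-(q / p)) * η e ^ (q - 1) / β)
        = (∑ e, σ e ^ (-(q / p)) * η e ^ (q - 1) * N γ e) / β := by
      rw [Finset.sum_div]
      exact Finset.sum_congr rfl fun e _ => by ring
    rw [hsum, le_div_iff₀ hβpos, one_mul]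
    exact hvar γ
  · simp only [pEnergy]
    calc (∑ e, σ e * (σ e ^ (-(q / p)) * η e ^ (q - 1) / β) ^ p)
        = ∑ e, σ e ^ (-(q / p)) * η e ^ q / β ^ p :=
          Finset.sum_congr rfl fun e _ => hpt e
      _ = β / β ^ p := by rw [← Finset.sum_div]
      _ = β ^ (1 - p) := by rw [Real.rpow_sub hβpos, Real.rpow_one]

/-- the optimal expected edge usage is unique, and it is related to the
optimal density by `σ(e)ρ*(e)^p / E_{p,σ}(ρ*) = σ̂(e)η*(e)^q / E_{q,σ̂}(η*)`. -/
theorem optimal_usage_unique_and_relation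
    {E Γ : Type*} [Fintype E] [Fintype Γ] [Nonempty E] [Nonempty Γ]
    (N : Γ → E → ℝ) (hN : ∀ γ e, 0 ≤ N γ e) (hrow : ∀ γ, ∃ e, 0 < N γ e)
    (σ : E → ℝ) (hσ : ∀ e, 0 < σ e)
    (p q : ℝ) (hp : 1 < p) (hq : q = p / (p - 1))
    (μ₁ μ₂ : Γ → ℝ) (hμ₁ : IsPmf μ₁) (hμ₂ : IsPmf μ₂)
    (hmin₁ : ∀ μ : Γ → ℝ, IsPmf μ →
      (∑ e, σ e ^ (-(q / p)) * edgeUsage N μ₁ e ^ q) ≤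
        ∑ e, σ e ^ (-(q / p)) * edgeUsage N μ e ^ q)
    (hmin₂ : ∀ μ : Γ → ℝ, IsPmf μ →
      (∑ e, σ e ^ (-(q / p)) * edgeUsage N μ₂ e ^ q) ≤
        ∑ e, σ e ^ (-(q / p)) * edgeUsage N μ e ^ q)
    (ρstar : E → ℝ) (hρadm : IsAdmissible N ρstar)
    (hρopt : pEnergy σ p ρstar = pModulus N σ p) :
    edgeUsage N μ₁ = edgeUsage N μ₂ ∧
    ∀ e : E,
      σ e * ρstar e ^ p / pEnergy σ p ρstar =
        σ e ^ (-(q / p)) * edgeUsage N μ₁ e ^ q /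
          ∑ e', σ e' ^ (-(q / p)) * edgeUsage N μ₁ e' ^ q := by
  classical
  obtain ⟨hβ₁, hadm₁, hpt₁, hE₁⟩ := keylemma N hN hrow σ hσ p q hp hq μ₁ hμ₁ hmin₁
  obtain ⟨hβ₂, hadm₂, hpt₂, hE₂⟩ := keylemma N hN hrow σ hσ p q hp hq μ₂ hμ₂ hmin₂
  have hp0 : (0:ℝ) < p := by linarith
  have hp1 : (0:ℝ) < p - 1 := by linarith
  have hq1 : 1 < q := by rw [hq, lt_div_iff₀ hp1]; linarith
  have hq0 : (0:ℝ) < q := by linarith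
  set η₁ : E → ℝ := edgeUsage N μ₁ with hη₁def
  set η₂ : E → ℝ := edgeUsage N μ₂ with hη₂def
  set β : ℝ := ∑ e', σ e' ^ (-(q / p)) * η₁ e' ^ q with hβdef
  have hββ : (∑ e', σ e' ^ (-(q / p)) * η₂ e' ^ q) = β :=
    le_antisymm (hmin₂ μ₁ hμ₁) (hmin₁ μ₂ hμ₂)
  rw [hββ] at hE₂ hβ₂ hadm₂ hpt₂
  have hη₁nn : ∀ e, 0 ≤ η₁ e := fun e =>
    Finset.sum_nonneg fun γ _ => mul_nonneg (hN γ e) (hμ₁.1 γ)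
  have hη₂nn : ∀ e, 0 ≤ η₂ e := fun e =>
    Finset.sum_nonneg fun γ _ => mul_nonneg (hN γ e) (hμ₂.1 γ)
  have hρnn := hρadm.1
  -- the modulus is a lower bound
  have hbdd : BddBelow {x | ∃ ρ : E → ℝ, IsAdmissible N ρ ∧ x = pEnergy σ p ρ} := by
    refine ⟨0, ?_⟩
    rintro x ⟨ρ, hρ, rfl⟩
    exact Finset.sum_nonneg fun e _ => mul_nonneg (hσ e).le (Real.rpow_nonneg (hρ.1 e) p)
  have hMod_le : ∀ ρ : E → ℝ, IsAdmissible N ρ → pModulus N σ p ≤ pEnergy σ p ρ :=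
    fun ρ hρ => csInf_le hbdd ⟨ρ, hρ, rfl⟩
  -- Hölder lower bound for the energy of ρstar
  have h1 : (1:ℝ) ≤ ∑ e, η₁ e * ρstar e := by
    calc (1:ℝ) = ∑ γ, μ₁ γ * 1 := by simp [hμ₁.2]
      _ ≤ ∑ γ, μ₁ γ * (∑ e, N γ e * ρstar e) :=
          Finset.sum_le_sum fun γ _ => mul_le_mul_of_nonneg_left (hρadm.2 γ) (hμ₁.1 γ)
      _ = ∑ e, η₁ e * ρstar e := by
          simp_rw [Finset.mul_sum]
          rw [Finset.sum_comm]
          refine Finset.sum_congr rfl fun e _ => ?_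
          rw [hη₁def]
          simp only [edgeUsage]
          rw [Finset.sum_mul]
          exact Finset.sum_congr rfl fun γ _ => by ring
  have hpq : p.HolderConjugate q := (Real.holderConjugate_iff_eq_conjExponent hp).2 hq
  have hholder := Real.inner_le_Lp_mul_Lq_of_nonneg (s := Finset.univ) hpq
    (f := fun e => σ e ^ (1/p) * ρstar e) (g := fun e => σ e ^ (-(1/p)) * η₁ e)
    (fun e _ => mul_nonneg (Real.rpow_nonneg (hσ e).le _) (hρnn e))
    (fun e _ => mul_nonneg (Real.rpow_nonneg (hσ e).le _) (hη₁nn e))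
  rw [show (∑ e, (σ e ^ (1/p) * ρstar e) * (σ e ^ (-(1/p)) * η₁ e)) = ∑ e, η₁ e * ρstar e
      from Finset.sum_congr rfl fun e _ => by
        rw [show (σ e ^ (1/p) * ρstar e) * (σ e ^ (-(1/p)) * η₁ e)
            = (σ e ^ (1/p) * σ e ^ (-(1/p))) * (η₁ e * ρstar e) by ring,
          ← Real.rpow_add (hσ e)]
        norm_num] at hholder
  rw [show (∑ e, (σ e ^ (1/p) * ρstar e) ^ p) = pEnergy σ p ρstar from
      Finset.sum_congr rfl fun e _ => by
        rw [Real.mul_rpow (Real.rpow_nonneg (hσ e).le _) (hρnn e),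
          ← Real.rpow_mul (hσ e).le, one_div, inv_mul_cancel₀ hp0.ne', Real.rpow_one]] at hholder
  rw [show (∑ e, (σ e ^ (-(1/p)) * η₁ e) ^ q) = β from
      Finset.sum_congr rfl fun e _ => by
        rw [Real.mul_rpow (Real.rpow_nonneg (hσ e).le _) (hη₁nn e),
          ← Real.rpow_mul (hσ e).le, show -(1/p) * q = -(q/p) by ring]] at hholder
  have hEnn : 0 ≤ pEnergy σ p ρstar :=
    Finset.sum_nonneg fun e _ => mul_nonneg (hσ e).le (Real.rpow_nonneg (hρnn e) p)
  have hBq : (0:ℝ) < β ^ (1/q) := Real.rpow_pos_of_pos hβ₁ _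
  have hlow : β ^ (1 - p) ≤ pEnergy σ p ρstar := by
    have hstep : β ^ (-(1/q)) ≤ pEnergy σ p ρstar ^ (1/p) := by
      have h16 : (1:ℝ) ≤ pEnergy σ p ρstar ^ (1/p) * β ^ (1/q) := le_trans h1 hholder
      have hd : (1:ℝ) / β ^ (1/q) ≤ pEnergy σ p ρstar ^ (1/p) := (div_le_iff₀ hBq).mpr h16
      rw [Real.rpow_neg hβ₁.le, inv_eq_one_div]
      exact hd
    have := Real.rpow_le_rpow (Real.rpow_nonneg hβ₁.le _) hstep hp0.le
    rwa [← Real.rpow_mul hβ₁.le, ← Real.rpow_mul hEnn,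
      show -(1/q) * p = 1 - p by rw [hq]; field_simp; ring,
      show 1/p * p = 1 by field_simp, Real.rpow_one] at this
  have hup : pEnergy σ p ρstar ≤ β ^ (1 - p) := by
    rw [hρopt, ← hE₁]
    exact hMod_le _ hadm₁
  have hEeq : pEnergy σ p ρstar = β ^ (1 - p) := le_antisymm hup hlow
  -- uniqueness of the optimal density via strict convexity
  have huniq : ∀ ρ : E → ℝ, IsAdmissible N ρ → pEnergy σ p ρ = pEnergy σ p ρstar → ρ = ρstar := by
    intro ρ hρ hEρ
    by_contra hne
    obtain ⟨e₀, he₀⟩ := Function.ne_iff.1 hne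
    have hadm_m : IsAdmissible N (fun e => (ρ e + ρstar e) / 2) := by
      constructor
      · intro e
        have h1 := hρ.1 e; have h2 := hρnn e
        positivity
      · intro γ
        have h1 := hρ.2 γ; have h2 := hρadm.2 γ
        have hsum : ∑ e, N γ e * ((ρ e + ρstar e) / 2)
            = ((∑ e, N γ e * ρ e) + ∑ e, N γ e * ρstar e) / 2 := by
          rw [← Finset.sum_add_distrib, Finset.sum_div]
          exact Finset.sum_congr rfl fun e _ => by ring
        rw [hsum]; linarith
    have hle : ∀ e, σ e * ((ρ e + ρstar e) / 2) ^ p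
        ≤ (σ e * ρ e ^ p + σ e * ρstar e ^ p) / 2 := by
      intro e
      have h := (convexOn_rpow hp.le).2 (Set.mem_Ici.2 (hρ.1 e)) (Set.mem_Ici.2 (hρnn e))
        (by norm_num : (0:ℝ) ≤ 1/2) (by norm_num : (0:ℝ) ≤ 1/2) (by norm_num)
      simp only [smul_eq_mul] at h
      rw [show (1/2:ℝ) * ρ e + (1/2:ℝ) * ρstar e = (ρ e + ρstar e) / 2 by ring] at h
      calc σ e * ((ρ e + ρstar e) / 2) ^ p
          ≤ σ e * ((1/2) * ρ e ^ p + (1/2) * ρstar e ^ p) :=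
            mul_le_mul_of_nonneg_left h (hσ e).le
        _ = (σ e * ρ e ^ p + σ e * ρstar e ^ p) / 2 := by ring
    have hlt : σ e₀ * ((ρ e₀ + ρstar e₀) / 2) ^ p
        < (σ e₀ * ρ e₀ ^ p + σ e₀ * ρstar e₀ ^ p) / 2 := by
      have h := (strictConvexOn_rpow hp).2 (Set.mem_Ici.2 (hρ.1 e₀)) (Set.mem_Ici.2 (hρnn e₀))
        he₀ (by norm_num : (0:ℝ) < 1/2) (by norm_num : (0:ℝ) < 1/2) (by norm_num)
      simp only [smul_eq_mul] at h
      rw [show (1/2:ℝ) * ρ e₀ + (1/2:ℝ) * ρstar e₀ = (ρ e₀ + ρstar e₀) / 2 by ring] at h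
      calc σ e₀ * ((ρ e₀ + ρstar e₀) / 2) ^ p
          < σ e₀ * ((1/2) * ρ e₀ ^ p + (1/2) * ρstar e₀ ^ p) :=
            (mul_lt_mul_iff_right₀ (hσ e₀)).2 h
        _ = (σ e₀ * ρ e₀ ^ p + σ e₀ * ρstar e₀ ^ p) / 2 := by ring
    have hstrict : pEnergy σ p (fun e => (ρ e + ρstar e) / 2) < pEnergy σ p ρstar := by
      calc pEnergy σ p (fun e => (ρ e + ρstar e) / 2)
          < ∑ e, (σ e * ρ e ^ p + σ e * ρstar e ^ p) / 2 :=
            Finset.sum_lt_sum (fun e _ => hle e) ⟨e₀, Finset.mem_univ e₀, hlt⟩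
        _ = (pEnergy σ p ρ + pEnergy σ p ρstar) / 2 := by
            rw [pEnergy, pEnergy, ← Finset.sum_add_distrib, Finset.sum_div]
        _ = pEnergy σ p ρstar := by rw [hEρ]; ring
    have := hMod_le _ hadm_m
    rw [← hρopt] at this
    linarith
  have hρ1 : (fun e => σ e ^ (-(q / p)) * η₁ e ^ (q - 1) / β) = ρstar :=
    huniq _ hadm₁ (by rw [hE₁, hEeq])
  have hρ2 : (fun e => σ e ^ (-(q / p)) * η₂ e ^ (q - 1) / β) = ρstar :=
    huniq _ hadm₂ (by rw [hE₂, hEeq])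
  have hq1ne : q - 1 ≠ 0 := by intro h; linarith [sub_eq_zero.1 h]
  constructor
  · funext e
    have h := congrFun (hρ1.trans hρ2.symm) e
    have hsige : (0:ℝ) < σ e ^ (-(q / p)) := Real.rpow_pos_of_pos (hσ e) _
    have h' : η₁ e ^ (q - 1) = η₂ e ^ (q - 1) := by
      exact mul_left_cancel₀ hsige.ne' ((div_left_inj' hβ₁.ne').1 h)
    have := congrArg (fun x : ℝ => x ^ (q - 1)⁻¹) h'
    simpa [Real.rpow_rpow_inv (hη₁nn e) hq1ne, Real.rpow_rpow_inv (hη₂nn e) hq1ne] using this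
  · intro e
    have hpt : σ e * ρstar e ^ p = σ e ^ (-(q / p)) * η₁ e ^ q / β ^ p := by
      rw [← congrFun hρ1 e]
      exact hpt₁ e
    rw [hpt, hEeq, div_div, ← Real.rpow_add hβ₁, show p + (1 - p) = 1 by ring, Real.rpow_one]
end
end

section
/- (Probabilistic interpretation at p = 1.) Mod_{1,σ}(Γ)^{−1} = min over pmfs μ on Γ of max_{e∈E} σ(e)^{−1} η_μ(e), where Mod_{1,σ}(Γ) is the infimum of Σ_{e∈E} σ(e)ρ(e) over admissible densities ρ and η_μ(e) = Σ_{γ∈Γ} N(γ,e)μ(γ). -/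
open Finset Pointwise

noncomputable section

/-- Minimax via separation: if `v` is a lower bound for `max_e (μᵀA)(e)` over all pmfs `μ`,
then there is a pmf `ν` on `E` with `A ν ≥ v` coordinatewise. -/
lemma exists_good_strategy {E Γ : Type*} [Fintype E] [Fintype Γ] [Nonempty E] [Nonempty Γ]
    (A : Γ → E → ℝ) (v : ℝ)
    (hv : ∀ μ : Γ → ℝ, μ ∈ stdSimplex ℝ Γ →
      v ≤ Finset.univ.sup' Finset.univ_nonempty (fun e => ∑ γ, A γ e * μ γ)) :
    ∃ ν ∈ stdSimplex ℝ E, ∀ γ, v ≤ ∑ e, A γ e * ν e := by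
  classical
  set T : (E → ℝ) → (Γ → ℝ) := fun ν γ => ∑ e, A γ e * ν e with hT
  set K : Set (Γ → ℝ) := T '' stdSimplex ℝ E with hK
  set C : Set (Γ → ℝ) := {z | ∀ γ, z γ ≤ 0} with hC
  set S : Set (Γ → ℝ) := K + C with hS
  have hmemS : ∀ y : Γ → ℝ, y ∈ S ↔ ∃ ν ∈ stdSimplex ℝ E, ∀ γ, y γ ≤ T ν γ := by
    intro y
    constructor
    · rintro ⟨k, ⟨ν, hν, rfl⟩, c, hc, rfl⟩
      exact ⟨ν, hν, fun γ => by have := hc γ; simp only [Pi.add_apply]; linarith⟩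
    · rintro ⟨ν, hν, hle⟩
      refine ⟨T ν, ⟨ν, hν, rfl⟩, y - T ν, fun γ => ?_, by funext γ; simp⟩
      simpa using hle γ
  have hTcont : Continuous T := by
    refine continuous_pi fun γ => ?_
    exact continuous_finset_sum _ fun e _ => continuous_const.mul (continuous_apply e)
  have hKcomp : IsCompact K := (isCompact_stdSimplex ℝ E).image hTcont
  have hCclosed : IsClosed C := by
    have : C = ⋂ γ, {z : Γ → ℝ | z γ ≤ 0} := by
      ext z; simp [hC, Set.mem_iInter]
    rw [this]
    exact isClosed_iInter fun γ => isClosed_le (continuous_apply γ) continuous_const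
  have hSclosed : IsClosed S := hCclosed.add_left_of_isCompact hKcomp
  have hKconv : Convex ℝ K := by
    rintro _ ⟨ν₁, h₁, rfl⟩ _ ⟨ν₂, h₂, rfl⟩ a b ha hb hab
    refine ⟨a • ν₁ + b • ν₂, convex_stdSimplex ℝ E h₁ h₂ ha hb hab, ?_⟩
    funext γ
    simp only [hT, Pi.add_apply, Pi.smul_apply, smul_eq_mul, mul_add, Finset.sum_add_distrib,
      Finset.mul_sum]
    congr 1 <;> exact Finset.sum_congr rfl fun e _ => by ring
  have hCconv : Convex ℝ C := by
    intro z hz w hw a b ha hb hab γ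
    have h1 := hz γ; have h2 := hw γ
    have : a * z γ + b * w γ ≤ 0 :=
      add_nonpos (mul_nonpos_of_nonneg_of_nonpos ha h1) (mul_nonpos_of_nonneg_of_nonpos hb h2)
    simpa using this
  have hSconv : Convex ℝ S := hKconv.add hCconv
  -- it suffices to show the constant vector `v` is in `S`
  suffices hvS : (fun _ : Γ => v) ∈ S by
    obtain ⟨ν, hν, hle⟩ := (hmemS _).1 hvS
    exact ⟨ν, hν, fun γ => hle γ⟩
  by_contra hvS
  obtain ⟨f, u, hfu, hv1⟩ := geometric_hahn_banach_closed_point hSconv hSclosed hvS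
  set w : Γ → ℝ := fun γ => f (fun j => if γ = j then (1:ℝ) else 0) with hw
  have hlin : ∀ x : Γ → ℝ, f x = ∑ γ, x γ * w γ := by
    intro x
    conv_lhs => rw [pi_eq_sum_univ x]
    rw [map_sum]
    exact Finset.sum_congr rfl fun γ _ => by rw [map_smul]; simp [hw, smul_eq_mul]
  -- base point in S
  set ν₀ : E → ℝ := fun _ => (Fintype.card E : ℝ)⁻¹ with hν₀
  have hν₀mem : ν₀ ∈ stdSimplex ℝ E := by
    constructor
    · intro e; positivity
    · simp only [hν₀, Finset.sum_const, Finset.card_univ, nsmul_eq_mul]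
      rw [mul_inv_cancel₀]
      exact_mod_cast Fintype.card_ne_zero
  set k₀ : Γ → ℝ := T ν₀ with hk₀
  have hk₀S : k₀ ∈ S := (hmemS _).2 ⟨ν₀, hν₀mem, fun γ => le_refl _⟩
  -- w is nonnegative
  have hwnn : ∀ γ, 0 ≤ w γ := by
    intro γ
    by_contra hneg
    push_neg at hneg
    set t : ℝ := max 0 ((u - f k₀) / (-w γ)) with ht
    have ht0 : 0 ≤ t := le_max_left _ _
    set y : Γ → ℝ := k₀ + t • (-(fun j => if γ = j then (1:ℝ) else 0)) with hy
    have hyS : y ∈ S := by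
      refine (hmemS _).2 ⟨ν₀, hν₀mem, fun γ' => ?_⟩
      simp only [hy, Pi.add_apply, Pi.smul_apply, Pi.neg_apply, smul_eq_mul]
      have : 0 ≤ t * (if γ = γ' then (1:ℝ) else 0) := by positivity
      simp only [hk₀]; linarith
    have hfy : f y = f k₀ - t * w γ := by
      simp only [hy]
      rw [map_add, map_smul]
      rw [map_neg]
      simp [hw, smul_eq_mul]; ring
    have hlt := hfu y hyS
    have htbig : (u - f k₀) / (-w γ) ≤ t := le_max_right _ _
    have hwpos : 0 < -w γ := by linarith
    rw [div_le_iff₀ hwpos] at htbig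
    rw [hfy] at hlt
    nlinarith
  -- columns give small values
  have hcol : ∀ e, ∑ γ, A γ e * w γ < u := by
    intro e
    set νe : E → ℝ := fun j => if e = j then (1:ℝ) else 0 with hνe
    have hνemem : νe ∈ stdSimplex ℝ E := by
      constructor
      · intro j; by_cases h : e = j <;> simp [hνe, h]
      · simp [hνe]
    have hTνe : ∀ γ, T νe γ = A γ e := by
      intro γ
      simp [hT, hνe, mul_ite, Finset.sum_ite_eq]
    have hyS : T νe ∈ S := (hmemS _).2 ⟨νe, hνemem, fun γ => le_refl _⟩
    have := hfu _ hyS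
    rw [hlin] at this
    calc ∑ γ, A γ e * w γ = ∑ γ, T νe γ * w γ := by
          exact Finset.sum_congr rfl fun γ _ => by rw [hTνe]
      _ < u := this
  have hfv : f (fun _ => v) = v * ∑ γ, w γ := by
    rw [hlin, Finset.mul_sum]
  have hsumnn : 0 ≤ ∑ γ, w γ := Finset.sum_nonneg fun γ _ => hwnn γ
  have hsum : 0 < ∑ γ, w γ := by
    rcases hsumnn.lt_or_eq with h | h
    · exact h
    · exfalso
      have hzero : ∀ γ ∈ Finset.univ, w γ = 0 :=
        (Finset.sum_eq_zero_iff_of_nonneg fun γ _ => hwnn γ).1 h.symm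
      obtain ⟨e⟩ := ‹Nonempty E›
      have h1 := hcol e
      have h2 : ∑ γ, A γ e * w γ = 0 :=
        Finset.sum_eq_zero fun γ hγ => by rw [hzero γ hγ, mul_zero]
      have h3 : f (fun _ => v) = 0 := by rw [hfv, ← h, mul_zero]
      rw [h3] at hv1
      rw [h2] at h1
      linarith
  -- contradiction with hv
  set μ' : Γ → ℝ := fun γ => w γ / ∑ γ', w γ' with hμ'
  have hμ'mem : μ' ∈ stdSimplex ℝ Γ := by
    constructor
    · intro γ; exact div_nonneg (hwnn γ) hsumnn
    · simp only [hμ']; rw [← Finset.sum_div, div_self (ne_of_gt hsum)]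
  have hlt : Finset.univ.sup' Finset.univ_nonempty (fun e => ∑ γ, A γ e * μ' γ) < v := by
    rw [Finset.sup'_lt_iff]
    intro e _
    have h1 : ∑ γ, A γ e * μ' γ = (∑ γ, A γ e * w γ) / ∑ γ', w γ' := by
      simp only [hμ', ← mul_div_assoc]
      rw [← Finset.sum_div]
    rw [h1, div_lt_iff₀ hsum]
    have h2 := hcol e
    rw [hfv] at hv1
    linarith
  exact absurd (hv μ' hμ'mem) (not_le.2 hlt)

/-- probabilistic interpretation at `p = 1`:
`Mod_{1,σ}(Γ)⁻¹ = min over pmfs μ of max_e σ(e)⁻¹ η_μ(e)`. -/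
theorem modulus_prob_interp_one
    {E Γ : Type*} [Fintype E] [Fintype Γ] [Nonempty E] [Nonempty Γ]
    (N : Γ → E → ℝ) (hN : ∀ γ e, 0 ≤ N γ e) (hrow : ∀ γ, ∃ e, 0 < N γ e)
    (σ : E → ℝ) (hσ : ∀ e, 0 < σ e) :
    ∃ μ : Γ → ℝ, IsPmf μ ∧
      (∀ μ' : Γ → ℝ, IsPmf μ' →
        Finset.univ.sup' Finset.univ_nonempty (fun e => (σ e)⁻¹ * edgeUsage N μ e) ≤
          Finset.univ.sup' Finset.univ_nonempty (fun e => (σ e)⁻¹ * edgeUsage N μ' e)) ∧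
      (pModulus N σ 1)⁻¹ =
        Finset.univ.sup' Finset.univ_nonempty (fun e => (σ e)⁻¹ * edgeUsage N μ e) := by
  classical
  set A : Γ → E → ℝ := fun γ e => (σ e)⁻¹ * N γ e with hA
  set F : (Γ → ℝ) → ℝ :=
    fun μ => Finset.univ.sup' Finset.univ_nonempty (fun e => (σ e)⁻¹ * edgeUsage N μ e) with hF
  have hFeq : ∀ (μ : Γ → ℝ) (e : E), (σ e)⁻¹ * edgeUsage N μ e = ∑ γ, A γ e * μ γ := by
    intro μ e
    simp only [edgeUsage, hA, Finset.mul_sum]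
    exact Finset.sum_congr rfl fun γ _ => by ring
  have hpmf_iff : ∀ μ : Γ → ℝ, IsPmf μ ↔ μ ∈ stdSimplex ℝ Γ := fun μ => Iff.rfl
  -- continuity of F
  have hFcont : Continuous F := by
    apply Continuous.finset_sup'_apply
    intro e _
    exact continuous_const.mul
      (continuous_finset_sum _ fun γ _ => continuous_const.mul (continuous_apply γ))
  -- the simplex is nonempty
  have hsimplex_ne : (stdSimplex ℝ Γ).Nonempty := by
    refine ⟨fun _ => (Fintype.card Γ : ℝ)⁻¹, fun γ => by positivity, ?_⟩
    simp only [Finset.sum_const, Finset.card_univ, nsmul_eq_mul]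
    rw [mul_inv_cancel₀]
    exact_mod_cast Fintype.card_ne_zero
  obtain ⟨μs, hμsmem, hmin⟩ :=
    (isCompact_stdSimplex ℝ Γ).exists_isMinOn hsimplex_ne hFcont.continuousOn
  have hmin' : ∀ μ ∈ stdSimplex ℝ Γ, F μs ≤ F μ := fun μ hμ => hmin hμ
  set v : ℝ := F μs with hv
  -- v is positive
  have hvpos : 0 < v := by
    obtain ⟨γ, hγ⟩ : ∃ γ, 0 < μs γ := by
      by_contra h
      push_neg at h
      have : ∑ γ, μs γ ≤ 0 := Finset.sum_nonpos fun γ _ => h γ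
      rw [hμsmem.2] at this; linarith
    obtain ⟨e, he⟩ := hrow γ
    have h1 : N γ e * μs γ ≤ edgeUsage N μs e := by
      refine Finset.single_le_sum (f := fun γ' => N γ' e * μs γ') ?_ (Finset.mem_univ γ)
      intro γ' _
      exact mul_nonneg (hN γ' e) (hμsmem.1 γ')
    have h2 : (σ e)⁻¹ * edgeUsage N μs e ≤ v :=
      Finset.le_sup' (fun e => (σ e)⁻¹ * edgeUsage N μs e) (Finset.mem_univ e)
    have h3 : 0 < (σ e)⁻¹ * (N γ e * μs γ) := mul_pos (inv_pos.2 (hσ e)) (mul_pos he hγ)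
    have h4 : (σ e)⁻¹ * (N γ e * μs γ) ≤ (σ e)⁻¹ * edgeUsage N μs e :=
      mul_le_mul_of_nonneg_left h1 (inv_nonneg.2 (hσ e).le)
    linarith
  -- minimax: get an optimal strategy on E
  obtain ⟨ν, hνmem, hν⟩ := exists_good_strategy A v (by
    intro μ hμ
    have : (fun e => ∑ γ, A γ e * μ γ) = fun e => (σ e)⁻¹ * edgeUsage N μ e :=
      funext fun e => (hFeq μ e).symm
    rw [this]
    exact hmin' μ hμ)
  -- build the optimal density
  set ρ : E → ℝ := fun e => ν e * ((σ e)⁻¹ * v⁻¹) with hρ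
  have hρnn : ∀ e, 0 ≤ ρ e := fun e =>
    mul_nonneg (hνmem.1 e) (mul_nonneg (inv_nonneg.2 (hσ e).le) (inv_nonneg.2 hvpos.le))
  have hadm : IsAdmissible N ρ := by
    refine ⟨hρnn, fun γ => ?_⟩
    have h1 : ∑ e, N γ e * ρ e = v⁻¹ * ∑ e, A γ e * ν e := by
      rw [Finset.mul_sum]
      exact Finset.sum_congr rfl fun e _ => by simp only [hρ, hA]; ring
    rw [h1]
    calc (1:ℝ) = v⁻¹ * v := by rw [inv_mul_cancel₀ (ne_of_gt hvpos)]
      _ ≤ v⁻¹ * ∑ e, A γ e * ν e :=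
          mul_le_mul_of_nonneg_left (hν γ) (inv_nonneg.2 hvpos.le)
  have henergy : pEnergy σ 1 ρ = v⁻¹ := by
    simp only [pEnergy, Real.rpow_one]
    have : ∀ e, σ e * ρ e = ν e * v⁻¹ := by
      intro e
      simp only [hρ]
      rw [show σ e * (ν e * ((σ e)⁻¹ * v⁻¹)) = (σ e * (σ e)⁻¹) * (ν e * v⁻¹) by ring,
        mul_inv_cancel₀ (ne_of_gt (hσ e)), one_mul]
    rw [Finset.sum_congr rfl fun e _ => this e, ← Finset.sum_mul, hνmem.2, one_mul]
  -- the modulus equals v⁻¹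
  have hmod : pModulus N σ 1 = v⁻¹ := by
    rw [pModulus]
    apply le_antisymm
    · refine csInf_le ⟨0, fun x hx => ?_⟩ ⟨ρ, hadm, henergy.symm⟩
      obtain ⟨ρ', hρ', rfl⟩ := hx
      exact Finset.sum_nonneg fun e _ =>
        mul_nonneg (le_of_lt (hσ e)) (Real.rpow_nonneg (hρ'.1 e) 1)
    · refine le_csInf ⟨pEnergy σ 1 ρ, ρ, hadm, rfl⟩ ?_
      rintro x ⟨ρ', ⟨hρ'0, hρ'1⟩, rfl⟩
      have h1 : (1:ℝ) ≤ ∑ e, edgeUsage N μs e * ρ' e := by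
        calc (1:ℝ) = ∑ γ, μs γ := hμsmem.2.symm
          _ ≤ ∑ γ, μs γ * (∑ e, N γ e * ρ' e) := by
              refine Finset.sum_le_sum fun γ _ => ?_
              exact le_mul_of_one_le_right (hμsmem.1 γ) (hρ'1 γ)
          _ = ∑ e, edgeUsage N μs e * ρ' e := by
              simp only [Finset.mul_sum, edgeUsage, Finset.sum_mul]
              rw [Finset.sum_comm]
              exact Finset.sum_congr rfl fun e _ =>
                Finset.sum_congr rfl fun γ _ => by ring
      have h2 : ∀ e, edgeUsage N μs e ≤ v * σ e := by
        intro e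
        have hle : (σ e)⁻¹ * edgeUsage N μs e ≤ v :=
          Finset.le_sup' (fun e => (σ e)⁻¹ * edgeUsage N μs e) (Finset.mem_univ e)
        have : edgeUsage N μs e = σ e * ((σ e)⁻¹ * edgeUsage N μs e) := by
          rw [show σ e * ((σ e)⁻¹ * edgeUsage N μs e) = (σ e * (σ e)⁻¹) * edgeUsage N μs e
            by ring, mul_inv_cancel₀ (ne_of_gt (hσ e)), one_mul]
        rw [this]
        calc σ e * ((σ e)⁻¹ * edgeUsage N μs e) ≤ σ e * v :=
              mul_le_mul_of_nonneg_left hle (le_of_lt (hσ e))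
          _ = v * σ e := mul_comm _ _
      have h3 : ∑ e, edgeUsage N μs e * ρ' e ≤ v * pEnergy σ 1 ρ' := by
        have : pEnergy σ 1 ρ' = ∑ e, σ e * ρ' e := by
          simp [pEnergy, Real.rpow_one]
        rw [this, Finset.mul_sum]
        refine Finset.sum_le_sum fun e _ => ?_
        calc edgeUsage N μs e * ρ' e ≤ (v * σ e) * ρ' e :=
              mul_le_mul_of_nonneg_right (h2 e) (hρ'0 e)
          _ = v * (σ e * ρ' e) := by ring
      have h4 : (1:ℝ) ≤ v * pEnergy σ 1 ρ' := le_trans h1 h3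
      rw [inv_eq_one_div, div_le_iff₀ hvpos]
      linarith [h4, mul_comm v (pEnergy σ 1 ρ')]
  refine ⟨μs, hμsmem, fun μ' hμ' => hmin' μ' hμ', ?_⟩
  rw [hmod, inv_inv]
end
end

section
/- (Probabilistic interpretation at p = ∞.) Mod_{∞,σ}(Γ)^{−1} = min over pmfs μ on Γ of Σ_{e∈E} σ(e)^{−1} η_μ(e), where Mod_{∞,σ}(Γ) is the infimum of max_{e∈E} σ(e)ρ(e) over admissible densities ρ and η_μ(e) = Σ_{γ∈Γ} N(γ,e)μ(γ). -/
open Finset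

noncomputable section

/-- The `∞`-energy of a density. -/
def infEnergy {E : Type*} [Fintype E] [Nonempty E] (σ : E → ℝ) (ρ : E → ℝ) : ℝ :=
  Finset.univ.sup' Finset.univ_nonempty (fun e => σ e * ρ e)

/-- The `∞`-modulus: the infimum of the `∞`-energy over admissible densities. -/
def infModulus {E Γ : Type*} [Fintype E] [Nonempty E] (N : Γ → E → ℝ) (σ : E → ℝ) : ℝ :=
  sInf {x | ∃ ρ : E → ℝ, IsAdmissible N ρ ∧ x = infEnergy σ ρ}

/-- probabilistic interpretation at `p = ∞`:
`Mod_{∞,σ}(Γ)⁻¹ = min over pmfs μ of Σ_e σ(e)⁻¹ η_μ(e)`. -/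
theorem modulus_prob_interp_infty
    {E Γ : Type*} [Fintype E] [Fintype Γ] [Nonempty E] [Nonempty Γ]
    (N : Γ → E → ℝ) (hN : ∀ γ e, 0 ≤ N γ e) (hrow : ∀ γ, ∃ e, 0 < N γ e)
    (σ : E → ℝ) (hσ : ∀ e, 0 < σ e) :
    ∃ μ : Γ → ℝ, IsPmf μ ∧
      (∀ μ' : Γ → ℝ, IsPmf μ' →
        (∑ e, (σ e)⁻¹ * edgeUsage N μ e) ≤ ∑ e, (σ e)⁻¹ * edgeUsage N μ' e) ∧
      (infModulus N σ)⁻¹ = ∑ e, (σ e)⁻¹ * edgeUsage N μ e := by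
  classical
  -- the objective function
  set f : (Γ → ℝ) → ℝ := fun μ => ∑ e, (σ e)⁻¹ * edgeUsage N μ e with hf
  have hfcont : Continuous f := by
    apply continuous_finset_sum
    intro e _
    exact continuous_const.mul
      (continuous_finset_sum _ fun γ _ => continuous_const.mul (continuous_apply γ))
  have hSne : (stdSimplex ℝ Γ).Nonempty := by
    obtain ⟨γ₀⟩ := (inferInstance : Nonempty Γ)
    refine ⟨fun γ => if γ = γ₀ then 1 else 0, fun γ => by positivity, ?_⟩
    simp
  obtain ⟨μ, hμmem, hmin⟩ :=
    (isCompact_stdSimplex ℝ Γ).exists_isMinOn hSne hfcont.continuousOn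
  have hμpmf : IsPmf μ := ⟨hμmem.1, hμmem.2⟩
  set V : ℝ := f μ with hV
  have hminle : ∀ μ' : Γ → ℝ, IsPmf μ' → V ≤ f μ' := fun μ' hμ' =>
    hmin ⟨hμ'.1, hμ'.2⟩
  -- V > 0
  have hVpos : 0 < V := by
    obtain ⟨γ₀, hγ₀⟩ : ∃ γ, 0 < μ γ := by
      by_contra h
      push_neg at h
      have : ∀ γ, μ γ = 0 := fun γ => le_antisymm (h γ) (hμpmf.1 γ)
      have h2 := hμpmf.2
      rw [Finset.sum_congr rfl (fun γ _ => this γ)] at h2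
      simp at h2
    obtain ⟨e₀, he₀⟩ := hrow γ₀
    have hterm : 0 < (σ e₀)⁻¹ * edgeUsage N μ e₀ := by
      apply mul_pos (inv_pos.2 (hσ e₀))
      have : 0 < N γ₀ e₀ * μ γ₀ := mul_pos he₀ hγ₀
      have hle : N γ₀ e₀ * μ γ₀ ≤ edgeUsage N μ e₀ :=
        Finset.single_le_sum (fun γ _ => mul_nonneg (hN γ e₀) (hμpmf.1 γ))
          (Finset.mem_univ γ₀)
      linarith
    have : 0 < ∑ e, (σ e)⁻¹ * edgeUsage N μ e :=
      Finset.sum_pos' (fun e _ => mul_nonneg (inv_pos.2 (hσ e)).le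
        (Finset.sum_nonneg fun γ _ => mul_nonneg (hN γ e) (hμpmf.1 γ)))
        ⟨e₀, Finset.mem_univ e₀, hterm⟩
    exact this
  -- lower bound: every admissible energy is ≥ V⁻¹
  have hlb : ∀ x ∈ {x | ∃ ρ : E → ℝ, IsAdmissible N ρ ∧ x = infEnergy σ ρ}, V⁻¹ ≤ x := by
    rintro x ⟨ρ, ⟨hρ0, hρadm⟩, rfl⟩
    set M : ℝ := infEnergy σ ρ with hM
    have hsup : ∀ e : E, σ e * ρ e ≤ M := fun e =>
      Finset.le_sup' (fun e => σ e * ρ e) (Finset.mem_univ e)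
    have h1 : (1 : ℝ) ≤ ∑ e, edgeUsage N μ e * ρ e := by
      have : ∑ γ, μ γ * 1 ≤ ∑ γ, μ γ * ∑ e, N γ e * ρ e :=
        Finset.sum_le_sum fun γ _ =>
          mul_le_mul_of_nonneg_left (hρadm γ) (hμpmf.1 γ)
      calc (1 : ℝ) = ∑ γ, μ γ * 1 := by simp [hμpmf.2]
        _ ≤ ∑ γ, μ γ * ∑ e, N γ e * ρ e := this
        _ = ∑ e, edgeUsage N μ e * ρ e := by
            simp only [Finset.mul_sum, edgeUsage, Finset.sum_mul]
            rw [Finset.sum_comm]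
            congr 1; ext γ; congr 1; ext e; ring
    have h2 : ∑ e, edgeUsage N μ e * ρ e ≤ V * M := by
      have : ∀ e : E, edgeUsage N μ e * ρ e ≤ ((σ e)⁻¹ * edgeUsage N μ e) * M := by
        intro e
        have hη : 0 ≤ edgeUsage N μ e :=
          Finset.sum_nonneg fun γ _ => mul_nonneg (hN γ e) (hμpmf.1 γ)
        have heq : ((σ e)⁻¹ * edgeUsage N μ e) * (σ e * ρ e) = edgeUsage N μ e * ρ e := by
          have hσe := (hσ e).ne'
          field_simp
        rw [← heq]
        exact mul_le_mul_of_nonneg_left (hsup e)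
          (mul_nonneg (inv_pos.2 (hσ e)).le hη)
      calc ∑ e, edgeUsage N μ e * ρ e
          ≤ ∑ e, ((σ e)⁻¹ * edgeUsage N μ e) * M :=
            Finset.sum_le_sum fun e _ => this e
        _ = V * M := by rw [← Finset.sum_mul]
    have h3 : (1 : ℝ) ≤ V * M := le_trans h1 h2
    rw [inv_eq_one_div, div_le_iff₀ hVpos]
    nlinarith
  -- membership: ρ₀ achieves V⁻¹
  have hmem : V⁻¹ ∈ {x | ∃ ρ : E → ℝ, IsAdmissible N ρ ∧ x = infEnergy σ ρ} := by
    refine ⟨fun e => (σ e)⁻¹ * V⁻¹, ⟨fun e => mul_nonneg (inv_pos.2 (hσ e)).le (inv_pos.2 hVpos).le, ?_⟩, ?_⟩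
    · intro γ
      -- Dirac pmf at γ
      set δ : Γ → ℝ := fun γ' => if γ' = γ then 1 else 0 with hδ
      have hδpmf : IsPmf δ := ⟨fun γ' => by by_cases h : γ' = γ <;> simp [hδ, h], by simp [hδ]⟩
      have hfδ : f δ = ∑ e, (σ e)⁻¹ * N γ e := by
        simp [hf, edgeUsage, hδ, mul_ite, Finset.sum_ite_eq]
      have hVδ : V ≤ ∑ e, (σ e)⁻¹ * N γ e := by
        have := hminle δ hδpmf; rwa [hfδ] at this
      have : ∑ e, N γ e * ((σ e)⁻¹ * V⁻¹) = (∑ e, (σ e)⁻¹ * N γ e) * V⁻¹ := by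
        rw [Finset.sum_mul]; congr 1; ext e; ring
      rw [this]
      calc (1 : ℝ) = V * V⁻¹ := by field_simp
        _ ≤ (∑ e, (σ e)⁻¹ * N γ e) * V⁻¹ :=
            mul_le_mul_of_nonneg_right hVδ (inv_pos.2 hVpos).le
    · have hfun : (fun e => σ e * ((σ e)⁻¹ * V⁻¹)) = fun _ : E => V⁻¹ := by
        funext e; rw [← mul_assoc, mul_inv_cancel₀ (hσ e).ne', one_mul]
      rw [infEnergy, hfun, Finset.sup'_const]
  -- conclusion
  have hmod : infModulus N σ = V⁻¹ := by
    rw [infModulus]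
    exact le_antisymm (csInf_le ⟨V⁻¹, hlb⟩ hmem) (le_csInf ⟨V⁻¹, hmem⟩ hlb)
  exact ⟨μ, hμpmf, fun μ' hμ' => hminle μ' hμ', by rw [hmod, inv_inv]⟩
end
end

section
/- The ∞-modulus is the reciprocal of the shortest σ^{−1}-length of an object: Mod_{∞,σ}(Γ)^{−1} = min_{γ∈Γ} Σ_{e∈E} N(γ,e) σ(e)^{−1}. (When Γ is a family of connecting paths with 0–1 usage, this says Mod_{∞,σ}(Γ(x,y))^{−1} equals the shortest-path distance from x to y with edge lengths σ^{−1}.) -/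
open Finset

noncomputable section

/-- `Mod_{∞,σ}(Γ)⁻¹ = min_γ Σ_e N(γ,e) σ(e)⁻¹`. -/
theorem inf_modulus_eq_shortest_length
    {E Γ : Type*} [Fintype E] [Fintype Γ] [Nonempty E] [Nonempty Γ]
    (N : Γ → E → ℝ) (hN : ∀ γ e, 0 ≤ N γ e) (hrow : ∀ γ, ∃ e, 0 < N γ e)
    (σ : E → ℝ) (hσ : ∀ e, 0 < σ e) :
    (infModulus N σ)⁻¹ =
      Finset.univ.inf' Finset.univ_nonempty (fun γ : Γ => ∑ e, N γ e * (σ e)⁻¹) := by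
  set L : ℝ := Finset.univ.inf' Finset.univ_nonempty (fun γ : Γ => ∑ e, N γ e * (σ e)⁻¹)
    with hLdef
  have hL : 0 < L := by
    obtain ⟨γ0, -, hγ0⟩ := Finset.exists_mem_eq_inf' Finset.univ_nonempty
      (fun γ : Γ => ∑ e, N γ e * (σ e)⁻¹)
    rw [hLdef, hγ0]
    obtain ⟨e0, he0⟩ := hrow γ0
    refine Finset.sum_pos' (fun e _ => ?_) ⟨e0, Finset.mem_univ _, ?_⟩
    · exact mul_nonneg (hN _ _) (inv_nonneg.2 (hσ e).le)
    · exact mul_pos he0 (inv_pos.2 (hσ e0))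
  -- the candidate density
  set ρ0 : E → ℝ := fun e => L⁻¹ * (σ e)⁻¹ with hρ0
  have hadm : IsAdmissible N ρ0 := by
    constructor
    · intro e
      exact mul_nonneg (inv_nonneg.2 hL.le) (inv_nonneg.2 (hσ e).le)
    · intro γ
      have h1 : ∑ e, N γ e * ρ0 e = L⁻¹ * ∑ e, N γ e * (σ e)⁻¹ := by
        rw [Finset.mul_sum]; apply Finset.sum_congr rfl; intro e _; simp [hρ0]; ring
      have h2 : L ≤ ∑ e, N γ e * (σ e)⁻¹ :=
        Finset.inf'_le _ (Finset.mem_univ γ)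
      rw [h1]
      calc (1 : ℝ) = L⁻¹ * L := by field_simp
        _ ≤ L⁻¹ * ∑ e, N γ e * (σ e)⁻¹ :=
          mul_le_mul_of_nonneg_left h2 (inv_nonneg.2 hL.le)
  have hE0 : infEnergy σ ρ0 = L⁻¹ := by
    unfold infEnergy
    have : ∀ e : E, σ e * ρ0 e = L⁻¹ := by
      intro e; simp only [hρ0]
      rw [← mul_assoc, mul_comm (σ e) L⁻¹, mul_assoc, mul_inv_cancel₀ (hσ e).ne', mul_one]
    simp only [this]
    exact Finset.sup'_const _ _
  have hne : {x | ∃ ρ : E → ℝ, IsAdmissible N ρ ∧ x = infEnergy σ ρ}.Nonempty :=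
    ⟨L⁻¹, ρ0, hadm, hE0.symm⟩
  have hlb : ∀ x ∈ {x | ∃ ρ : E → ℝ, IsAdmissible N ρ ∧ x = infEnergy σ ρ}, L⁻¹ ≤ x := by
    rintro x ⟨ρ, ⟨hρ1, hρ2⟩, rfl⟩
    set M := infEnergy σ ρ with hM
    obtain ⟨γ0, -, hγ0⟩ := Finset.exists_mem_eq_inf' Finset.univ_nonempty
      (fun γ : Γ => ∑ e, N γ e * (σ e)⁻¹)
    have hub : ∀ e : E, ρ e ≤ M * (σ e)⁻¹ := by
      intro e
      have h : σ e * ρ e ≤ M := Finset.le_sup' (fun e => σ e * ρ e) (Finset.mem_univ e)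
      calc ρ e = σ e * ρ e * (σ e)⁻¹ := by
            rw [mul_comm (σ e) (ρ e), mul_assoc, mul_inv_cancel₀ (hσ e).ne', mul_one]
        _ ≤ M * (σ e)⁻¹ := by
          apply mul_le_mul_of_nonneg_right h (inv_nonneg.2 (hσ e).le)
    have key : 1 ≤ M * L := by
      calc (1:ℝ) ≤ ∑ e, N γ0 e * ρ e := hρ2 γ0
        _ ≤ ∑ e, N γ0 e * (M * (σ e)⁻¹) := by
          apply Finset.sum_le_sum
          intro e _
          exact mul_le_mul_of_nonneg_left (hub e) (hN γ0 e)
        _ = M * ∑ e, N γ0 e * (σ e)⁻¹ := by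
          rw [Finset.mul_sum]; apply Finset.sum_congr rfl; intro e _; ring
        _ = M * L := by rw [hLdef, hγ0]
    rw [inv_eq_one_div, div_le_iff₀ hL]
    linarith [key]
  have hmod : infModulus N σ = L⁻¹ := by
    unfold infModulus
    apply le_antisymm
    · exact csInf_le ⟨L⁻¹, hlb⟩ ⟨ρ0, hadm, hE0.symm⟩
    · exact le_csInf hne hlb
  rw [hmod, inv_inv]
end
end

section
/- (Modulus as dissipated power.) Let G be a finite connected simple graph, σ a positive weight on its edges, s ≠ t two vertices, Γ(s,t) the family of simple paths from s to t with usage matrix N(γ,e) = 1 if edge e lies on γ and 0 otherwise, and p ∈ (1,∞). Let ρ* be the unique admissible density attaining Mod_{p,σ}(Γ(s,t)), and let φ* : V → ℝ be the unique minimizer of the Dirichlet p-energy Σ_{{x,y}∈E(G)} σ({x,y})|φ(x)−φ(y)|^p subject to φ(s) = 0, φ(t) = 1. Then ρ*({x,y}) = |φ*(x)−φ*(y)| for every edge {x,y} of G, and consequently Mod_{p,σ}(Γ(s,t)) = Σ_{{x,y}∈E(G)} σ({x,y})|φ*(x)−φ*(y)|^p. -/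
open Finset

noncomputable section

/-- The absolute difference of a vertex potential across an (unordered) edge. -/
def eDiff {V : Type*} (φ : V → ℝ) : Sym2 V → ℝ :=
  Sym2.lift ⟨fun x y => |φ x - φ y|, fun x y => abs_sub_comm _ _⟩

@[simp] lemma eDiff_mk {V : Type*} (φ : V → ℝ) (x y : V) :
    eDiff φ s(x, y) = |φ x - φ y| := rfl

lemma eDiff_nonneg {V : Type*} (φ : V → ℝ) (e : Sym2 V) : 0 ≤ eDiff φ e := by
  induction e using Sym2.ind with
  | _ x y => exact abs_nonneg _

lemma walk_telescope {V : Type*} {G : SimpleGraph V} (φ : V → ℝ) :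
    ∀ {a b : V} (w : G.Walk a b), |φ b - φ a| ≤ (w.edges.map (eDiff φ)).sum := by
  intro a b w
  induction w with
  | nil => simp
  | @cons u v c h w ih =>
    simp only [SimpleGraph.Walk.edges_cons, List.map_cons, List.sum_cons, eDiff_mk]
    have h1 := abs_sub_le (φ c) (φ v) (φ u)
    have h2 : |φ v - φ u| = |φ u - φ v| := abs_sub_comm _ _
    linarith

lemma eDiff_admissible {V : Type*} [DecidableEq V] {G : SimpleGraph V} {s t : V}
    (φ : V → ℝ) (hφs : φ s = 0) (hφt : φ t = 1) (γ : G.Path s t) :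
    1 ≤ ∑ e ∈ γ.1.edges.toFinset, eDiff φ e := by
  have hnd : γ.1.edges.Nodup := γ.2.isTrail.edges_nodup
  have := walk_telescope φ γ.1
  rw [List.sum_toFinset _ hnd]
  simpa [hφs, hφt] using this

lemma exists_potential {V : Type*} [Fintype V] [DecidableEq V]
    (G : SimpleGraph V) [DecidableRel G.Adj] (hG : G.Connected) (s t : V) (ρ : Sym2 V → ℝ)
    (hρ0 : ∀ e, 0 ≤ ρ e)
    (hadm : ∀ γ : G.Path s t, 1 ≤ ∑ e ∈ γ.1.edges.toFinset, ρ e) :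
    ∃ φ : V → ℝ, φ s = 0 ∧ φ t = 1 ∧ ∀ e ∈ G.edgeSet, eDiff φ e ≤ ρ e := by
  haveI : ∀ x : V, Nonempty (G.Path s x) := fun x => ⟨((hG.preconnected s x).some).toPath⟩
  set D : V → ℝ := fun x =>
    Finset.univ.inf' Finset.univ_nonempty (fun γ : G.Path s x => ∑ e ∈ γ.1.edges.toFinset, ρ e)
    with hD
  have hD0 : ∀ x, 0 ≤ D x := by
    intro x
    apply Finset.le_inf'
    intro γ _
    exact Finset.sum_nonneg fun e _ => hρ0 e
  have hDs : D s = 0 := by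
    refine le_antisymm ?_ (hD0 s)
    have h0 : (∑ e ∈ ((SimpleGraph.Path.nil : G.Path s s) : G.Walk s s).edges.toFinset, ρ e) = 0 := by
      simp [SimpleGraph.Path.nil]
    exact le_of_le_of_eq (Finset.inf'_le _ (Finset.mem_univ SimpleGraph.Path.nil)) h0
  have hDt : 1 ≤ D t := Finset.le_inf' _ _ fun γ _ => hadm γ
  have hLip : ∀ x y : V, G.Adj x y → D y ≤ D x + ρ s(x, y) := by
    intro x y hxy
    obtain ⟨γ, -, hγ⟩ := Finset.exists_mem_eq_inf' Finset.univ_nonempty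
      (fun γ : G.Path s x => ∑ e ∈ γ.1.edges.toFinset, ρ e)
    set w : G.Walk s y := γ.1.append (SimpleGraph.Walk.cons hxy SimpleGraph.Walk.nil) with hw
    have hsub : (w.toPath : G.Walk s y).edges.toFinset ⊆ insert s(x, y) γ.1.edges.toFinset := by
      intro a ha
      rw [List.mem_toFinset] at ha
      have := SimpleGraph.Walk.edges_toPath_subset w ha
      rw [hw] at this
      simp only [SimpleGraph.Walk.edges_append, SimpleGraph.Walk.edges_cons,
        SimpleGraph.Walk.edges_nil, List.mem_append, List.mem_cons, List.not_mem_nil,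
        or_false] at this
      rcases this with h | h
      · exact Finset.mem_insert_of_mem (List.mem_toFinset.2 h)
      · exact h ▸ Finset.mem_insert_self _ _
    have h1 : D y ≤ ∑ e ∈ (w.toPath : G.Walk s y).edges.toFinset, ρ e :=
      Finset.inf'_le _ (Finset.mem_univ w.toPath)
    have h2 : ∑ e ∈ (w.toPath : G.Walk s y).edges.toFinset, ρ e
        ≤ ∑ e ∈ insert s(x, y) γ.1.edges.toFinset, ρ e :=
      Finset.sum_le_sum_of_subset_of_nonneg hsub fun e _ _ => hρ0 e
    have h3 : ∑ e ∈ insert s(x, y) γ.1.edges.toFinset, ρ e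
        ≤ (∑ e ∈ γ.1.edges.toFinset, ρ e) + ρ s(x, y) := by
      by_cases hmem : s(x, y) ∈ γ.1.edges.toFinset
      · rw [Finset.insert_eq_self.2 hmem]
        linarith [hρ0 s(x, y)]
      · rw [Finset.sum_insert hmem]; linarith
    have hDx : D x = ∑ e ∈ γ.1.edges.toFinset, ρ e := hγ
    rw [hDx]
    linarith
  refine ⟨fun x => min (D x) 1, ?_, ?_, ?_⟩
  · simp [hDs]
  · simp [min_eq_right hDt]
  · intro e he
    induction e using Sym2.ind with
    | _ x y =>
      have hxy : G.Adj x y := he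
      · have k1 := hLip x y hxy
        have k2 := hLip y x hxy.symm
        rw [Sym2.eq_swap] at k2
        have hd : |D x - D y| ≤ ρ s(x, y) := abs_sub_le_iff.2 ⟨by linarith, by linarith⟩
        calc eDiff (fun x => min (D x) 1) s(x, y) = |min (D x) 1 - min (D y) 1| := rfl
          _ ≤ max |D x - D y| |(1:ℝ) - 1| := abs_min_sub_min_le_max _ _ _ _
          _ ≤ ρ s(x, y) := by
              rw [sub_self, abs_zero]
              exact max_le hd (hρ0 _)


/-- modulus as dissipated power: for the family of simple paths from `s` to `t`
in a finite connected simple graph, the optimal density `ρ*` for `p`-modulus agrees with the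
absolute potential difference of the optimal Dirichlet potential `φ*` on every edge, and the
modulus equals the minimal dissipated power. -/
theorem modulus_as_dissipated_power
    {V : Type*} [Fintype V] [DecidableEq V]
    (G : SimpleGraph V) [DecidableRel G.Adj] (hG : G.Connected)
    (σ : Sym2 V → ℝ) (hσ : ∀ e ∈ G.edgeSet, 0 < σ e)
    (s t : V) (hst : s ≠ t)
    (p : ℝ) (hp : 1 < p)
    (ρstar : Sym2 V → ℝ)
    (hadm : (∀ e, 0 ≤ ρstar e) ∧
      ∀ γ : G.Path s t, 1 ≤ ∑ e ∈ γ.1.edges.toFinset, ρstar e)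
    (hopt : (∑ e ∈ G.edgeFinset, σ e * ρstar e ^ p) =
      sInf {x | ∃ ρ : Sym2 V → ℝ,
        ((∀ e, 0 ≤ ρ e) ∧ ∀ γ : G.Path s t, 1 ≤ ∑ e ∈ γ.1.edges.toFinset, ρ e) ∧
        x = ∑ e ∈ G.edgeFinset, σ e * ρ e ^ p})
    (φstar : V → ℝ) (hφs : φstar s = 0) (hφt : φstar t = 1)
    (hφmin : ∀ φ : V → ℝ, φ s = 0 → φ t = 1 →
      (∑ e ∈ G.edgeFinset, σ e * eDiff φstar e ^ p) ≤
        ∑ e ∈ G.edgeFinset, σ e * eDiff φ e ^ p) :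
    (∀ e ∈ G.edgeFinset, ρstar e = eDiff φstar e) ∧
    (∑ e ∈ G.edgeFinset, σ e * ρstar e ^ p) =
      ∑ e ∈ G.edgeFinset, σ e * eDiff φstar e ^ p := by
  set S : Set ℝ := {x | ∃ ρ : Sym2 V → ℝ,
      ((∀ e, 0 ≤ ρ e) ∧ ∀ γ : G.Path s t, 1 ≤ ∑ e ∈ γ.1.edges.toFinset, ρ e) ∧
      x = ∑ e ∈ G.edgeFinset, σ e * ρ e ^ p} with hS
  have hσ' : ∀ e ∈ G.edgeFinset, 0 < σ e := fun e he =>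
    hσ e (SimpleGraph.mem_edgeFinset.mp he)
  have hbdd : BddBelow S := by
    refine ⟨0, fun x hx => ?_⟩
    obtain ⟨ρ, ⟨⟨h0, -⟩, rfl⟩⟩ := hx
    exact Finset.sum_nonneg fun e he =>
      mul_nonneg (hσ' e he).le (Real.rpow_nonneg (h0 e) p)
  have hmemD : (∑ e ∈ G.edgeFinset, σ e * eDiff φstar e ^ p) ∈ S :=
    ⟨eDiff φstar, ⟨fun e => eDiff_nonneg _ _, fun γ => eDiff_admissible φstar hφs hφt γ⟩, rfl⟩
  have h1 : (∑ e ∈ G.edgeFinset, σ e * ρstar e ^ p)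
      ≤ ∑ e ∈ G.edgeFinset, σ e * eDiff φstar e ^ p := by
    rw [hopt]
    exact csInf_le hbdd hmemD
  have h2 : (∑ e ∈ G.edgeFinset, σ e * eDiff φstar e ^ p)
      ≤ ∑ e ∈ G.edgeFinset, σ e * ρstar e ^ p := by
    obtain ⟨φ, hφ1, hφ2, hφ3⟩ := exists_potential G hG s t ρstar hadm.1 hadm.2
    refine (hφmin φ hφ1 hφ2).trans (Finset.sum_le_sum fun e he => ?_)
    exact mul_le_mul_of_nonneg_left
      (Real.rpow_le_rpow (eDiff_nonneg _ _) (hφ3 e (SimpleGraph.mem_edgeFinset.mp he))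
        (by linarith))
      (hσ' e he).le
  have hEq : (∑ e ∈ G.edgeFinset, σ e * ρstar e ^ p)
      = ∑ e ∈ G.edgeFinset, σ e * eDiff φstar e ^ p := le_antisymm h1 h2
  refine ⟨?_, hEq⟩
  -- strict convexity argument
  set ρmid : Sym2 V → ℝ := fun e => (ρstar e + eDiff φstar e) / 2 with hρmid
  have hmemMid : (∑ e ∈ G.edgeFinset, σ e * ρmid e ^ p) ∈ S := by
    refine ⟨ρmid, ⟨⟨fun e => by
        have := hadm.1 e
        have := eDiff_nonneg φstar e
        simp only [hρmid]
        linarith, fun γ => ?_⟩, rfl⟩⟩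
    have hA := hadm.2 γ
    have hB := eDiff_admissible φstar hφs hφt γ
    simp only [hρmid]
    rw [show (fun e => (ρstar e + eDiff φstar e) / 2) = fun e => (ρstar e + eDiff φstar e) / 2 from rfl]
    calc (1:ℝ) ≤ ((∑ e ∈ γ.1.edges.toFinset, ρstar e)
          + ∑ e ∈ γ.1.edges.toFinset, eDiff φstar e) / 2 := by linarith
      _ = ∑ e ∈ γ.1.edges.toFinset, (ρstar e + eDiff φstar e) / 2 := by
          rw [← Finset.sum_add_distrib, Finset.sum_div]
  have hle : (∑ e ∈ G.edgeFinset, σ e * ρstar e ^ p)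
      ≤ ∑ e ∈ G.edgeFinset, σ e * ρmid e ^ p := by
    rw [hopt]; exact csInf_le hbdd hmemMid
  have hconv : ∀ e ∈ G.edgeFinset,
      σ e * ρmid e ^ p ≤ (σ e * ρstar e ^ p + σ e * eDiff φstar e ^ p) / 2 := by
    intro e he
    have hc := (strictConvexOn_rpow hp).convexOn.2 (Set.mem_Ici.2 (hadm.1 e))
      (Set.mem_Ici.2 (eDiff_nonneg φstar e)) (by norm_num : (0:ℝ) ≤ 1/2)
      (by norm_num : (0:ℝ) ≤ 1/2) (by norm_num)
    simp only [smul_eq_mul] at hc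
    have hmid : ρmid e = 1/2 * ρstar e + 1/2 * eDiff φstar e := by
      simp only [hρmid]; ring
    rw [hmid]
    calc σ e * (1/2 * ρstar e + 1/2 * eDiff φstar e) ^ p
        ≤ σ e * (1/2 * ρstar e ^ p + 1/2 * eDiff φstar e ^ p) :=
          mul_le_mul_of_nonneg_left hc (hσ' e he).le
      _ = (σ e * ρstar e ^ p + σ e * eDiff φstar e ^ p) / 2 := by ring
  have hsum_g : (∑ e ∈ G.edgeFinset, (σ e * ρstar e ^ p + σ e * eDiff φstar e ^ p) / 2)
      = ∑ e ∈ G.edgeFinset, σ e * ρstar e ^ p := by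
    rw [← Finset.sum_div, Finset.sum_add_distrib, ← hEq]
    ring
  have hsum_eq : (∑ e ∈ G.edgeFinset, σ e * ρmid e ^ p)
      = ∑ e ∈ G.edgeFinset, (σ e * ρstar e ^ p + σ e * eDiff φstar e ^ p) / 2 := by
    have := Finset.sum_le_sum hconv
    rw [hsum_g] at this ⊢
    linarith
  have hterm := (Finset.sum_eq_sum_iff_of_le hconv).mp hsum_eq
  intro e he
  have hterm_e := hterm e he
  by_contra hne
  have ha : ρstar e ∈ Set.Ici (0:ℝ) := Set.mem_Ici.2 (hadm.1 e)
  have hb : eDiff φstar e ∈ Set.Ici (0:ℝ) := Set.mem_Ici.2 (eDiff_nonneg φstar e)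
  have hstrict := (strictConvexOn_rpow hp).2 ha hb hne
    (by norm_num : (0:ℝ) < 1/2) (by norm_num : (0:ℝ) < 1/2) (by norm_num)
  simp only [smul_eq_mul] at hstrict
  have hmid : ρmid e = 1/2 * ρstar e + 1/2 * eDiff φstar e := by
    simp only [hρmid]; ring
  have : σ e * ρmid e ^ p < (σ e * ρstar e ^ p + σ e * eDiff φstar e ^ p) / 2 := by
    rw [hmid]
    calc σ e * (1/2 * ρstar e + 1/2 * eDiff φstar e) ^ p
        < σ e * (1/2 * ρstar e ^ p + 1/2 * eDiff φstar e ^ p) :=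
          (mul_lt_mul_iff_right₀ (hσ' e he)).2 hstrict
      _ = (σ e * ρstar e ^ p + σ e * eDiff φstar e ^ p) / 2 := by ring
  rw [hterm_e] at this
  exact lt_irrefl _ this
end
end

section
/- The function p ↦ Mod_{p,σ}(Γ) is continuous on [1,∞). -/
open Finset

noncomputable section

/-- `p ↦ Mod_{p,σ}(Γ)` is continuous on `[1,∞)`. -/
theorem modulus_continuousOn
    {E Γ : Type*} [Fintype E] [Fintype Γ] [Nonempty E] [Nonempty Γ]
    (N : Γ → E → ℝ) (hN : ∀ γ e, 0 ≤ N γ e) (hrow : ∀ γ, ∃ e, 0 < N γ e)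
    (σ : E → ℝ) (hσ : ∀ e, 0 < σ e) :
    ContinuousOn (fun p : ℝ => pModulus N σ p) (Set.Ici 1) := by
  classical
  obtain ⟨e₀⟩ := ‹Nonempty E›
  -- the minimal row sum and the constant admissible density
  set m : ℝ := univ.inf' univ_nonempty (fun γ => ∑ e, N γ e) with hm_def
  have hm : 0 < m := by
    rw [hm_def, Finset.lt_inf'_iff]
    intro γ _
    obtain ⟨e, he⟩ := hrow γ
    exact Finset.sum_pos' (fun e _ => hN γ e) ⟨e, mem_univ e, he⟩
  set c : ℝ := m⁻¹ with hc_def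
  have hc : 0 < c := inv_pos.2 hm
  have hadm0 : IsAdmissible N (fun _ => c) := by
    refine ⟨fun _ => hc.le, fun γ => ?_⟩
    have h1 : m ≤ ∑ e, N γ e := Finset.inf'_le _ (mem_univ γ)
    have : (1:ℝ) = m * c := by rw [hc_def, mul_inv_cancel₀ hm.ne']
    calc (1:ℝ) = m * c := this
      _ ≤ (∑ e, N γ e) * c := by nlinarith
      _ = ∑ e, N γ e * c := by rw [Finset.sum_mul]
  set smin : ℝ := univ.inf' univ_nonempty σ with hsmin_def
  have hsmin : 0 < smin := by
    rw [hsmin_def, Finset.lt_inf'_iff]; exact fun e _ => hσ e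
  have hsmin_le : ∀ e, smin ≤ σ e := fun e => Finset.inf'_le _ (mem_univ e)
  -- nonnegativity of energies
  have hE0 : ∀ (p : ℝ) (ρ : E → ℝ), (∀ e, 0 ≤ ρ e) → 0 ≤ pEnergy σ p ρ := by
    intro p ρ hρ
    exact Finset.sum_nonneg fun e _ => mul_nonneg (hσ e).le (Real.rpow_nonneg (hρ e) p)
  have hbdd : ∀ p : ℝ,
      BddBelow {x | ∃ ρ : E → ℝ, IsAdmissible N ρ ∧ x = pEnergy σ p ρ} := by
    intro p
    refine ⟨0, ?_⟩
    rintro x ⟨ρ, hρ, rfl⟩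
    exact hE0 p ρ hρ.1
  have hSne : ∀ p : ℝ,
      Set.Nonempty {x | ∃ ρ : E → ℝ, IsAdmissible N ρ ∧ x = pEnergy σ p ρ} :=
    fun p => ⟨_, _, hadm0, rfl⟩
  rw [Metric.continuousOn_iff]
  intro p₀ hp₀ ε hε
  have hp₀1 : (1:ℝ) ≤ p₀ := hp₀
  set T : ℝ := p₀ + 2 with hT_def
  have hT1 : (1:ℝ) ≤ T := by linarith
  have hp₀T : p₀ ∈ Set.Icc (1:ℝ) T := ⟨hp₀1, by linarith⟩
  set B : ℝ := (∑ e, σ e) * (max c 1) ^ T with hB_def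
  have hc1 : (1:ℝ) ≤ max c 1 := le_max_right _ _
  have hB : ∀ p ∈ Set.Icc (1:ℝ) T, pEnergy σ p (fun _ => c) ≤ B := by
    intro p hp
    rw [hB_def, pEnergy, Finset.sum_mul]
    refine Finset.sum_le_sum fun e _ => ?_
    have h1 : c ^ p ≤ (max c 1) ^ p :=
      Real.rpow_le_rpow hc.le (le_max_left _ _) (by linarith [hp.1])
    have h2 : (max c 1) ^ p ≤ (max c 1) ^ T :=
      Real.rpow_le_rpow_of_exponent_le hc1 hp.2
    exact mul_le_mul_of_nonneg_left (h1.trans h2) (hσ e).le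
  have hBpos : 0 < B := by
    apply mul_pos (Finset.sum_pos (fun e _ => hσ e) univ_nonempty)
    exact Real.rpow_pos_of_pos (lt_of_lt_of_le one_pos hc1) _
  set R : ℝ := max (B / smin) 1 with hR_def
  have hR1 : (1:ℝ) ≤ R := le_max_right _ _
  -- any density value with bounded energy term is ≤ R
  have hbd : ∀ p ∈ Set.Icc (1:ℝ) T, ∀ x : ℝ, 0 ≤ x → ∀ e, σ e * x ^ p ≤ B → x ≤ R := by
    intro p hp x hx e h
    have hp0 : 0 < p := lt_of_lt_of_le one_pos hp.1
    have h1 : x ^ p ≤ B / σ e := (le_div_iff₀ (hσ e)).2 (by linarith [h])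
    have h2 : B / σ e ≤ B / smin := by gcongr; exact hsmin_le e
    have h3 : x ^ p ≤ R := le_trans (h1.trans h2) (le_max_left _ _)
    have h4 : (x ^ p) ^ p⁻¹ ≤ R ^ p⁻¹ :=
      Real.rpow_le_rpow (Real.rpow_nonneg hx p) h3 (by positivity)
    rw [Real.rpow_rpow_inv hx hp0.ne'] at h4
    have h5 : R ^ p⁻¹ ≤ R ^ (1:ℝ) :=
      Real.rpow_le_rpow_of_exponent_le hR1 (by
        rw [inv_le_one_iff₀]; right; exact hp.1)
    rw [Real.rpow_one] at h5
    exact h4.trans h5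
  -- the compact set of bounded admissible densities
  set K : Set (E → ℝ) := {ρ | IsAdmissible N ρ ∧ ∀ e, ρ e ≤ R} with hK_def
  set box : Set (E → ℝ) := Set.univ.pi (fun _ => Set.Icc (0:ℝ) R) with hbox_def
  have hKbox : K ⊆ box := by
    rintro ρ ⟨hρ, hρR⟩
    rw [hbox_def, Set.mem_univ_pi]
    exact fun e => ⟨hρ.1 e, hρR e⟩
  have hboxcpt : IsCompact box := isCompact_univ_pi fun _ => isCompact_Icc
  have hKclosed : IsClosed K := by
    have : K = (⋂ e, {ρ : E → ℝ | 0 ≤ ρ e}) ∩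
        ((⋂ γ, {ρ : E → ℝ | 1 ≤ ∑ e, N γ e * ρ e}) ∩ (⋂ e, {ρ : E → ℝ | ρ e ≤ R})) := by
      ext ρ
      simp only [hK_def, Set.mem_setOf_eq, Set.mem_inter_iff, Set.mem_iInter, IsAdmissible]
      tauto
    rw [this]
    refine IsClosed.inter (isClosed_iInter fun e => isClosed_le continuous_const (continuous_apply e))
      (IsClosed.inter (isClosed_iInter fun γ => isClosed_le continuous_const ?_)
        (isClosed_iInter fun e => isClosed_le (continuous_apply e) continuous_const))
    exact continuous_finset_sum _ fun e _ => continuous_const.mul (continuous_apply e)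
  have hKcpt : IsCompact K := hboxcpt.of_isClosed_subset hKclosed hKbox
  have hcR : c ≤ R := by
    refine hbd 1 ⟨le_refl _, hT1⟩ c hc.le e₀ ?_
    have h1 : σ e₀ * c ^ (1:ℝ) ≤ pEnergy σ 1 (fun _ => c) :=
      Finset.single_le_sum
        (f := fun e => σ e * c ^ (1:ℝ))
        (fun e _ => mul_nonneg (hσ e).le (Real.rpow_nonneg hc.le _)) (mem_univ e₀)
    exact h1.trans (hB 1 ⟨le_refl _, hT1⟩)
  have hKne : K.Nonempty := ⟨fun _ => c, hadm0, fun _ => hcR⟩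
  have hTbdd : ∀ p : ℝ, BddBelow ((fun ρ => pEnergy σ p ρ) '' K) := by
    intro p
    refine ⟨0, ?_⟩
    rintro x ⟨ρ, hρ, rfl⟩
    exact hE0 p ρ hρ.1.1
  have hTne : ∀ p : ℝ, ((fun ρ => pEnergy σ p ρ) '' K).Nonempty :=
    fun p => ⟨_, ⟨_, hKne.choose_spec, rfl⟩⟩
  -- on Icc 1 T, the modulus is the inf over K
  have hEq : ∀ p ∈ Set.Icc (1:ℝ) T,
      pModulus N σ p = sInf ((fun ρ => pEnergy σ p ρ) '' K) := by
    intro p hp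
    apply le_antisymm
    · refine csInf_le_csInf (hbdd p) (hTne p) ?_
      rintro x ⟨ρ, hρ, rfl⟩
      exact ⟨ρ, hρ.1, rfl⟩
    · refine le_csInf (hSne p) ?_
      rintro x ⟨ρ, hρ, rfl⟩
      by_cases h : pEnergy σ p ρ ≤ B
      · refine csInf_le (hTbdd p) ⟨ρ, ⟨hρ, fun e => hbd p hp (ρ e) (hρ.1 e) e ?_⟩, rfl⟩
        have := Finset.single_le_sum
          (f := fun e => σ e * ρ e ^ p)
          (fun e _ => mul_nonneg (hσ e).le (Real.rpow_nonneg (hρ.1 e) p)) (mem_univ e)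
        exact this.trans h
      · push_neg at h
        have h1 : sInf ((fun ρ => pEnergy σ p ρ) '' K) ≤ pEnergy σ p (fun _ => c) :=
          csInf_le (hTbdd p) ⟨_, ⟨hadm0, fun _ => hcR⟩, rfl⟩
        linarith [hB p hp]
  -- uniform continuity of the energy on a compact product
  set C : Set (ℝ × (E → ℝ)) := Set.Icc (1:ℝ) T ×ˢ box with hC_def
  have hCcpt : IsCompact C := isCompact_Icc.prod hboxcpt
  have hgcont : ContinuousOn (fun z : ℝ × (E → ℝ) => pEnergy σ z.1 z.2) C := by
    intro z hz
    apply ContinuousAt.continuousWithinAt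
    have hz1 : 0 < z.1 := lt_of_lt_of_le one_pos hz.1.1
    have hterm : ∀ e : E, ContinuousAt (fun z : ℝ × (E → ℝ) => σ e * z.2 e ^ z.1) z := by
      intro e
      refine continuousAt_const.mul ?_
      have h := Real.continuousAt_rpow (z.2 e, z.1) (Or.inr hz1)
      have hin : Continuous (fun w : ℝ × (E → ℝ) => (w.2 e, w.1)) :=
        ((continuous_apply e).comp continuous_snd).prodMk continuous_fst
      exact ContinuousAt.comp (f := fun w : ℝ × (E → ℝ) => (w.2 e, w.1)) h hin.continuousAt
    exact tendsto_finset_sum _ fun e _ => hterm e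
  have hUC := hCcpt.uniformContinuousOn_of_continuous hgcont
  rw [Metric.uniformContinuousOn_iff] at hUC
  obtain ⟨δ, hδ, hδ'⟩ := hUC (ε / 2) (by linarith)
  refine ⟨min δ 1, by positivity, ?_⟩
  intro q hq hdist
  have hq1 : (1:ℝ) ≤ q := hq
  rw [Real.dist_eq] at hdist
  have hqd : |q - p₀| < δ := lt_of_lt_of_le hdist (min_le_left _ _)
  have hq1' : |q - p₀| < 1 := lt_of_lt_of_le hdist (min_le_right _ _)
  have hqT : q ∈ Set.Icc (1:ℝ) T := by
    constructor
    · exact hq1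
    · have := abs_lt.mp hq1'
      rw [hT_def]; linarith [this.1, this.2]
  -- uniform closeness of the two energies on K
  have key : ∀ ρ ∈ K, |pEnergy σ q ρ - pEnergy σ p₀ ρ| < ε / 2 := by
    intro ρ hρK
    have hρbox : ρ ∈ box := hKbox hρK
    have := hδ' (q, ρ) ⟨hqT, hρbox⟩ (p₀, ρ) ⟨hp₀T, hρbox⟩ (by
      rw [Prod.dist_eq]
      simp only [dist_self]
      rw [Real.dist_eq]
      exact max_lt hqd hδ)
    rwa [Real.dist_eq] at this
  -- compare the two infima
  have comp : ∀ a b : ℝ, (∀ ρ ∈ K, pEnergy σ a ρ ≤ pEnergy σ b ρ + ε / 2) →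
      sInf ((fun ρ => pEnergy σ a ρ) '' K) ≤ sInf ((fun ρ => pEnergy σ b ρ) '' K) + ε / 2 := by
    intro a b h
    have hlow : ∀ x ∈ (fun ρ => pEnergy σ b ρ) '' K,
        sInf ((fun ρ => pEnergy σ a ρ) '' K) - ε / 2 ≤ x := by
      rintro x ⟨ρ, hρ, rfl⟩
      have h1 := csInf_le (hTbdd a) ⟨ρ, hρ, rfl⟩
      linarith [h ρ hρ]
    linarith [le_csInf (hTne b) hlow]
  have h1 := comp q p₀ (fun ρ hρ => by linarith [abs_lt.mp (key ρ hρ)])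
  have h2 := comp p₀ q (fun ρ hρ => by linarith [abs_lt.mp (key ρ hρ)])
  show dist (pModulus N σ q) (pModulus N σ p₀) < ε
  rw [hEq q hqT, hEq p₀ hp₀T, Real.dist_eq]
  have : |sInf ((fun ρ => pEnergy σ q ρ) '' K) - sInf ((fun ρ => pEnergy σ p₀ ρ) '' K)| ≤ ε / 2 :=
    abs_sub_le_iff.mpr ⟨by linarith, by linarith⟩
  linarith
end
end

section
/- Suppose c > 0 and every nonzero entry of the usage matrix satisfies N(γ,e) ≥ c. Then the function p ↦ c^p · Mod_{p,σ}(Γ) is nonincreasing on [1,∞): for 1 ≤ p₁ ≤ p₂ < ∞, c^{p₂} Mod_{p₂,σ}(Γ) ≤ c^{p₁} Mod_{p₁,σ}(Γ). -/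
open Finset

noncomputable section

/-- if every nonzero entry of `N` is at least `c > 0`, then
`p ↦ c^p · Mod_{p,σ}(Γ)` is nonincreasing on `[1,∞)`. -/
theorem modulus_scaled_antitone
    {E Γ : Type*} [Fintype E] [Fintype Γ] [Nonempty E] [Nonempty Γ]
    (N : Γ → E → ℝ) (hN : ∀ γ e, 0 ≤ N γ e) (hrow : ∀ γ, ∃ e, 0 < N γ e)
    (σ : E → ℝ) (hσ : ∀ e, 0 < σ e)
    (c : ℝ) (hc : 0 < c) (hNc : ∀ γ e, N γ e ≠ 0 → c ≤ N γ e)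
    (p₁ p₂ : ℝ) (hp₁ : 1 ≤ p₁) (hp₁₂ : p₁ ≤ p₂) :
    c ^ p₂ * pModulus N σ p₂ ≤ c ^ p₁ * pModulus N σ p₁ := by

  have hp1pos : (0:ℝ) < p₁ := lt_of_lt_of_le one_pos hp₁
  have hp2pos : (0:ℝ) < p₂ := lt_of_lt_of_le hp1pos hp₁₂
  set S₁ := {x | ∃ ρ : E → ℝ, IsAdmissible N ρ ∧ x = pEnergy σ p₁ ρ} with hS₁
  set S₂ := {x | ∃ ρ : E → ℝ, IsAdmissible N ρ ∧ x = pEnergy σ p₂ ρ} with hS₂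
  -- energies are nonnegative
  have henergy : ∀ (p : ℝ) (ρ : E → ℝ), (∀ e, 0 ≤ ρ e) → 0 ≤ pEnergy σ p ρ := by
    intro p ρ hρ
    apply Finset.sum_nonneg
    intro e _
    exact mul_nonneg (hσ e).le (Real.rpow_nonneg (hρ e) p)
  have hbdd₂ : BddBelow S₂ := ⟨0, by rintro x ⟨ρ, hρ, rfl⟩; exact henergy p₂ ρ hρ.1⟩
  -- S₁ nonempty
  have hS1ne : S₁.Nonempty := by
    refine ⟨pEnergy σ p₁ (fun _ => 1/c), fun _ => 1/c, ⟨fun e => by positivity, ?_⟩, rfl⟩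
    intro γ
    obtain ⟨e₀, he₀⟩ := hrow γ
    have hce : c ≤ N γ e₀ := hNc γ e₀ (ne_of_gt he₀)
    calc (1:ℝ) = c * (1/c) := by field_simp
    _ ≤ N γ e₀ * (1/c) := by
        apply mul_le_mul_of_nonneg_right hce (by positivity)
    _ ≤ ∑ e, N γ e * (1/c) := by
        apply Finset.single_le_sum (f := fun e => N γ e * (1/c)) _ (Finset.mem_univ e₀)
        intro e _
        exact mul_nonneg (hN γ e) (by positivity)
  -- key estimate
  have key : ∀ ρ : E → ℝ, IsAdmissible N ρ →
      c ^ p₂ * pModulus N σ p₂ ≤ c ^ p₁ * pEnergy σ p₁ ρ := by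
    intro ρ hρ
    set ρ' : E → ℝ := fun e => min (ρ e) (1/c) with hρ'def
    have hρ'nn : ∀ e, 0 ≤ ρ' e := fun e => le_min (hρ.1 e) (by positivity)
    have hρ'le : ∀ e, ρ' e ≤ ρ e := fun e => min_le_left _ _
    have hadm' : IsAdmissible N ρ' := by
      refine ⟨hρ'nn, fun γ => ?_⟩
      by_cases h : ∃ e, 0 < N γ e ∧ 1/c ≤ ρ e
      · obtain ⟨e₀, he₀, hge⟩ := h
        have hterm : 1 ≤ N γ e₀ * ρ' e₀ := by
          have : ρ' e₀ = 1/c := min_eq_right hge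
          rw [this]
          calc (1:ℝ) = c * (1/c) := by field_simp
          _ ≤ N γ e₀ * (1/c) :=
              mul_le_mul_of_nonneg_right (hNc γ e₀ (ne_of_gt he₀)) (by positivity)
        calc (1:ℝ) ≤ N γ e₀ * ρ' e₀ := hterm
        _ ≤ ∑ e, N γ e * ρ' e := by
            apply Finset.single_le_sum (f := fun e => N γ e * ρ' e) _ (Finset.mem_univ e₀)
            intro e _
            exact mul_nonneg (hN γ e) (hρ'nn e)
      · push_neg at h
        have : ∑ e, N γ e * ρ' e = ∑ e, N γ e * ρ e := by
          apply Finset.sum_congr rfl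
          intro e _
          rcases eq_or_lt_of_le (hN γ e) with h0 | hpos
          · rw [← h0]; ring
          · have := (h e hpos).le
            rw [hρ'def]
            simp only []
            rw [min_eq_left this]
        rw [this]
        exact hρ.2 γ
    have hmem : pEnergy σ p₂ ρ' ∈ S₂ := ⟨ρ', hadm', rfl⟩
    have h1 : pModulus N σ p₂ ≤ pEnergy σ p₂ ρ' := csInf_le hbdd₂ hmem
    have hcpos2 : (0:ℝ) < c ^ p₂ := Real.rpow_pos_of_pos hc p₂
    have h2 : c ^ p₂ * pEnergy σ p₂ ρ' ≤ c ^ p₁ * pEnergy σ p₁ ρ := by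
      unfold pEnergy
      rw [Finset.mul_sum, Finset.mul_sum]
      apply Finset.sum_le_sum
      intro e _
      have key2 : c ^ p₂ * ρ' e ^ p₂ ≤ c ^ p₁ * ρ e ^ p₁ := by
        rw [← Real.mul_rpow hc.le (hρ'nn e), ← Real.mul_rpow hc.le (hρ.1 e)]
        have hmin1 : c * ρ' e ≤ 1 := by
          have : ρ' e ≤ 1/c := min_le_right _ _
          calc c * ρ' e ≤ c * (1/c) := mul_le_mul_of_nonneg_left this hc.le
          _ = 1 := by field_simp
        rcases eq_or_lt_of_le (mul_nonneg hc.le (hρ'nn e)) with h0 | hpos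
        · rw [← h0, Real.zero_rpow (ne_of_gt hp2pos)]
          exact Real.rpow_nonneg (mul_nonneg hc.le (hρ.1 e)) p₁
        · calc (c * ρ' e) ^ p₂ ≤ (c * ρ' e) ^ p₁ :=
              Real.rpow_le_rpow_of_exponent_ge hpos hmin1 hp₁₂
          _ ≤ (c * ρ e) ^ p₁ := by
              apply Real.rpow_le_rpow hpos.le _ hp1pos.le
              exact mul_le_mul_of_nonneg_left (hρ'le e) hc.le
      calc c ^ p₂ * (σ e * ρ' e ^ p₂) = σ e * (c ^ p₂ * ρ' e ^ p₂) := by ring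
      _ ≤ σ e * (c ^ p₁ * ρ e ^ p₁) := mul_le_mul_of_nonneg_left key2 (hσ e).le
      _ = c ^ p₁ * (σ e * ρ e ^ p₁) := by ring
    calc c ^ p₂ * pModulus N σ p₂ ≤ c ^ p₂ * pEnergy σ p₂ ρ' :=
        mul_le_mul_of_nonneg_left h1 hcpos2.le
    _ ≤ c ^ p₁ * pEnergy σ p₁ ρ := h2
  -- conclude
  have hcpos1 : (0:ℝ) < c ^ p₁ := Real.rpow_pos_of_pos hc p₁
  have hlb : c ^ p₂ * pModulus N σ p₂ / c ^ p₁ ≤ sInf S₁ := by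
    apply le_csInf hS1ne
    rintro x ⟨ρ, hρ, rfl⟩
    rw [div_le_iff₀ hcpos1]
    calc c ^ p₂ * pModulus N σ p₂ ≤ c ^ p₁ * pEnergy σ p₁ ρ := key ρ hρ
    _ = pEnergy σ p₁ ρ * c ^ p₁ := by ring
  have : pModulus N σ p₁ = sInf S₁ := rfl
  rw [this]
  linarith [(div_le_iff₀ hcpos1).mp hlb]
end
end

section
/- The function p ↦ (σ(E)^{−1} Mod_{p,σ}(Γ))^{1/p} is nondecreasing on [1,∞): for 1 ≤ p₁ ≤ p₂ < ∞, (σ(E)^{−1} Mod_{p₁,σ}(Γ))^{1/p₁} ≤ (σ(E)^{−1} Mod_{p₂,σ}(Γ))^{1/p₂}, where σ(E) = Σ_{e∈E} σ(e). -/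
open Finset

noncomputable section

/-- `p ↦ (σ(E)⁻¹ Mod_{p,σ}(Γ))^(1/p)` is nondecreasing on `[1,∞)`. -/
theorem modulus_normalized_monotone
    {E Γ : Type*} [Fintype E] [Fintype Γ] [Nonempty E] [Nonempty Γ]
    (N : Γ → E → ℝ) (hN : ∀ γ e, 0 ≤ N γ e) (hrow : ∀ γ, ∃ e, 0 < N γ e)
    (σ : E → ℝ) (hσ : ∀ e, 0 < σ e)
    (p₁ p₂ : ℝ) (hp₁ : 1 ≤ p₁) (hp₁₂ : p₁ ≤ p₂) :
    ((∑ e, σ e)⁻¹ * pModulus N σ p₁) ^ (1 / p₁) ≤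
      ((∑ e, σ e)⁻¹ * pModulus N σ p₂) ^ (1 / p₂) := by
  classical
  set S := ∑ e, σ e with hSdef
  have hS : 0 < S := Finset.sum_pos (fun e _ => hσ e) univ_nonempty
  have hp₁0 : 0 < p₁ := lt_of_lt_of_le one_pos hp₁
  have hp₂0 : 0 < p₂ := lt_of_lt_of_le hp₁0 hp₁₂
  have hq : (1:ℝ) ≤ p₂ / p₁ := (one_le_div hp₁0).mpr hp₁₂
  -- admissible densities exist
  obtain ⟨ρ₀, hρ₀⟩ : ∃ ρ₀ : E → ℝ, IsAdmissible N ρ₀ := by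
    set m : ℝ := univ.inf' univ_nonempty fun γ => ∑ e, N γ e with hm
    have hmpos : 0 < m := by
      rw [hm, Finset.lt_inf'_iff]
      intro γ _
      obtain ⟨e, he⟩ := hrow γ
      exact Finset.sum_pos' (fun e' _ => hN γ e') ⟨e, Finset.mem_univ e, he⟩
    refine ⟨fun _ => m⁻¹, fun e => inv_nonneg.mpr hmpos.le, fun γ => ?_⟩
    have h1 : m ≤ ∑ e, N γ e := Finset.inf'_le _ (Finset.mem_univ γ)
    calc (1:ℝ) = m * m⁻¹ := (mul_inv_cancel₀ hmpos.ne').symm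
      _ ≤ (∑ e, N γ e) * m⁻¹ :=
          mul_le_mul_of_nonneg_right h1 (inv_nonneg.mpr hmpos.le)
      _ = ∑ e, N γ e * m⁻¹ := by rw [Finset.sum_mul]
  have hsetne : ∀ p : ℝ,
      {x | ∃ ρ : E → ℝ, IsAdmissible N ρ ∧ x = pEnergy σ p ρ}.Nonempty :=
    fun p => ⟨pEnergy σ p ρ₀, ρ₀, hρ₀, rfl⟩
  have hnonneg : ∀ p : ℝ, ∀ x ∈ {x | ∃ ρ : E → ℝ, IsAdmissible N ρ ∧ x = pEnergy σ p ρ},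
      (0:ℝ) ≤ x := by
    rintro p x ⟨ρ, hρ, rfl⟩
    exact Finset.sum_nonneg fun e _ =>
      mul_nonneg (hσ e).le (Real.rpow_nonneg (hρ.1 e) p)
  have hbdd : ∀ p : ℝ,
      BddBelow {x | ∃ ρ : E → ℝ, IsAdmissible N ρ ∧ x = pEnergy σ p ρ} :=
    fun p => ⟨0, fun x hx => hnonneg p x hx⟩
  have hM₁ : 0 ≤ pModulus N σ p₁ := Real.sInf_nonneg fun x hx => hnonneg p₁ x hx
  have hc : 0 ≤ S⁻¹ * pModulus N σ p₁ := mul_nonneg (inv_nonneg.mpr hS.le) hM₁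
  -- key estimate for each admissible density
  have key : ∀ ρ : E → ℝ, IsAdmissible N ρ →
      (S⁻¹ * pModulus N σ p₁) ^ (p₂ / p₁) ≤ S⁻¹ * pEnergy σ p₂ ρ := by
    intro ρ hρ
    have h1 : pModulus N σ p₁ ≤ pEnergy σ p₁ ρ :=
      csInf_le (hbdd p₁) ⟨ρ, hρ, rfl⟩
    have hE₁ : 0 ≤ S⁻¹ * pEnergy σ p₁ ρ :=
      mul_nonneg (inv_nonneg.mpr hS.le) (hnonneg p₁ _ ⟨ρ, hρ, rfl⟩)
    have step1 : (S⁻¹ * pModulus N σ p₁) ^ (p₂ / p₁) ≤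
        (S⁻¹ * pEnergy σ p₁ ρ) ^ (p₂ / p₁) :=
      Real.rpow_le_rpow hc
        (mul_le_mul_of_nonneg_left h1 (inv_nonneg.mpr hS.le))
        (le_trans zero_le_one hq)
    have jensen := Real.rpow_arith_mean_le_arith_mean_rpow univ
      (fun e => σ e / S) (fun e => ρ e ^ p₁)
      (fun e _ => div_nonneg (hσ e).le hS.le)
      (by rw [← Finset.sum_div, ← hSdef, div_self hS.ne'])
      (fun e _ => Real.rpow_nonneg (hρ.1 e) p₁) hq
    have e1 : S⁻¹ * pEnergy σ p₁ ρ = ∑ e, (σ e / S) * ρ e ^ p₁ := by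
      rw [pEnergy, Finset.mul_sum]
      exact Finset.sum_congr rfl fun e _ => by ring
    have e2 : (∑ e, (σ e / S) * (ρ e ^ p₁) ^ (p₂ / p₁)) = S⁻¹ * pEnergy σ p₂ ρ := by
      rw [pEnergy, Finset.mul_sum]
      refine Finset.sum_congr rfl fun e _ => ?_
      rw [← Real.rpow_mul (hρ.1 e), show p₁ * (p₂ / p₁) = p₂ by field_simp]
      ring
    calc (S⁻¹ * pModulus N σ p₁) ^ (p₂ / p₁)
        ≤ (S⁻¹ * pEnergy σ p₁ ρ) ^ (p₂ / p₁) := step1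
      _ = (∑ e, (σ e / S) * ρ e ^ p₁) ^ (p₂ / p₁) := by rw [e1]
      _ ≤ ∑ e, (σ e / S) * (ρ e ^ p₁) ^ (p₂ / p₁) := jensen
      _ = S⁻¹ * pEnergy σ p₂ ρ := e2
  -- pass to the infimum
  have h3 : S * ((S⁻¹ * pModulus N σ p₁) ^ (p₂ / p₁)) ≤ pModulus N σ p₂ := by
    refine le_csInf (hsetne p₂) ?_
    rintro x ⟨ρ, hρ, rfl⟩
    have := mul_le_mul_of_nonneg_left (key ρ hρ) hS.le
    rwa [← mul_assoc, mul_inv_cancel₀ hS.ne', one_mul] at this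
  have h4 : (S⁻¹ * pModulus N σ p₁) ^ (p₂ / p₁) ≤ S⁻¹ * pModulus N σ p₂ := by
    have := mul_le_mul_of_nonneg_left h3 (inv_nonneg.mpr hS.le)
    rwa [← mul_assoc, inv_mul_cancel₀ hS.ne', one_mul] at this
  have h5 : ((S⁻¹ * pModulus N σ p₁) ^ (p₂ / p₁)) ^ (1 / p₂) ≤
      (S⁻¹ * pModulus N σ p₂) ^ (1 / p₂) :=
    Real.rpow_le_rpow (Real.rpow_nonneg hc _) h4 (by positivity)
  calc (S⁻¹ * pModulus N σ p₁) ^ (1 / p₁)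
      = ((S⁻¹ * pModulus N σ p₁) ^ (p₂ / p₁)) ^ (1 / p₂) := by
        rw [← Real.rpow_mul hc]
        congr 1
        field_simp
    _ ≤ (S⁻¹ * pModulus N σ p₂) ^ (1 / p₂) := h5
end
end

section
/- For fixed p ∈ (1,∞), the function F(σ) = Mod_{p,σ}(Γ) is differentiable in each weight, with ∂F/∂σ(e) = ρ*_σ(e)^p for every e ∈ E, where ρ*_σ is the unique optimal density for Mod_{p,σ}(Γ). Precisely: for each e ∈ E, the real function x ↦ Mod_{p, σ[e↦x]}(Γ) (the modulus with the weight of edge e replaced by x, others unchanged) has derivative ρ*_σ(e)^p at x = σ(e). -/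
open Finset

noncomputable section

namespace ModAux

variable {E Γ : Type*} [Fintype E] [Fintype Γ]

lemma pEnergy_nonneg {σ : E → ℝ} (hσ : ∀ e, 0 ≤ σ e) (p : ℝ) {ρ : E → ℝ}
    (hρ : ∀ e, 0 ≤ ρ e) : 0 ≤ pEnergy σ p ρ :=
  Finset.sum_nonneg fun e _ => mul_nonneg (hσ e) (Real.rpow_nonneg (hρ e) p)

lemma continuous_pEnergy (σ : E → ℝ) {p : ℝ} (hp : 0 < p) :
    Continuous (pEnergy σ p) := by
  refine continuous_finset_sum _ fun e _ => Continuous.mul continuous_const ?_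
  exact (continuous_iff_continuousAt.mpr fun _ =>
    Real.continuousAt_rpow_const _ _ (Or.inr hp.le)).comp (continuous_apply e)

lemma continuous_rpow_const {p : ℝ} (hp : 0 < p) : Continuous (fun x : ℝ => x ^ p) :=
  continuous_iff_continuousAt.mpr fun _ => Real.continuousAt_rpow_const _ _ (Or.inr hp.le)

lemma bddBelow_energies (N : Γ → E → ℝ) {σ : E → ℝ} (hσ : ∀ e, 0 ≤ σ e) (p : ℝ) :
    BddBelow {x | ∃ ρ : E → ℝ, IsAdmissible N ρ ∧ x = pEnergy σ p ρ} := by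
  refine ⟨0, fun x hx => ?_⟩
  obtain ⟨ρ, hρ, rfl⟩ := hx
  exact pEnergy_nonneg hσ p hρ.1

lemma pModulus_le (N : Γ → E → ℝ) {σ : E → ℝ} (hσ : ∀ e, 0 ≤ σ e) (p : ℝ) {ρ : E → ℝ}
    (h : IsAdmissible N ρ) : pModulus N σ p ≤ pEnergy σ p ρ :=
  csInf_le (bddBelow_energies N hσ p) ⟨ρ, h, rfl⟩

lemma coord_bound {σ : E → ℝ} {m : ℝ} (hm : 0 < m) (hσ : ∀ e, m ≤ σ e)
    {p : ℝ} (hp : 0 < p) {ρ : E → ℝ} (hρ : ∀ e, 0 ≤ ρ e) {C : ℝ}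
    (hE : pEnergy σ p ρ ≤ C) (e : E) : ρ e ≤ (C / m) ^ p⁻¹ := by
  have h1 : σ e * ρ e ^ p ≤ pEnergy σ p ρ := by
    refine Finset.single_le_sum (f := fun e' => σ e' * ρ e' ^ p) ?_ (Finset.mem_univ e)
    exact fun e' _ => mul_nonneg ((hm.le.trans (hσ e'))) (Real.rpow_nonneg (hρ e') p)
  have h2 : ρ e ^ p ≤ C / m := by
    rw [le_div_iff₀ hm]
    calc ρ e ^ p * m ≤ ρ e ^ p * σ e :=
          mul_le_mul_of_nonneg_left (hσ e) (Real.rpow_nonneg (hρ e) p)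
      _ ≤ C := by rw [mul_comm]; exact h1.trans hE
  calc ρ e = (ρ e ^ p) ^ p⁻¹ := by rw [Real.rpow_rpow_inv (hρ e) hp.ne']
    _ ≤ (C / m) ^ p⁻¹ := Real.rpow_le_rpow (Real.rpow_nonneg (hρ e) p) h2 (by positivity)

/-- The admissible-and-bounded-energy set is closed. -/
lemma isClosed_S (N : Γ → E → ℝ) (σ : E → ℝ) {p : ℝ} (hp : 0 < p) (C : ℝ) :
    IsClosed {ρ : E → ℝ | IsAdmissible N ρ ∧ pEnergy σ p ρ ≤ C} := by
  have h1 : IsClosed {ρ : E → ℝ | ∀ e, 0 ≤ ρ e} := by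
    rw [Set.setOf_forall]
    exact isClosed_iInter fun e => isClosed_le continuous_const (continuous_apply e)
  have h2 : IsClosed {ρ : E → ℝ | ∀ γ : Γ, 1 ≤ ∑ e, N γ e * ρ e} := by
    rw [Set.setOf_forall]
    refine isClosed_iInter fun γ => isClosed_le continuous_const ?_
    exact continuous_finset_sum _ fun e _ => continuous_const.mul (continuous_apply e)
  have h3 : IsClosed {ρ : E → ℝ | pEnergy σ p ρ ≤ C} :=
    isClosed_le (continuous_pEnergy σ hp) continuous_const
  have : {ρ : E → ℝ | IsAdmissible N ρ ∧ pEnergy σ p ρ ≤ C}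
      = ({ρ : E → ℝ | ∀ e, 0 ≤ ρ e} ∩ {ρ : E → ℝ | ∀ γ : Γ, 1 ≤ ∑ e, N γ e * ρ e})
        ∩ {ρ : E → ℝ | pEnergy σ p ρ ≤ C} := by
    ext ρ; simp [IsAdmissible, Set.mem_setOf_eq, and_assoc]
  rw [this]
  exact ((h1.inter h2).inter h3)

/-- Existence of an energy minimizer when all weights are positive. -/
lemma exists_min [Nonempty E] (N : Γ → E → ℝ) {σ : E → ℝ} (hσ : ∀ e, 0 < σ e)
    {p : ℝ} (hp : 0 < p) {ρ0 : E → ℝ} (h0 : IsAdmissible N ρ0) :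
    ∃ ρ : E → ℝ, IsAdmissible N ρ ∧ pEnergy σ p ρ = pModulus N σ p := by
  set C := pEnergy σ p ρ0 with hC
  set m := Finset.univ.inf' Finset.univ_nonempty σ with hm
  have hm0 : 0 < m := by
    rw [hm, Finset.lt_inf'_iff]
    exact fun e _ => hσ e
  have hmle : ∀ e, m ≤ σ e := fun e => Finset.inf'_le σ (Finset.mem_univ e)
  set M : ℝ := (C / m) ^ p⁻¹ with hM
  set S := {ρ : E → ℝ | IsAdmissible N ρ ∧ pEnergy σ p ρ ≤ C} with hS
  have hsub : S ⊆ Set.Icc (0 : E → ℝ) (fun _ => M) := by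
    intro ρ hρ
    constructor
    · intro e; exact hρ.1.1 e
    · intro e; exact coord_bound hm0 hmle hp hρ.1.1 hρ.2 e
  have hScpt : IsCompact S :=
    IsCompact.of_isClosed_subset isCompact_Icc (isClosed_S N σ hp C) hsub
  have hSne : S.Nonempty := ⟨ρ0, h0, le_refl _⟩
  obtain ⟨ρmin, hρminS, hmin⟩ :=
    hScpt.exists_isMinOn hSne (continuous_pEnergy σ hp).continuousOn
  refine ⟨ρmin, hρminS.1, le_antisymm ?_ (pModulus_le N (fun e => (hσ e).le) p hρminS.1)⟩
  refine le_csInf ⟨C, ρ0, h0, rfl⟩ ?_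
  rintro x ⟨ρ, hρ, rfl⟩
  by_cases h : pEnergy σ p ρ ≤ C
  · exact hmin ⟨hρ, h⟩
  · exact (hmin ⟨h0, le_refl _⟩).trans (not_le.mp h).le

/-- Uniqueness of the minimizer, by strict convexity of `t ↦ t ^ p` for `p > 1`. -/
lemma min_unique (N : Γ → E → ℝ) {σ : E → ℝ} (hσ : ∀ e, 0 < σ e)
    {p : ℝ} (hp : 1 < p) {ρ1 ρ2 : E → ℝ}
    (h1 : IsAdmissible N ρ1) (h2 : IsAdmissible N ρ2)
    (e1 : pEnergy σ p ρ1 = pModulus N σ p) (e2 : pEnergy σ p ρ2 = pModulus N σ p) :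
    ρ1 = ρ2 := by
  by_contra hne
  obtain ⟨e0, he0⟩ : ∃ e0, ρ1 e0 ≠ ρ2 e0 := Function.ne_iff.mp hne
  set τ : E → ℝ := fun e => (ρ1 e + ρ2 e) / 2 with hτ
  have hτadm : IsAdmissible N τ := by
    constructor
    · intro e; have := h1.1 e; have := h2.1 e; simp only [hτ]; linarith
    · intro γ
      have key : ∑ e, N γ e * τ e
          = (∑ e, N γ e * ρ1 e) / 2 + (∑ e, N γ e * ρ2 e) / 2 := by
        rw [← add_div, ← Finset.sum_add_distrib, Finset.sum_div]
        refine Finset.sum_congr rfl fun e _ => by simp only [hτ]; ring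
      have := h1.2 γ; have := h2.2 γ
      rw [key]; linarith
  have hconv : ∀ e, σ e * τ e ^ p ≤ σ e * ((ρ1 e ^ p + ρ2 e ^ p) / 2) := by
    intro e
    refine mul_le_mul_of_nonneg_left ?_ (hσ e).le
    have := (strictConvexOn_rpow hp).convexOn.2 (Set.mem_Ici.mpr (h1.1 e))
      (Set.mem_Ici.mpr (h2.1 e)) (by norm_num : (0:ℝ) ≤ 1/2) (by norm_num : (0:ℝ) ≤ 1/2)
      (by norm_num)
    simp only [smul_eq_mul] at this
    calc τ e ^ p = ((1:ℝ)/2 * ρ1 e + 1/2 * ρ2 e) ^ p := by rw [hτ]; ring_nf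
      _ ≤ 1/2 * ρ1 e ^ p + 1/2 * ρ2 e ^ p := this
      _ = (ρ1 e ^ p + ρ2 e ^ p) / 2 := by ring
  have hstrict : σ e0 * τ e0 ^ p < σ e0 * ((ρ1 e0 ^ p + ρ2 e0 ^ p) / 2) := by
    refine mul_lt_mul_of_pos_left ?_ (hσ e0)
    have := (strictConvexOn_rpow hp).2 (Set.mem_Ici.mpr (h1.1 e0))
      (Set.mem_Ici.mpr (h2.1 e0)) he0 (by norm_num : (0:ℝ) < 1/2)
      (by norm_num : (0:ℝ) < 1/2) (by norm_num)
    simp only [smul_eq_mul] at this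
    calc τ e0 ^ p = ((1:ℝ)/2 * ρ1 e0 + 1/2 * ρ2 e0) ^ p := by rw [hτ]; ring_nf
      _ < 1/2 * ρ1 e0 ^ p + 1/2 * ρ2 e0 ^ p := this
      _ = (ρ1 e0 ^ p + ρ2 e0 ^ p) / 2 := by ring
  have hsum : pEnergy σ p τ < ∑ e, σ e * ((ρ1 e ^ p + ρ2 e ^ p) / 2) :=
    Finset.sum_lt_sum (fun e _ => hconv e) ⟨e0, Finset.mem_univ e0, hstrict⟩
  have heq : ∑ e, σ e * ((ρ1 e ^ p + ρ2 e ^ p) / 2)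
      = (pEnergy σ p ρ1 + pEnergy σ p ρ2) / 2 := by
    simp only [pEnergy, ← Finset.sum_add_distrib]
    rw [Finset.sum_div]
    exact Finset.sum_congr rfl fun e _ => by ring
  have hle : pModulus N σ p ≤ pEnergy σ p τ := pModulus_le N (fun e => (hσ e).le) p hτadm
  rw [heq] at hsum
  rw [e1, e2] at hsum
  linarith

/-- Energy after updating one weight. -/
lemma pEnergy_update [DecidableEq E] (σ : E → ℝ) (e : E) (x p : ℝ) (ρ : E → ℝ) :
    pEnergy (Function.update σ e x) p ρ = pEnergy σ p ρ + (x - σ e) * ρ e ^ p := by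
  have key : ∀ e', Function.update σ e x e' * ρ e' ^ p
      = σ e' * ρ e' ^ p + (if e' = e then (x - σ e) * ρ e ^ p else 0) := by
    intro e'
    by_cases h : e' = e
    · subst h; rw [Function.update_self, if_pos rfl]; ring
    · simp [Function.update_of_ne h, h]
  simp only [pEnergy, key, Finset.sum_add_distrib, Finset.sum_ite_eq' Finset.univ e,
    Finset.mem_univ, if_true]

end ModAux

/-- for fixed `p ∈ (1,∞)`, `F(σ) = Mod_{p,σ}(Γ)` is differentiable in each
weight, with `∂F/∂σ(e) = ρ*_σ(e)^p`. -/
theorem modulus_hasDerivAt_sigma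
    {E Γ : Type*} [Fintype E] [Fintype Γ] [Nonempty E] [Nonempty Γ] [DecidableEq E]
    (N : Γ → E → ℝ) (hN : ∀ γ e, 0 ≤ N γ e) (hrow : ∀ γ, ∃ e, 0 < N γ e)
    (p : ℝ) (hp : 1 < p)
    (σ : E → ℝ) (hσ : ∀ e, 0 < σ e)
    (ρstar : E → ℝ) (hadm : IsAdmissible N ρstar)
    (hopt : pEnergy σ p ρstar = pModulus N σ p)
    (e : E) :
    HasDerivAt (fun x : ℝ => pModulus N (Function.update σ e x) p)
      (ρstar e ^ p) (σ e) := by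
  classical
  have hp0 : (0:ℝ) < p := lt_trans one_pos hp
  set x₀ : ℝ := σ e with hx₀def
  have hx₀ : 0 < x₀ := hσ e
  set F : ℝ → ℝ := fun x => pModulus N (Function.update σ e x) p with hF
  have hupd_self : Function.update σ e x₀ = σ := Function.update_eq_self e σ
  have hFx₀ : F x₀ = pEnergy σ p ρstar := by
    simp only [hF, hupd_self, hopt]
  -- positivity of the updated weights
  have hσx : ∀ x : ℝ, 0 < x → ∀ e', 0 < Function.update σ e x e' := by
    intro x hx e'
    by_cases h : e' = e
    · subst h; simpa using hx
    · rw [Function.update_of_ne h]; exact hσ e'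
  -- selection of minimizers
  have hsel : ∀ x : ℝ, 0 < x → ∃ ρ : E → ℝ, IsAdmissible N ρ ∧
      pEnergy (Function.update σ e x) p ρ = pModulus N (Function.update σ e x) p :=
    fun x hx => ModAux.exists_min N (hσx x hx) hp0 hadm
  choose! ρsel hseladm hselopt using hsel
  set g : ℝ → ℝ := fun x => ρsel x e ^ p with hg
  -- the two key inequalities
  have upper : ∀ x : ℝ, 0 < x → F x ≤ F x₀ + (x - x₀) * ρstar e ^ p := by
    intro x hx
    have h1 : F x ≤ pEnergy (Function.update σ e x) p ρstar :=
      ModAux.pModulus_le N (fun e' => (hσx x hx e').le) p hadm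
    rw [ModAux.pEnergy_update] at h1
    rw [hFx₀]
    linarith
  have lower : ∀ x : ℝ, 0 < x → F x₀ + (x - x₀) * g x ≤ F x := by
    intro x hx
    have h1 : F x₀ ≤ pEnergy σ p (ρsel x) := by
      rw [hFx₀, hopt]
      exact ModAux.pModulus_le N (fun e' => (hσ e').le) p (hseladm x hx)
    have h2 := ModAux.pEnergy_update σ e x p (ρsel x)
    have h3 := hselopt x hx
    rw [h2] at h3
    have h4 : F x = pEnergy σ p (ρsel x) + (x - x₀) * g x := h3.symm
    linarith
  have hgnn : ∀ x : ℝ, 0 < x → 0 ≤ g x := fun x hx =>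
    Real.rpow_nonneg ((hseladm x hx).1 e) p
  -- uniform bounds on an interval around x₀
  set I : Set ℝ := Set.Ioo (x₀ / 2) (2 * x₀) with hI
  have hIpos : ∀ x ∈ I, 0 < x := fun x hx => lt_trans (by positivity) hx.1
  set m : ℝ := min (Finset.univ.inf' Finset.univ_nonempty σ) (x₀ / 2) with hm
  have hm0 : 0 < m := by
    rw [hm]
    refine lt_min ?_ (by positivity)
    rw [Finset.lt_inf'_iff]
    exact fun e' _ => hσ e'
  set C : ℝ := pEnergy σ p ρstar + x₀ * ρstar e ^ p with hCdef
  have hρsnn : 0 ≤ ρstar e ^ p := Real.rpow_nonneg (hadm.1 e) p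
  have hC0 : 0 ≤ C := by
    have := ModAux.pEnergy_nonneg (fun e' => (hσ e').le) p hadm.1
    positivity
  set M : ℝ := (C / m) ^ p⁻¹ with hM
  have hM0 : 0 ≤ M := Real.rpow_nonneg (by positivity) _
  have hbound : ∀ x ∈ I, ∀ e', ρsel x e' ≤ M := by
    intro x hx e'
    have hx0 : 0 < x := hIpos x hx
    have hmle : ∀ e', m ≤ Function.update σ e x e' := by
      intro e''
      by_cases h : e'' = e
      · subst h; rw [Function.update_self]
        exact (min_le_right _ _).trans hx.1.le
      · rw [Function.update_of_ne h]
        exact (min_le_left _ _).trans (Finset.inf'_le σ (Finset.mem_univ _))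
    have hE : pEnergy (Function.update σ e x) p (ρsel x) ≤ C := by
      rw [hselopt x hx0]
      have h1 : pModulus N (Function.update σ e x) p
          ≤ pEnergy (Function.update σ e x) p ρstar :=
        ModAux.pModulus_le N (fun e'' => (hσx x hx0 e'').le) p hadm
      rw [ModAux.pEnergy_update] at h1
      have h2 : (x - σ e) * ρstar e ^ p ≤ x₀ * ρstar e ^ p := by
        apply mul_le_mul_of_nonneg_right _ hρsnn
        have := hx.2; rw [← hx₀def]; linarith
      rw [hCdef]; linarith
    exact ModAux.coord_bound hm0 hmle hp0 (hseladm x hx0).1 hE e'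
  set B : ℝ := M ^ p with hB
  have hB0 : 0 ≤ B := Real.rpow_nonneg hM0 p
  have hgB : ∀ x ∈ I, g x ≤ B :=
    fun x hx => Real.rpow_le_rpow ((hseladm x (hIpos x hx)).1 e) (hbound x hx e) hp0.le
  set D : ℝ := B + ρstar e ^ p with hD
  have hD0 : 0 ≤ D := by positivity
  -- continuity estimate for F on I
  have hFdist : ∀ x ∈ I, |F x - F x₀| ≤ |x - x₀| * D := by
    intro x hx
    have hx0 : 0 < x := hIpos x hx
    have hup := upper x hx0
    have hlo := lower x hx0
    have habs1 : (x - x₀) * ρstar e ^ p ≤ |x - x₀| * D := by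
      calc (x - x₀) * ρstar e ^ p ≤ |x - x₀| * ρstar e ^ p :=
            mul_le_mul_of_nonneg_right (le_abs_self _) hρsnn
        _ ≤ |x - x₀| * D := by
            apply mul_le_mul_of_nonneg_left _ (abs_nonneg _)
            rw [hD]; linarith
    have habs2 : -(|x - x₀| * D) ≤ (x - x₀) * g x := by
      have h1 : |(x - x₀) * g x| ≤ |x - x₀| * D := by
        rw [abs_mul]
        apply mul_le_mul_of_nonneg_left _ (abs_nonneg _)
        rw [abs_of_nonneg (hgnn x hx0)]
        have := hgB x hx
        rw [hD]; linarith
      linarith [neg_abs_le ((x - x₀) * g x)]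
    rw [abs_le]
    constructor <;> linarith
  -- the key: continuity of the selected minimizer at x₀, via subsequences
  have hgt : Filter.Tendsto g (nhds x₀) (nhds (ρstar e ^ p)) := by
    refine Filter.tendsto_of_subseq_tendsto fun ns hns => ?_
    have hIo : I ∈ nhds x₀ := Ioo_mem_nhds (by linarith) (by linarith)
    have hev : ∀ᶠ n in Filter.atTop, ns n ∈ I := hns.eventually_mem hIo
    rw [Filter.eventually_atTop] at hev
    obtain ⟨n₀, hn₀⟩ := hev
    set ys : ℕ → ℝ := fun n => ns (n + n₀) with hys
    have hysmem : ∀ n, ys n ∈ I := fun n => hn₀ _ (Nat.le_add_left n₀ n)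
    have hyspos : ∀ n, 0 < ys n := fun n => hIpos _ (hysmem n)
    have hyst : Filter.Tendsto ys Filter.atTop (nhds x₀) :=
      hns.comp (Filter.tendsto_add_atTop_nat n₀)
    -- extract a convergent subsequence of the minimizers
    set K : Set (E → ℝ) := Set.Icc (0 : E → ℝ) (fun _ => M) with hK
    have hKb : Bornology.IsBounded K := isCompact_Icc.isBounded
    have hmemK : ∀ n, ρsel (ys n) ∈ K := by
      intro n
      constructor
      · intro e'; exact (hseladm _ (hyspos n)).1 e'
      · intro e'; exact hbound _ (hysmem n) e'
    obtain ⟨a, _, φ, hφ, hlim⟩ := tendsto_subseq_of_bounded hKb hmemK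
    have hcoord : ∀ e', Filter.Tendsto (fun k => ρsel (ys (φ k)) e')
        Filter.atTop (nhds (a e')) :=
      fun e' => ((continuous_apply e').tendsto a).comp hlim
    have hysφ : Filter.Tendsto (fun k => ys (φ k)) Filter.atTop (nhds x₀) :=
      hyst.comp hφ.tendsto_atTop
    -- the limit is admissible
    have haadm : IsAdmissible N a := by
      constructor
      · intro e'
        exact ge_of_tendsto' (hcoord e') fun k => (hseladm _ (hyspos (φ k))).1 e'
      · intro γ
        have hTs : Filter.Tendsto (fun k => ∑ e', N γ e' * ρsel (ys (φ k)) e')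
            Filter.atTop (nhds (∑ e', N γ e' * a e')) :=
          tendsto_finset_sum _ fun e' _ => tendsto_const_nhds.mul (hcoord e')
        exact ge_of_tendsto' hTs fun k => (hseladm _ (hyspos (φ k))).2 γ
    -- F values along the subsequence converge to F x₀
    have hFlim : Filter.Tendsto (fun k => F (ys (φ k))) Filter.atTop (nhds (F x₀)) := by
      rw [tendsto_iff_dist_tendsto_zero]
      have hb : ∀ k, dist (F (ys (φ k))) (F x₀) ≤ |ys (φ k) - x₀| * D := by
        intro k
        rw [Real.dist_eq]
        exact hFdist _ (hysmem (φ k))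
      have h0 : Filter.Tendsto (fun k => |ys (φ k) - x₀| * D) Filter.atTop
          (nhds (|x₀ - x₀| * D)) := ((hysφ.sub_const x₀).abs).mul_const D
      rw [sub_self, abs_zero, zero_mul] at h0
      exact squeeze_zero (fun k => dist_nonneg) hb h0
    -- the g-values along the subsequence converge to (a e)^p
    have hge : Filter.Tendsto (fun k => g (ys (φ k))) Filter.atTop (nhds (a e ^ p)) :=
      ((ModAux.continuous_rpow_const hp0).tendsto (a e)).comp (hcoord e)
    -- energy of a equals the modulus
    have hE1 : Filter.Tendsto (fun k => pEnergy σ p (ρsel (ys (φ k)))) Filter.atTop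
        (nhds (pEnergy σ p a)) :=
      ((ModAux.continuous_pEnergy σ hp0).tendsto a).comp hlim
    have hid : ∀ k, pEnergy σ p (ρsel (ys (φ k)))
        = F (ys (φ k)) - (ys (φ k) - x₀) * g (ys (φ k)) := by
      intro k
      have h2 := ModAux.pEnergy_update σ e (ys (φ k)) p (ρsel (ys (φ k)))
      have h3 := hselopt _ (hyspos (φ k))
      rw [h2] at h3
      have : F (ys (φ k)) = pEnergy σ p (ρsel (ys (φ k))) + (ys (φ k) - x₀) * g (ys (φ k)) :=
        h3.symm
      linarith
    have hprod : Filter.Tendsto (fun k => (ys (φ k) - x₀) * g (ys (φ k))) Filter.atTop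
        (nhds ((x₀ - x₀) * (a e ^ p))) := (hysφ.sub_const x₀).mul hge
    rw [sub_self, zero_mul] at hprod
    have hRlim : Filter.Tendsto (fun k => F (ys (φ k)) - (ys (φ k) - x₀) * g (ys (φ k)))
        Filter.atTop (nhds (F x₀ - 0)) := hFlim.sub hprod
    rw [sub_zero] at hRlim
    have hE2 : Filter.Tendsto (fun k => pEnergy σ p (ρsel (ys (φ k)))) Filter.atTop
        (nhds (F x₀)) := by
      have : (fun k => pEnergy σ p (ρsel (ys (φ k))))
          = fun k => F (ys (φ k)) - (ys (φ k) - x₀) * g (ys (φ k)) := funext hid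
      rw [this]; exact hRlim
    have hEa : pEnergy σ p a = pModulus N σ p := by
      have h1 : pEnergy σ p a = F x₀ := tendsto_nhds_unique hE1 hE2
      rw [h1, hF]
      simp only [hupd_self]
    have haρ : a = ρstar := ModAux.min_unique N hσ hp haadm hadm hEa hopt
    refine ⟨fun n => φ n + n₀, ?_⟩
    have : (fun n => g (ns (φ n + n₀))) = fun n => g (ys (φ n)) := rfl
    rw [this]
    rw [haρ] at hge
    exact hge
  -- conclude via the slope characterization
  rw [hasDerivAt_iff_tendsto_slope]
  have hslope : ∀ᶠ x in nhdsWithin x₀ {x₀}ᶜ,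
      dist (slope F x₀ x) (ρstar e ^ p) ≤ |g x - ρstar e ^ p| := by
    have hIo : I ∈ nhds x₀ := Ioo_mem_nhds (by linarith) (by linarith)
    have h1 : ∀ᶠ x in nhdsWithin x₀ {x₀}ᶜ, x ∈ I :=
      Filter.eventually_of_mem (mem_nhdsWithin_of_mem_nhds hIo) fun x hx => hx
    have h2 : ∀ᶠ x in nhdsWithin x₀ {x₀}ᶜ, x ≠ x₀ :=
      Filter.eventually_of_mem self_mem_nhdsWithin fun x hx => hx
    filter_upwards [h1, h2] with x hxI hxne
    have hx0 : 0 < x := hIpos x hxI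
    have hup := upper x hx0
    have hlo := lower x hx0
    rw [Real.dist_eq, slope_def_field]
    rcases lt_or_gt_of_ne hxne with h | h
    · -- x < x₀
      have hc : x - x₀ < 0 := by linarith
      have hA : ρstar e ^ p ≤ (F x - F x₀) / (x - x₀) := by
        rw [le_div_iff_of_neg hc]
        nlinarith
      have hBB : (F x - F x₀) / (x - x₀) ≤ g x := by
        rw [div_le_iff_of_neg hc]
        nlinarith
      calc |(F x - F x₀) / (x - x₀) - ρstar e ^ p|
          = (F x - F x₀) / (x - x₀) - ρstar e ^ p := abs_of_nonneg (by linarith)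
        _ ≤ g x - ρstar e ^ p := by linarith
        _ ≤ |g x - ρstar e ^ p| := le_abs_self _
    · -- x₀ < x
      have hc : 0 < x - x₀ := by linarith
      have hA : (F x - F x₀) / (x - x₀) ≤ ρstar e ^ p := by
        rw [div_le_iff₀ hc]
        nlinarith
      have hBB : g x ≤ (F x - F x₀) / (x - x₀) := by
        rw [le_div_iff₀ hc]
        nlinarith
      calc |(F x - F x₀) / (x - x₀) - ρstar e ^ p|
          = -((F x - F x₀) / (x - x₀) - ρstar e ^ p) := abs_of_nonpos (by linarith)
        _ ≤ -(g x - ρstar e ^ p) := by linarith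
        _ ≤ |g x - ρstar e ^ p| := neg_le_abs _
  have habs : Filter.Tendsto (fun x => |g x - ρstar e ^ p|) (nhdsWithin x₀ {x₀}ᶜ)
      (nhds 0) := by
    have h : Filter.Tendsto (fun x => |g x - ρstar e ^ p|) (nhdsWithin x₀ {x₀}ᶜ)
        (nhds |ρstar e ^ p - ρstar e ^ p|) :=
      ((hgt.mono_left nhdsWithin_le_nhds).sub_const (ρstar e ^ p)).abs
    rw [sub_self, abs_zero] at h
    exact h
  rw [tendsto_iff_dist_tendsto_zero]
  exact squeeze_zero' (Filter.Eventually.of_forall fun x => dist_nonneg) hslope habs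
end
end

section
/- Fix p ∈ (1,∞). (i) If σ₁(e) ≤ σ₂(e) for all e ∈ E, then Mod_{p,σ₁}(Γ) ≤ Mod_{p,σ₂}(Γ). (ii) If moreover σ₁ and σ₂ agree at every edge except possibly a single edge e₀, where σ₁(e₀) ≤ σ₂(e₀), then the unique optimal densities satisfy ρ*_{σ₂}(e₀) ≤ ρ*_{σ₁}(e₀): increasing the weight of a single edge cannot increase the optimal density on that edge. -/
open Finset

noncomputable section

section aux

variable {E Γ : Type*} [Fintype E] [Fintype Γ] [Nonempty E] [Nonempty Γ]

lemma aux_bddBelow (N : Γ → E → ℝ) (σ : E → ℝ) (hσ : ∀ e, 0 < σ e) (p : ℝ) :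
    BddBelow {x | ∃ ρ : E → ℝ, IsAdmissible N ρ ∧ x = pEnergy σ p ρ} := by
  refine ⟨0, ?_⟩
  rintro x ⟨ρ, hρ, rfl⟩
  exact Finset.sum_nonneg fun e _ => mul_nonneg (hσ e).le (Real.rpow_nonneg (hρ.1 e) p)

lemma aux_nonempty (N : Γ → E → ℝ) (hN : ∀ γ e, 0 ≤ N γ e) (hrow : ∀ γ, ∃ e, 0 < N γ e)
    (σ : E → ℝ) (p : ℝ) :
    {x | ∃ ρ : E → ℝ, IsAdmissible N ρ ∧ x = pEnergy σ p ρ}.Nonempty := by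
  set m : ℝ := Finset.univ.inf' Finset.univ_nonempty (fun γ => ∑ e, N γ e) with hm
  have hm0 : 0 < m := by
    rw [hm, Finset.lt_inf'_iff]
    intro γ _
    obtain ⟨e, he⟩ := hrow γ
    exact Finset.sum_pos' (fun e _ => hN γ e) ⟨e, Finset.mem_univ e, he⟩
  refine ⟨pEnergy σ p (fun _ => m⁻¹), fun _ => m⁻¹, ⟨fun e => (inv_pos.mpr hm0).le, ?_⟩, rfl⟩
  intro γ
  have h1 : m ≤ ∑ e, N γ e := Finset.inf'_le _ (Finset.mem_univ γ)
  have : (1 : ℝ) = m * m⁻¹ := (mul_inv_cancel₀ hm0.ne').symm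
  rw [this, ← Finset.sum_mul]
  exact mul_le_mul_of_nonneg_right h1 (inv_pos.mpr hm0).le

lemma aux_modulus_le (N : Γ → E → ℝ) (σ : E → ℝ) (hσ : ∀ e, 0 < σ e) (p : ℝ)
    (ρ : E → ℝ) (hρ : IsAdmissible N ρ) : pModulus N σ p ≤ pEnergy σ p ρ :=
  csInf_le (aux_bddBelow N σ hσ p) ⟨ρ, hρ, rfl⟩

end aux

/-- (i) the modulus is nondecreasing in the weights; (ii) increasing the weight
of a single edge cannot increase the optimal density on that edge. -/
theorem modulus_monotone_in_sigma
    {E Γ : Type*} [Fintype E] [Fintype Γ] [Nonempty E] [Nonempty Γ]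
    (N : Γ → E → ℝ) (hN : ∀ γ e, 0 ≤ N γ e) (hrow : ∀ γ, ∃ e, 0 < N γ e)
    (p : ℝ) (hp : 1 < p)
    (σ₁ σ₂ : E → ℝ) (hσ₁ : ∀ e, 0 < σ₁ e) (hσ₂ : ∀ e, 0 < σ₂ e) :
    ((∀ e, σ₁ e ≤ σ₂ e) → pModulus N σ₁ p ≤ pModulus N σ₂ p) ∧
    (∀ e₀ : E, (∀ e, e ≠ e₀ → σ₁ e = σ₂ e) → σ₁ e₀ ≤ σ₂ e₀ →
      ∀ ρ₁ ρ₂ : E → ℝ,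
        IsAdmissible N ρ₁ → pEnergy σ₁ p ρ₁ = pModulus N σ₁ p →
        IsAdmissible N ρ₂ → pEnergy σ₂ p ρ₂ = pModulus N σ₂ p →
        ρ₂ e₀ ≤ ρ₁ e₀) := by
  constructor
  · -- part (i)
    intro hle
    refine le_csInf (aux_nonempty N hN hrow σ₂ p) ?_
    rintro x ⟨ρ, hρ, rfl⟩
    refine le_trans (aux_modulus_le N σ₁ hσ₁ p ρ hρ) ?_
    exact Finset.sum_le_sum fun e _ =>
      mul_le_mul_of_nonneg_right (hle e) (Real.rpow_nonneg (hρ.1 e) p)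
  · -- part (ii)
    intro e₀ hagree hle ρ₁ ρ₂ h1 he1 h2 he2
    classical
    -- energies wrt σ₂ decompose via σ₁
    have key : ∀ ρ : E → ℝ,
        pEnergy σ₂ p ρ = pEnergy σ₁ p ρ + (σ₂ e₀ - σ₁ e₀) * ρ e₀ ^ p := by
      intro ρ
      have : ∀ e ∈ Finset.univ, σ₂ e * ρ e ^ p =
          σ₁ e * ρ e ^ p + (if e = e₀ then (σ₂ e₀ - σ₁ e₀) * ρ e₀ ^ p else 0) := by
        intro e _
        by_cases h : e = e₀
        · subst h; simp; ring
        · rw [hagree e h]; simp [h]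
      unfold pEnergy
      rw [Finset.sum_congr rfl this, Finset.sum_add_distrib,
        Finset.sum_ite_eq' Finset.univ e₀ (fun _ => (σ₂ e₀ - σ₁ e₀) * ρ e₀ ^ p)]
      simp
    have hA : pEnergy σ₁ p ρ₁ ≤ pEnergy σ₁ p ρ₂ := by
      rw [he1]; exact aux_modulus_le N σ₁ hσ₁ p ρ₂ h2
    have hB : pEnergy σ₂ p ρ₂ ≤ pEnergy σ₂ p ρ₁ := by
      rw [he2]; exact aux_modulus_le N σ₂ hσ₂ p ρ₁ h1
    rw [key ρ₂, key ρ₁] at hB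
    have hDelta : (σ₂ e₀ - σ₁ e₀) * ρ₂ e₀ ^ p ≤ (σ₂ e₀ - σ₁ e₀) * ρ₁ e₀ ^ p := by
      linarith
    by_cases hΔ : σ₁ e₀ = σ₂ e₀
    · -- weights are identical; use strict convexity
      have hσeq : σ₁ = σ₂ := by
        funext e
        by_cases h : e = e₀
        · subst h; exact hΔ
        · exact hagree e h
      subst hσeq
      by_contra hcon
      push_neg at hcon
      have hne : ρ₁ e₀ ≠ ρ₂ e₀ := ne_of_lt hcon
      set ρ : E → ℝ := fun e => (ρ₁ e + ρ₂ e) / 2 with hρdef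
      have hadm : IsAdmissible N ρ := by
        constructor
        · intro e
          have := h1.1 e; have := h2.1 e
          simp only [hρdef]; linarith
        · intro γ
          have hsum : ∑ e, N γ e * ρ e
              = (∑ e, N γ e * ρ₁ e) / 2 + (∑ e, N γ e * ρ₂ e) / 2 := by
            rw [Finset.sum_div, Finset.sum_div, ← Finset.sum_add_distrib]
            refine Finset.sum_congr rfl fun e _ => by simp only [hρdef]; ring
          have := h1.2 γ; have := h2.2 γ
          rw [hsum]; linarith
      have hsc := strictConvexOn_rpow hp
      -- strict inequality of energies at the midpoint
      have hstrict : pEnergy σ₁ p ρ < (pEnergy σ₁ p ρ₁ + pEnergy σ₁ p ρ₂) / 2 := by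
        unfold pEnergy
        have hlt : ∑ e, σ₁ e * ρ e ^ p
            < ∑ e, (σ₁ e * ρ₁ e ^ p + σ₁ e * ρ₂ e ^ p) / 2 := by
          refine Finset.sum_lt_sum (fun e _ => ?_) ⟨e₀, Finset.mem_univ e₀, ?_⟩
          · by_cases h : ρ₁ e = ρ₂ e
            · have : ρ e = ρ₁ e := by simp only [hρdef, h]; ring
              rw [this, h]; exact le_of_eq (by ring)
            · have hconv := hsc.2 (Set.mem_Ici.mpr (h1.1 e)) (Set.mem_Ici.mpr (h2.1 e)) h
                (by norm_num : (0:ℝ) < 1/2) (by norm_num : (0:ℝ) < 1/2) (by norm_num)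
              simp only [smul_eq_mul] at hconv
              have : ρ e = 1/2 * ρ₁ e + 1/2 * ρ₂ e := by simp only [hρdef]; ring
              rw [this]
              have := mul_lt_mul_of_pos_left hconv (hσ₁ e)
              nlinarith [this]
          · have hconv := hsc.2 (Set.mem_Ici.mpr (h1.1 e₀)) (Set.mem_Ici.mpr (h2.1 e₀)) hne
              (by norm_num : (0:ℝ) < 1/2) (by norm_num : (0:ℝ) < 1/2) (by norm_num)
            simp only [smul_eq_mul] at hconv
            have heq : ρ e₀ = 1/2 * ρ₁ e₀ + 1/2 * ρ₂ e₀ := by simp only [hρdef]; ring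
            rw [heq]
            have := mul_lt_mul_of_pos_left hconv (hσ₁ e₀)
            nlinarith [this]
        calc ∑ e, σ₁ e * ρ e ^ p
            < ∑ e, (σ₁ e * ρ₁ e ^ p + σ₁ e * ρ₂ e ^ p) / 2 := hlt
          _ = (∑ e, σ₁ e * ρ₁ e ^ p + ∑ e, σ₁ e * ρ₂ e ^ p) / 2 := by
              rw [← Finset.sum_div, Finset.sum_add_distrib]
      have hEρ₂ : pEnergy σ₁ p ρ₂ = pModulus N σ₁ p := he2
      have hle2 : pModulus N σ₁ p ≤ pEnergy σ₁ p ρ := aux_modulus_le N σ₁ hσ₁ p ρ hadm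
      rw [he1, hEρ₂] at hstrict
      linarith
    · -- σ₂ e₀ > σ₁ e₀
      have hΔpos : 0 < σ₂ e₀ - σ₁ e₀ := by
        rcases lt_or_eq_of_le hle with h | h
        · linarith
        · exact absurd h hΔ
      have hpow : ρ₂ e₀ ^ p ≤ ρ₁ e₀ ^ p := le_of_mul_le_mul_left hDelta hΔpos
      by_contra hcon
      push_neg at hcon
      have : ρ₁ e₀ ^ p < ρ₂ e₀ ^ p :=
        Real.rpow_lt_rpow (h1.1 e₀) hcon (lt_trans one_pos hp)
      linarith
end
end

section
/- (Temporal scaling bounds.) For every p ∈ [1,∞) and every λ > 0, Mod_{p,σ}(Γ̌) / φ(λM)^p ≤ Mod^λ_{p,σ}(Γ) ≤ Mod_{p,σ}(Γ̌). Moreover, for p = ∞ (where the energy is E_{∞,σ}(ρ) = max_{e∈E} σ(e)ρ(e)), Mod_{∞,σ}(Γ̌) / φ(λM) ≤ Mod^λ_{∞,σ}(Γ) ≤ Mod_{∞,σ}(Γ̌). -/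
open Finset

noncomputable section

lemma aux_sup'_mul {E : Type*} [Fintype E] [Nonempty E] (c : ℝ) (hc : 0 ≤ c) (f : E → ℝ) :
    Finset.univ.sup' Finset.univ_nonempty (fun e => c * f e)
      = c * Finset.univ.sup' Finset.univ_nonempty f := by
  apply le_antisymm
  · apply Finset.sup'_le
    intro e he
    exact mul_le_mul_of_nonneg_left (Finset.le_sup' f he) hc
  · obtain ⟨e, he, hev⟩ := Finset.exists_mem_eq_sup' Finset.univ_nonempty f
    rw [hev]
    exact Finset.le_sup' (fun e => c * f e) he

/-- Abstract modulus comparison: if admissibility for `N1` implies that for `N2`,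
and rescaling an `N2`-admissible density by `c` makes it `N1`-admissible, then the
moduli (infima of an energy functional `En` scaling by factor `k`) compare. -/
lemma aux_modulus_bounds {E Γ : Type*} [Fintype E]
    (N1 N2 : Γ → E → ℝ) (c : ℝ)
    (h12 : ∀ ρ, IsAdmissible N1 ρ → IsAdmissible N2 ρ)
    (h21 : ∀ ρ, IsAdmissible N2 ρ → IsAdmissible N1 (fun e => c * ρ e))
    (hadm1 : ∃ ρ, IsAdmissible N1 ρ)
    (En : (E → ℝ) → ℝ) (k : ℝ) (hk : 0 < k)
    (hEnn : ∀ ρ : E → ℝ, (∀ e, 0 ≤ ρ e) → 0 ≤ En ρ)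
    (hEsc : ∀ ρ : E → ℝ, (∀ e, 0 ≤ ρ e) → En (fun e => c * ρ e) = k * En ρ) :
    sInf {x | ∃ ρ : E → ℝ, IsAdmissible N1 ρ ∧ x = En ρ} / k
        ≤ sInf {x | ∃ ρ : E → ℝ, IsAdmissible N2 ρ ∧ x = En ρ} ∧
      sInf {x | ∃ ρ : E → ℝ, IsAdmissible N2 ρ ∧ x = En ρ}
        ≤ sInf {x | ∃ ρ : E → ℝ, IsAdmissible N1 ρ ∧ x = En ρ} := by
  set S1 : Set ℝ := {x | ∃ ρ : E → ℝ, IsAdmissible N1 ρ ∧ x = En ρ}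
  set S2 : Set ℝ := {x | ∃ ρ : E → ℝ, IsAdmissible N2 ρ ∧ x = En ρ}
  have hsub : S1 ⊆ S2 := by
    rintro x ⟨ρ, hρ, rfl⟩
    exact ⟨ρ, h12 ρ hρ, rfl⟩
  have hS1ne : S1.Nonempty := by
    obtain ⟨ρ, hρ⟩ := hadm1
    exact ⟨En ρ, ρ, hρ, rfl⟩
  have hS2ne : S2.Nonempty := hS1ne.mono hsub
  have hbdd1 : BddBelow S1 := by
    refine ⟨0, ?_⟩
    rintro x ⟨ρ, hρ, rfl⟩
    exact hEnn ρ hρ.1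
  have hbdd2 : BddBelow S2 := by
    refine ⟨0, ?_⟩
    rintro x ⟨ρ, hρ, rfl⟩
    exact hEnn ρ hρ.1
  constructor
  · apply le_csInf hS2ne
    rintro x ⟨ρ, hρ, rfl⟩
    rw [div_le_iff₀ hk]
    have hmem : En (fun e => c * ρ e) ∈ S1 := ⟨fun e => c * ρ e, h21 ρ hρ, rfl⟩
    calc sInf S1 ≤ En (fun e => c * ρ e) := csInf_le hbdd1 hmem
      _ = k * En ρ := hEsc ρ hρ.1
      _ = En ρ * k := mul_comm _ _
  · exact csInf_le_csInf hbdd2 hS1ne hsub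

/-- temporal scaling bounds: with the λ-penalized usage matrix
`N_λ(γ,e) = φ(λ t(γ,e)) Ň(γ,e)` and `M` the largest availability time,
`Mod_{p,σ}(Γ̌)/φ(λM)^p ≤ Mod^λ_{p,σ}(Γ) ≤ Mod_{p,σ}(Γ̌)` for `p ∈ [1,∞)`, and
`Mod_{∞,σ}(Γ̌)/φ(λM) ≤ Mod^λ_{∞,σ}(Γ) ≤ Mod_{∞,σ}(Γ̌)`. -/
theorem temporal_scaling_bounds
    {E Γ : Type*} [Fintype E] [Fintype Γ] [Nonempty E] [Nonempty Γ]
    (Nch : Γ → E → ℝ) (hN01 : ∀ γ e, Nch γ e = 0 ∨ Nch γ e = 1)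
    (hrow : ∀ γ, ∃ e, Nch γ e = 1)
    (t : Γ → E → ℝ) (ht : ∀ γ e, Nch γ e = 1 → 0 < t γ e)
    (φ : ℝ → ℝ) (hφ0 : φ 0 = 1) (hφmono : MonotoneOn φ (Set.Ici 0))
    (σ : E → ℝ) (hσ : ∀ e, 0 < σ e)
    (lam : ℝ) (hlam : 0 < lam)
    (M : ℝ) (hM : IsGreatest {x | ∃ γ e, Nch γ e = 1 ∧ x = t γ e} M)
    (p : ℝ) (hp : 1 ≤ p) :
    (pModulus Nch σ p / φ (lam * M) ^ p ≤
        pModulus (fun γ e => φ (lam * t γ e) * Nch γ e) σ p ∧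
      pModulus (fun γ e => φ (lam * t γ e) * Nch γ e) σ p ≤ pModulus Nch σ p) ∧
    (infModulus Nch σ / φ (lam * M) ≤
        infModulus (fun γ e => φ (lam * t γ e) * Nch γ e) σ ∧
      infModulus (fun γ e => φ (lam * t γ e) * Nch γ e) σ ≤ infModulus Nch σ) := by
  set Nl : Γ → E → ℝ := fun γ e => φ (lam * t γ e) * Nch γ e with hNl
  set c : ℝ := φ (lam * M) with hc
  have hNnn : ∀ γ e, 0 ≤ Nch γ e := by
    intro γ e
    rcases hN01 γ e with h | h <;> rw [h] <;> norm_num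
  -- M is positive
  have hMpos : 0 < M := by
    obtain ⟨γ⟩ := (inferInstance : Nonempty Γ)
    obtain ⟨e, he⟩ := hrow γ
    have h1 : t γ e ≤ M := hM.2 ⟨γ, e, he, rfl⟩
    exact lt_of_lt_of_le (ht γ e he) h1
  have hlM : 0 ≤ lam * M := (mul_pos hlam hMpos).le
  have hc1 : 1 ≤ c := by
    rw [hc, ← hφ0]
    exact hφmono (Set.mem_Ici.mpr le_rfl) (Set.mem_Ici.mpr hlM) hlM
  have hc0 : 0 < c := lt_of_lt_of_le one_pos hc1
  -- pointwise bounds on the penalized matrix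
  have hφ1 : ∀ γ e, Nch γ e = 1 → 1 ≤ φ (lam * t γ e) := by
    intro γ e h
    have h0 : 0 ≤ lam * t γ e := (mul_pos hlam (ht γ e h)).le
    rw [← hφ0]
    exact hφmono (Set.mem_Ici.mpr le_rfl) (Set.mem_Ici.mpr h0) h0
  have hge1 : ∀ γ e, Nch γ e ≤ Nl γ e := by
    intro γ e
    rcases hN01 γ e with h | h
    · simp [hNl, h]
    · rw [hNl]
      simp only [h, mul_one]
      exact hφ1 γ e h
  have hlec : ∀ γ e, Nl γ e ≤ c * Nch γ e := by
    intro γ e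
    rcases hN01 γ e with h | h
    · simp [hNl, h]
    · rw [hNl]
      simp only [h, mul_one]
      have h0 : 0 ≤ lam * t γ e := (mul_pos hlam (ht γ e h)).le
      have hle : lam * t γ e ≤ lam * M :=
        mul_le_mul_of_nonneg_left (hM.2 ⟨γ, e, h, rfl⟩) hlam.le
      exact hφmono (Set.mem_Ici.mpr h0) (Set.mem_Ici.mpr hlM) hle
  -- admissibility transfers
  have h12 : ∀ ρ : E → ℝ, IsAdmissible Nch ρ → IsAdmissible Nl ρ := by
    intro ρ hρ
    refine ⟨hρ.1, fun γ => le_trans (hρ.2 γ) (Finset.sum_le_sum ?_)⟩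
    intro e _
    exact mul_le_mul_of_nonneg_right (hge1 γ e) (hρ.1 e)
  have h21 : ∀ ρ : E → ℝ, IsAdmissible Nl ρ → IsAdmissible Nch (fun e => c * ρ e) := by
    intro ρ hρ
    refine ⟨fun e => mul_nonneg hc0.le (hρ.1 e), fun γ => ?_⟩
    refine le_trans (hρ.2 γ) (Finset.sum_le_sum ?_)
    intro e _
    calc Nl γ e * ρ e ≤ c * Nch γ e * ρ e :=
          mul_le_mul_of_nonneg_right (hlec γ e) (hρ.1 e)
      _ = Nch γ e * (c * ρ e) := by ring
  have hadm1 : ∃ ρ : E → ℝ, IsAdmissible Nch ρ := by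
    refine ⟨fun _ => 1, fun _ => zero_le_one, fun γ => ?_⟩
    obtain ⟨e, he⟩ := hrow γ
    calc (1 : ℝ) = Nch γ e * 1 := by rw [he, mul_one]
      _ ≤ ∑ e', Nch γ e' * 1 :=
          Finset.single_le_sum (fun e' _ => mul_nonneg (hNnn γ e') zero_le_one)
            (Finset.mem_univ e)
  -- energy facts
  have hkp : 0 < c ^ p := Real.rpow_pos_of_pos hc0 p
  have hEnnp : ∀ ρ : E → ℝ, (∀ e, 0 ≤ ρ e) → 0 ≤ pEnergy σ p ρ := by
    intro ρ hρ
    exact Finset.sum_nonneg fun e _ =>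
      mul_nonneg (hσ e).le (Real.rpow_nonneg (hρ e) p)
  have hEscp : ∀ ρ : E → ℝ, (∀ e, 0 ≤ ρ e) →
      pEnergy σ p (fun e => c * ρ e) = c ^ p * pEnergy σ p ρ := by
    intro ρ hρ
    simp only [pEnergy]
    rw [Finset.mul_sum]
    refine Finset.sum_congr rfl fun e _ => ?_
    rw [Real.mul_rpow hc0.le (hρ e)]
    ring
  have hEnninf : ∀ ρ : E → ℝ, (∀ e, 0 ≤ ρ e) → 0 ≤ infEnergy σ ρ := by
    intro ρ hρ
    obtain ⟨e⟩ := (inferInstance : Nonempty E)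
    exact le_trans (mul_nonneg (hσ e).le (hρ e))
      (Finset.le_sup' (fun e => σ e * ρ e) (Finset.mem_univ e))
  have hEscinf : ∀ ρ : E → ℝ, (∀ e, 0 ≤ ρ e) →
      infEnergy σ (fun e => c * ρ e) = c * infEnergy σ ρ := by
    intro ρ hρ
    simp only [infEnergy]
    rw [show (fun e => σ e * (c * ρ e)) = fun e => c * (σ e * ρ e) from
      funext fun e => by ring]
    exact aux_sup'_mul c hc0.le _
  constructor
  · exact aux_modulus_bounds Nch Nl c h12 h21 hadm1 (pEnergy σ p) (c ^ p) hkp hEnnp hEscp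
  · exact aux_modulus_bounds Nch Nl c h12 h21 hadm1 (infEnergy σ) c hc0 hEnninf hEscinf
end
end

section
/- (Vanishing temporal penalty recovers static modulus.) Suppose in addition that φ is continuous at 0. Then for every p ∈ [1,∞), lim_{λ→0⁺} Mod^λ_{p,σ}(Γ) = Mod_{p,σ}(Γ̌). -/
open Finset

noncomputable section

section Aux

variable {E Γ : Type*} [Fintype E]

lemma pEnergy_nonneg (σ : E → ℝ) (hσ : ∀ e, 0 ≤ σ e) (p : ℝ) (ρ : E → ℝ)
    (hρ : ∀ e, 0 ≤ ρ e) : 0 ≤ pEnergy σ p ρ :=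
  Finset.sum_nonneg fun e _ => mul_nonneg (hσ e) (Real.rpow_nonneg (hρ e) p)

lemma bddBelow_energySet (N : Γ → E → ℝ) (σ : E → ℝ) (hσ : ∀ e, 0 ≤ σ e) (p : ℝ) :
    BddBelow {x | ∃ ρ : E → ℝ, IsAdmissible N ρ ∧ x = pEnergy σ p ρ} := by
  refine ⟨0, ?_⟩
  rintro x ⟨ρ, hρ, rfl⟩
  exact pEnergy_nonneg σ hσ p ρ hρ.1

lemma nonempty_energySet (N : Γ → E → ℝ) (hN : ∀ γ e, 0 ≤ N γ e)
    (hrow : ∀ γ, ∃ e, 1 ≤ N γ e) (σ : E → ℝ) (p : ℝ) :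
    Set.Nonempty {x | ∃ ρ : E → ℝ, IsAdmissible N ρ ∧ x = pEnergy σ p ρ} := by
  refine ⟨pEnergy σ p (fun _ => 1), fun _ => 1, ⟨fun _ => zero_le_one, fun γ => ?_⟩, rfl⟩
  obtain ⟨e0, he0⟩ := hrow γ
  calc (1 : ℝ) ≤ N γ e0 * 1 := by simpa using he0
    _ ≤ ∑ e, N γ e * 1 :=
      Finset.single_le_sum (fun e _ => mul_nonneg (hN γ e) zero_le_one) (Finset.mem_univ e0)

lemma pModulus_le_pModulus (N₁ N₂ : Γ → E → ℝ) (h12 : ∀ γ e, N₁ γ e ≤ N₂ γ e)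
    (hN₁ : ∀ γ e, 0 ≤ N₁ γ e) (hrow₁ : ∀ γ, ∃ e, 1 ≤ N₁ γ e)
    (σ : E → ℝ) (hσ : ∀ e, 0 ≤ σ e) (p : ℝ) :
    pModulus N₂ σ p ≤ pModulus N₁ σ p := by
  refine csInf_le_csInf (bddBelow_energySet N₂ σ hσ p)
    (nonempty_energySet N₁ hN₁ hrow₁ σ p) ?_
  rintro x ⟨ρ, ⟨hρ0, hρ1⟩, rfl⟩
  refine ⟨ρ, ⟨hρ0, fun γ => (hρ1 γ).trans ?_⟩, rfl⟩
  exact Finset.sum_le_sum fun e _ => mul_le_mul_of_nonneg_right (h12 γ e) (hρ0 e)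

end Aux

/-- vanishing temporal penalty recovers static modulus:
if `φ` is continuous at `0`, then `Mod^λ_{p,σ}(Γ) → Mod_{p,σ}(Γ̌)` as `λ → 0⁺`. -/
theorem temporal_modulus_tendsto_static
    {E Γ : Type*} [Fintype E] [Fintype Γ] [Nonempty E] [Nonempty Γ]
    (Nch : Γ → E → ℝ) (hN01 : ∀ γ e, Nch γ e = 0 ∨ Nch γ e = 1)
    (hrow : ∀ γ, ∃ e, Nch γ e = 1)
    (t : Γ → E → ℝ) (ht : ∀ γ e, Nch γ e = 1 → 0 < t γ e)
    (φ : ℝ → ℝ) (hφ0 : φ 0 = 1) (hφmono : MonotoneOn φ (Set.Ici 0))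
    (hφcont : ContinuousAt φ 0)
    (σ : E → ℝ) (hσ : ∀ e, 0 < σ e)
    (p : ℝ) (hp : 1 ≤ p) :
    Filter.Tendsto (fun lam : ℝ => pModulus (fun γ e => φ (lam * t γ e) * Nch γ e) σ p)
      (nhdsWithin 0 (Set.Ioi 0)) (nhds (pModulus Nch σ p)) := by
  have hσ0 : ∀ e, 0 ≤ σ e := fun e => (hσ e).le
  have hNn : ∀ γ e, 0 ≤ Nch γ e := fun γ e => by rcases hN01 γ e with h | h <;> simp [h]
  have hrow1 : ∀ γ, ∃ e, 1 ≤ Nch γ e := fun γ => (hrow γ).imp fun e h => h.ge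
  set Mod := pModulus Nch σ p with hModDef
  -- the maximum of t
  have hne : (Finset.univ : Finset (Γ × E)).Nonempty := Finset.univ_nonempty
  set T : ℝ := Finset.univ.sup' hne (fun q : Γ × E => t q.1 q.2) with hT
  have hTge : ∀ γ e, t γ e ≤ T := by
    intro γ e
    rw [hT]
    exact Finset.le_sup' (fun q : Γ × E => t q.1 q.2) (Finset.mem_univ (γ, e))
  have hTpos : 0 < T := by
    obtain ⟨γ0⟩ := (inferInstance : Nonempty Γ)
    obtain ⟨e0, he0⟩ := hrow γ0
    exact lt_of_lt_of_le (ht γ0 e0 he0) (hTge γ0 e0)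
  -- basic pointwise facts for lam > 0
  have hφge1 : ∀ {lam : ℝ}, 0 < lam → ∀ γ e, Nch γ e = 1 → 1 ≤ φ (lam * t γ e) := by
    intro lam hlam γ e he
    have h0 : (0 : ℝ) ≤ lam * t γ e := (mul_pos hlam (ht γ e he)).le
    calc (1 : ℝ) = φ 0 := hφ0.symm
      _ ≤ φ (lam * t γ e) := hφmono (Set.mem_Ici.2 le_rfl) (Set.mem_Ici.2 h0) h0
  have hφleT : ∀ {lam : ℝ}, 0 < lam → ∀ γ e, Nch γ e = 1 →
      φ (lam * t γ e) ≤ φ (lam * T) := by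
    intro lam hlam γ e he
    have h0 : (0 : ℝ) ≤ lam * t γ e := (mul_pos hlam (ht γ e he)).le
    have h1 : (0 : ℝ) ≤ lam * T := (mul_pos hlam hTpos).le
    exact hφmono (Set.mem_Ici.2 h0) (Set.mem_Ici.2 h1)
      (mul_le_mul_of_nonneg_left (hTge γ e) hlam.le)
  have hc1 : ∀ {lam : ℝ}, 0 < lam → 1 ≤ φ (lam * T) := by
    intro lam hlam
    have h1 : (0 : ℝ) ≤ lam * T := (mul_pos hlam hTpos).le
    calc (1 : ℝ) = φ 0 := hφ0.symm
      _ ≤ φ (lam * T) := hφmono (Set.mem_Ici.2 le_rfl) (Set.mem_Ici.2 h1) h1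
  -- upper bound : Mod^λ ≤ Mod for lam > 0
  have hupper : ∀ lam : ℝ, 0 < lam →
      pModulus (fun γ e => φ (lam * t γ e) * Nch γ e) σ p ≤ Mod := by
    intro lam hlam
    refine pModulus_le_pModulus Nch _ (fun γ e => ?_) hNn hrow1 σ hσ0 p
    rcases hN01 γ e with h | h
    · simp [h]
    · rw [h, mul_one]
      exact hφge1 hlam γ e h
  -- lower bound : Mod / (φ (lam*T))^p ≤ Mod^λ for lam > 0
  have hlower : ∀ lam : ℝ, 0 < lam →
      Mod / (φ (lam * T)) ^ p ≤ pModulus (fun γ e => φ (lam * t γ e) * Nch γ e) σ p := by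
    intro lam hlam
    set c : ℝ := φ (lam * T) with hcdef
    have hcpos : 0 < c := lt_of_lt_of_le one_pos (hc1 hlam)
    have hcp : (0 : ℝ) < c ^ p := Real.rpow_pos_of_pos hcpos p
    have hNLn : ∀ γ e, 0 ≤ φ (lam * t γ e) * Nch γ e := by
      intro γ e
      rcases hN01 γ e with h | h
      · simp [h]
      · rw [h, mul_one]; exact le_trans zero_le_one (hφge1 hlam γ e h)
    have hrowL : ∀ γ, ∃ e, 1 ≤ φ (lam * t γ e) * Nch γ e := by
      intro γ
      obtain ⟨e0, he0⟩ := hrow γ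
      exact ⟨e0, by rw [he0, mul_one]; exact hφge1 hlam γ e0 he0⟩
    refine le_csInf (nonempty_energySet _ hNLn hrowL σ p) ?_
    rintro x ⟨ρ, ⟨hρ0, hρ1⟩, rfl⟩
    rw [div_le_iff₀ hcp]
    -- c • ρ is admissible for Nch
    have hadm : IsAdmissible Nch (fun e => c * ρ e) := by
      refine ⟨fun e => mul_nonneg hcpos.le (hρ0 e), fun γ => ?_⟩
      refine (hρ1 γ).trans (Finset.sum_le_sum fun e _ => ?_)
      rcases hN01 γ e with h | h
      · simp [h]
      · simp only [h, mul_one, one_mul]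
        exact mul_le_mul_of_nonneg_right (hφleT hlam γ e h) (hρ0 e)
    have hE : pEnergy σ p (fun e => c * ρ e) = c ^ p * pEnergy σ p ρ := by
      simp only [pEnergy, Finset.mul_sum]
      refine Finset.sum_congr rfl fun e _ => ?_
      rw [Real.mul_rpow hcpos.le (hρ0 e)]
      ring
    calc Mod ≤ pEnergy σ p (fun e => c * ρ e) :=
          csInf_le (bddBelow_energySet Nch σ hσ0 p) ⟨_, hadm, rfl⟩
      _ = c ^ p * pEnergy σ p ρ := hE
      _ = pEnergy σ p ρ * c ^ p := mul_comm _ _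
  -- the lower bound tends to Mod
  have htlow : Filter.Tendsto (fun lam : ℝ => Mod / (φ (lam * T)) ^ p)
      (nhdsWithin 0 (Set.Ioi 0)) (nhds Mod) := by
    have h1 : Filter.Tendsto (fun lam : ℝ => lam * T) (nhdsWithin 0 (Set.Ioi 0)) (nhds 0) := by
      have hc : Continuous (fun lam : ℝ => lam * T) := continuous_id.mul continuous_const
      have := hc.tendsto 0
      simpa using this.mono_left nhdsWithin_le_nhds
    have h2 : Filter.Tendsto (fun lam : ℝ => φ (lam * T)) (nhdsWithin 0 (Set.Ioi 0))
        (nhds 1) := by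
      have := hφcont.tendsto.comp h1
      rwa [hφ0] at this
    have h3 : Filter.Tendsto (fun lam : ℝ => (φ (lam * T)) ^ p) (nhdsWithin 0 (Set.Ioi 0))
        (nhds 1) := by
      have hcont : ContinuousAt (fun x : ℝ => x ^ p) 1 :=
        Real.continuousAt_rpow_const 1 p (Or.inl one_ne_zero)
      have := hcont.tendsto.comp h2
      simpa [Real.one_rpow, Function.comp_def] using this
    have := Filter.Tendsto.div (tendsto_const_nhds (x := Mod)) h3 one_ne_zero
    simpa [Pi.div_def] using this
  -- squeeze
  have hmem : ∀ᶠ lam in nhdsWithin (0 : ℝ) (Set.Ioi 0), lam ∈ Set.Ioi (0 : ℝ) :=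
    eventually_mem_nhdsWithin
  refine tendsto_of_tendsto_of_tendsto_of_le_of_le' htlow tendsto_const_nhds ?_ ?_
  · filter_upwards [hmem] with lam hlam
    exact hlower lam hlam
  · filter_upwards [hmem] with lam hlam
    exact hupper lam hlam
end
end
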